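/- arXiv:1706.01530 — 4 statements merged into one kernel-verified Lean document; each statement's English description precedes it below -/
import Mathlib

section
/- Let λ₁ ∈ (0, 1/2] and let χ : ℝ → [0,1] be a smooth function supported in [0, 2λ₁] with bounded derivatives of all orders. Let ω₁, ω₂ : (0, ∞) → ℂ be smooth functions with ω_i(z) = 0 for z ≤ 1/2 and satisfying |ω_i^{(j)}(z)| ≤ z^{−1/2−j} for j = 0, 1, 2, 3 and all z > 0 (i = 1, 2). Then for every ε ∈ (0, 1) there exists a constant C (depending on χ and ε) such that for all r, s ≥ 1: |∫₀^∞ e^{iλ(r−s)} ω₁(λr) ω₂(λs) λ² χ(λ) dλ| ≤ C / ( √(rs) · ⟨r − s⟩^{2−ε} ). -/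
open MeasureTheory Real

private lemma log_le_rpow_div {x ε : ℝ} (hx : 1 ≤ x) (hε : 0 < ε) :
    Real.log x ≤ x ^ ε / ε := by
  have hx0 : 0 < x := lt_of_lt_of_le one_pos hx
  have h1 : Real.log (x ^ ε) = ε * Real.log x := Real.log_rpow hx0 ε
  have h2 : Real.log (x ^ ε) ≤ x ^ ε := Real.log_le_self (by positivity)
  rw [h1] at h2
  rw [div_eq_mul_inv, ← one_mul (Real.log x)]
  calc 1 * Real.log x = ε * Real.log x * ε⁻¹ := by field_simp
    _ ≤ x ^ ε * ε⁻¹ := by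
        exact mul_le_mul_of_nonneg_right h2 (by positivity)

private lemma rpow_cancel {t : ℝ} (ht : 0 < t) (a b : ℝ) :
    t ^ (-(1:ℝ)/2 - a) * t ^ (-(1:ℝ)/2 - b) = t ^ (-(1:ℝ) - a - b) := by
  rw [← Real.rpow_add ht]; congr 1; ring

private lemma prod_bd {t r s a b : ℝ} (ht : 0 < t) (hr : 0 < r) (hs : 0 < s)
    {x y : ℂ} (hx : ‖x‖ ≤ (t*r) ^ (-(1:ℝ)/2 - a)) (hy : ‖y‖ ≤ (t*s) ^ (-(1:ℝ)/2 - b)) :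
    ‖x‖ * r ^ a * (‖y‖ * s ^ b) ≤ t ^ (-(1:ℝ) - a - b) / Real.sqrt (r * s) := by
  have h1 : ‖x‖ * r ^ a ≤ t ^ (-(1:ℝ)/2 - a) * r ^ (-(1:ℝ)/2) := by
    calc ‖x‖ * r ^ a ≤ (t*r) ^ (-(1:ℝ)/2 - a) * r ^ a := by
          exact mul_le_mul_of_nonneg_right hx (Real.rpow_nonneg hr.le a)
      _ = t ^ (-(1:ℝ)/2 - a) * r ^ (-(1:ℝ)/2) := by
          rw [Real.mul_rpow ht.le hr.le, mul_assoc, ← Real.rpow_add hr]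
          congr 2; ring
  have h2 : ‖y‖ * s ^ b ≤ t ^ (-(1:ℝ)/2 - b) * s ^ (-(1:ℝ)/2) := by
    calc ‖y‖ * s ^ b ≤ (t*s) ^ (-(1:ℝ)/2 - b) * s ^ b := by
          exact mul_le_mul_of_nonneg_right hy (Real.rpow_nonneg hs.le b)
      _ = t ^ (-(1:ℝ)/2 - b) * s ^ (-(1:ℝ)/2) := by
          rw [Real.mul_rpow ht.le hs.le, mul_assoc, ← Real.rpow_add hs]
          congr 2; ring
  calc ‖x‖ * r ^ a * (‖y‖ * s ^ b)
      ≤ (t ^ (-(1:ℝ)/2 - a) * r ^ (-(1:ℝ)/2)) * (t ^ (-(1:ℝ)/2 - b) * s ^ (-(1:ℝ)/2)) := by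
        exact mul_le_mul h1 h2 (by positivity) (by positivity)
    _ = t ^ (-(1:ℝ) - a - b) / Real.sqrt (r * s) := by
        rw [show (t ^ (-(1:ℝ)/2 - a) * r ^ (-(1:ℝ)/2)) * (t ^ (-(1:ℝ)/2 - b) * s ^ (-(1:ℝ)/2))
            = (t ^ (-(1:ℝ)/2 - a) * t ^ (-(1:ℝ)/2 - b)) * (r ^ (-(1:ℝ)/2) * s ^ (-(1:ℝ)/2)) by ring,
          rpow_cancel ht a b, Real.sqrt_eq_rpow, Real.mul_rpow hr.le hs.le,
          show -(1:ℝ)/2 = -((1:ℝ)/2) by norm_num, Real.rpow_neg hr.le, Real.rpow_neg hs.le]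
        field_simp

set_option maxHeartbeats 3200000 in
/-- the oscillatory integral bound
`|∫₀^∞ e^{iλ(r-s)} ω₁(λr) ω₂(λs) λ² χ(λ) dλ| ≤ C / (√(rs) ⟨r-s⟩^{2-ε})` for `r, s ≥ 1`,
where the `ωᵢ` are smooth on `(0,∞)`, vanish on `(0, 1/2]`, and satisfy
`|ωᵢ^{(j)}(z)| ≤ z^{-1/2-j}` for `j = 0,1,2,3`. -/
theorem stmt_14 (lam₁ : ℝ) (hlam₁ : lam₁ ∈ Set.Ioc (0:ℝ) (1/2))
    (χ : ℝ → ℝ) (hχ : ContDiff ℝ (⊤ : ℕ∞) χ)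
    (hχ01 : ∀ t, χ t ∈ Set.Icc (0:ℝ) 1)
    (hχsupp : ∀ t : ℝ, t ∉ Set.Icc (0:ℝ) (2 * lam₁) → χ t = 0)
    (hχbdd : ∀ n : ℕ, ∃ B : ℝ, ∀ t : ℝ, |iteratedDeriv n χ t| ≤ B)
    (ω₁ ω₂ : ℝ → ℂ)
    (hω₁ : ContDiffOn ℝ (⊤ : ℕ∞) ω₁ (Set.Ioi 0))
    (hω₂ : ContDiffOn ℝ (⊤ : ℕ∞) ω₂ (Set.Ioi 0))
    (hω₁0 : ∀ z : ℝ, z ≤ 1/2 → ω₁ z = 0) (hω₂0 : ∀ z : ℝ, z ≤ 1/2 → ω₂ z = 0)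
    (hω₁b : ∀ z : ℝ, 0 < z → ∀ j : ℕ, j ≤ 3 →
      ‖iteratedDeriv j ω₁ z‖ ≤ z ^ (-(1:ℝ)/2 - j))
    (hω₂b : ∀ z : ℝ, 0 < z → ∀ j : ℕ, j ≤ 3 →
      ‖iteratedDeriv j ω₂ z‖ ≤ z ^ (-(1:ℝ)/2 - j))
    (ε : ℝ) (hε : ε ∈ Set.Ioo (0:ℝ) 1) :
    ∃ C : ℝ, 0 < C ∧ ∀ r s : ℝ, 1 ≤ r → 1 ≤ s →
      ‖∫ l in Set.Ioi (0:ℝ),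
          Complex.exp (Complex.I * (l * (r - s) : ℝ)) * ω₁ (l * r) * ω₂ (l * s) *
            (l : ℂ) ^ 2 * (χ l : ℂ)‖ ≤
        C / (Real.sqrt (r * s) * Real.sqrt (1 + (r - s) ^ 2) ^ (2 - ε)) := by
  obtain ⟨hl10, hl12⟩ := hlam₁
  obtain ⟨hε0, hε1⟩ := hε
  -- cutoff bounds
  have hχabs : ∀ t, |χ t| ≤ 1 := fun t => abs_le.mpr ⟨by linarith [(hχ01 t).1], (hχ01 t).2⟩
  obtain ⟨B₁, hB₁⟩ := hχbdd 1
  obtain ⟨B₂, hB₂⟩ := hχbdd 2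
  have hB₁0 : 0 ≤ B₁ := le_trans (abs_nonneg _) (hB₁ 0)
  have hB₂0 : 0 ≤ B₂ := le_trans (abs_nonneg _) (hB₂ 0)
  have hB₁' : ∀ t, |deriv χ t| ≤ B₁ := by
    intro t; have h := hB₁ t; rwa [iteratedDeriv_one] at h
  have hB₂' : ∀ t, |deriv (deriv χ) t| ≤ B₂ := by
    intro t; have h := hB₂ t
    rwa [iteratedDeriv_succ, iteratedDeriv_one] at h
  -- support of χ
  have hχ1 : ∀ x : ℝ, 1 < x → χ x = 0 := by
    intro x hx; apply hχsupp; simp only [Set.mem_Icc, not_and, not_le]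
    intro _; linarith
  have hχ'1 : ∀ x : ℝ, 1 < x → deriv χ x = 0 := by
    intro x hx
    have hev : χ =ᶠ[nhds x] (fun _ => (0:ℝ)) :=
      Filter.eventuallyEq_of_mem (Ioi_mem_nhds hx) (fun y hy => hχ1 y hy)
    rw [hev.deriv_eq, deriv_const]
  -- derivative bounds for ω₁, ω₂
  have hw1b0 : ∀ z : ℝ, 0 < z → ‖ω₁ z‖ ≤ z ^ (-(1:ℝ)/2 - 0) := by
    intro z hz; have h := hω₁b z hz 0 (by norm_num)
    rwa [iteratedDeriv_zero, Nat.cast_zero] at h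
  have hw2b0 : ∀ z : ℝ, 0 < z → ‖ω₂ z‖ ≤ z ^ (-(1:ℝ)/2 - 0) := by
    intro z hz; have h := hω₂b z hz 0 (by norm_num)
    rwa [iteratedDeriv_zero, Nat.cast_zero] at h
  have hw1b1 : ∀ z : ℝ, 0 < z → ‖deriv ω₁ z‖ ≤ z ^ (-(1:ℝ)/2 - 1) := by
    intro z hz; have h := hω₁b z hz 1 (by norm_num)
    rwa [iteratedDeriv_one, Nat.cast_one] at h
  have hw2b1 : ∀ z : ℝ, 0 < z → ‖deriv ω₂ z‖ ≤ z ^ (-(1:ℝ)/2 - 1) := by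
    intro z hz; have h := hω₂b z hz 1 (by norm_num)
    rwa [iteratedDeriv_one, Nat.cast_one] at h
  have hw1b2 : ∀ z : ℝ, 0 < z → ‖deriv (deriv ω₁) z‖ ≤ z ^ (-(1:ℝ)/2 - 2) := by
    intro z hz; have h := hω₁b z hz 2 (by norm_num)
    rw [iteratedDeriv_succ, iteratedDeriv_one] at h
    rwa [Nat.cast_ofNat] at h
  have hw2b2 : ∀ z : ℝ, 0 < z → ‖deriv (deriv ω₂) z‖ ≤ z ^ (-(1:ℝ)/2 - 2) := by
    intro z hz; have h := hω₂b z hz 2 (by norm_num)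
    rw [iteratedDeriv_succ, iteratedDeriv_one] at h
    rwa [Nat.cast_ofNat] at h
  -- smoothness of derivatives
  have hg1s : ContDiffOn ℝ (⊤ : ℕ∞) (deriv ω₁) (Set.Ioi 0) :=
    hω₁.deriv_of_isOpen isOpen_Ioi (by exact_mod_cast le_top)
  have hg2s : ContDiffOn ℝ (⊤ : ℕ∞) (deriv ω₂) (Set.Ioi 0) :=
    hω₂.deriv_of_isOpen isOpen_Ioi (by exact_mod_cast le_top)
  have hh1s : ContDiffOn ℝ (⊤ : ℕ∞) (deriv (deriv ω₁)) (Set.Ioi 0) :=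
    hg1s.deriv_of_isOpen isOpen_Ioi (by exact_mod_cast le_top)
  have hh2s : ContDiffOn ℝ (⊤ : ℕ∞) (deriv (deriv ω₂)) (Set.Ioi 0) :=
    hg2s.deriv_of_isOpen isOpen_Ioi (by exact_mod_cast le_top)
  have hdiff : ∀ f : ℝ → ℂ, ContDiffOn ℝ (⊤ : ℕ∞) f (Set.Ioi 0) →
      ∀ z : ℝ, 0 < z → HasDerivAt f (deriv f z) z := by
    intro f hf z hz
    exact ((hf.contDiffAt (Ioi_mem_nhds hz)).differentiableAt (by simp)).hasDerivAt
  have hχ's : ContDiff ℝ (⊤ : ℕ∞) (deriv χ) := (contDiff_infty_iff_deriv.mp hχ).2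
  have hχ''c : Continuous (deriv (deriv χ)) := ((contDiff_infty_iff_deriv.mp hχ's).2).continuous
  have hχd : ∀ t, HasDerivAt χ (deriv χ t) t :=
    fun t => ((hχ.differentiable (by simp)) t).hasDerivAt
  have hχ'd : ∀ t, HasDerivAt (deriv χ) (deriv (deriv χ) t) t :=
    fun t => ((hχ's.differentiable (by simp)) t).hasDerivAt
  -- constants
  refine ⟨8 + (3 + 4*(4+2*B₁) + 4*(14+16*B₁+4*B₂)*(1+1/ε)), by positivity, ?_⟩
  intro r s hr hs
  have hr0 : (0:ℝ) < r := lt_of_lt_of_le one_pos hr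
  have hs0 : (0:ℝ) < s := lt_of_lt_of_le one_pos hs
  set S : ℝ := Real.sqrt (r * s) with hSdef
  have hS0 : 0 < S := Real.sqrt_pos.mpr (by positivity)
  set μ : ℝ := r - s with hμdef
  set m : ℝ := Real.sqrt (1 + μ ^ 2) with hmdef
  have hm1 : 1 ≤ m := by
    nlinarith [Real.sq_sqrt (show (0:ℝ) ≤ 1 + μ^2 by positivity),
      Real.sqrt_nonneg (1 + μ^2), sq_nonneg μ]
  have hm0 : 0 < m := lt_of_lt_of_le one_pos hm1
  have hmsq : m ^ 2 = 1 + μ ^ 2 := Real.sq_sqrt (by positivity)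
  -- the functions
  set P : ℝ → ℂ := fun t => (t:ℂ)^2 * (χ t : ℂ) with hPdef
  set Pd : ℝ → ℂ := fun t => 2*(t:ℂ)*(χ t : ℂ) + (t:ℂ)^2*((deriv χ t : ℝ) : ℂ) with hPddef
  set Pdd : ℝ → ℂ := fun t => 2*(χ t : ℂ) + 4*(t:ℂ)*((deriv χ t : ℝ) : ℂ)
      + (t:ℂ)^2*((deriv (deriv χ) t : ℝ) : ℂ) with hPdddef
  set A : ℝ → ℂ := fun t => ω₁ (t*r) with hAdef
  set B : ℝ → ℂ := fun t => ω₂ (t*s) with hBdef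
  set G1 : ℝ → ℂ := fun t => deriv ω₁ (t*r) * (r:ℂ) with hG1def
  set G2 : ℝ → ℂ := fun t => deriv ω₂ (t*s) * (s:ℂ) with hG2def
  set H1 : ℝ → ℂ := fun t => deriv (deriv ω₁) (t*r) * (r:ℂ) * (r:ℂ) with hH1def
  set H2 : ℝ → ℂ := fun t => deriv (deriv ω₂) (t*s) * (s:ℂ) * (s:ℂ) with hH2def
  set F : ℝ → ℂ := fun t => A t * B t * P t with hFdef
  set F1 : ℝ → ℂ := fun t => (G1 t * B t + A t * G2 t) * P t + A t * B t * Pd t with hF1def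
  set F2 : ℝ → ℂ := fun t =>
      (((H1 t * B t + G1 t * G2 t) + (G1 t * G2 t + A t * H2 t)) * P t
        + (G1 t * B t + A t * G2 t) * Pd t)
      + ((G1 t * B t + A t * G2 t) * Pd t + A t * B t * Pdd t) with hF2def
  -- derivative facts
  have hid : ∀ t : ℝ, HasDerivAt (fun u : ℝ => (u:ℂ)) 1 t := by
    intro t
    simpa using (hasDerivAt_id t).ofReal_comp
  have hsq : ∀ t : ℝ, HasDerivAt (fun u : ℝ => (u:ℂ)^2) (2*(t:ℂ)) t := by
    intro t
    simpa using (hasDerivAt_pow 2 (t:ℂ)).comp_ofReal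
  have hPd' : ∀ t : ℝ, HasDerivAt P (Pd t) t := by
    intro t
    have h2 := (hsq t).mul ((hχd t).ofReal_comp)
    rw [hPdef, hPddef]
    exact h2.congr_deriv rfl
  have hPdd' : ∀ t : ℝ, HasDerivAt Pd (Pdd t) t := by
    intro t
    have h2 := ((((hid t).const_mul (2:ℂ)).mul ((hχd t).ofReal_comp)).add
      ((hsq t).mul ((hχ'd t).ofReal_comp)))
    rw [hPddef, hPdddef]
    exact h2.congr_deriv (by push_cast; ring)
  have hcomp : ∀ f : ℝ → ℂ, ContDiffOn ℝ (⊤ : ℕ∞) f (Set.Ioi 0) → ∀ c : ℝ, 0 < c →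
      ∀ t : ℝ, 0 < t → HasDerivAt (fun u => f (u*c)) (deriv f (t*c) * (c:ℂ)) t := by
    intro f hf c hc t ht
    have h := (hdiff f hf (t*c) (mul_pos ht hc)).scomp t ((hasDerivAt_id t).mul_const c)
    have h' : HasDerivAt (fun u => f (u*c)) ((1*c) • deriv f (t*c)) t := h
    convert h' using 1
    rw [one_mul, Complex.real_smul, mul_comm]
  have hAd : ∀ t : ℝ, 0 < t → HasDerivAt A (G1 t) t := by
    intro t ht
    rw [hAdef, hG1def]
    exact hcomp ω₁ hω₁ r hr0 t ht
  have hBd : ∀ t : ℝ, 0 < t → HasDerivAt B (G2 t) t := by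
    intro t ht
    rw [hBdef, hG2def]
    exact hcomp ω₂ hω₂ s hs0 t ht
  have hG1d : ∀ t : ℝ, 0 < t → HasDerivAt G1 (H1 t) t := by
    intro t ht
    rw [hG1def, hH1def]
    exact (hcomp (deriv ω₁) hg1s r hr0 t ht).mul_const (r:ℂ)
  have hG2d : ∀ t : ℝ, 0 < t → HasDerivAt G2 (H2 t) t := by
    intro t ht
    rw [hG2def, hH2def]
    exact (hcomp (deriv ω₂) hg2s s hs0 t ht).mul_const (s:ℂ)
  have hFd : ∀ t : ℝ, 0 < t → HasDerivAt F (F1 t) t := by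
    intro t ht
    exact ((hAd t ht).mul (hBd t ht)).mul (hPd' t)
  have hF1d : ∀ t : ℝ, 0 < t → HasDerivAt F1 (F2 t) t := by
    intro t ht
    exact ((((hG1d t ht).mul (hBd t ht)).add ((hAd t ht).mul (hG2d t ht))).mul (hPd' t)).add
      (((hAd t ht).mul (hBd t ht)).mul (hPdd' t))
  -- norm bounds
  -- basic norm bounds for P, Pd, Pdd
  have hPb : ∀ t : ℝ, 0 < t → ‖P t‖ ≤ t^2 := by
    intro t ht
    rw [hPdef]
    simp only [norm_mul, norm_pow, Complex.norm_real, Real.norm_eq_abs]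
    calc |t|^2 * |χ t| ≤ |t|^2 * 1 :=
          mul_le_mul_of_nonneg_left (hχabs t) (by positivity)
      _ = t^2 := by rw [mul_one, sq_abs]
  have hPdb : ∀ t : ℝ, 0 < t → ‖Pd t‖ ≤ 2*t + t^2*B₁ := by
    intro t ht
    rw [hPddef]
    refine (norm_add_le _ _).trans ?_
    simp only [norm_mul, norm_pow, Complex.norm_real, Real.norm_eq_abs]
    have e1 : ‖(2:ℂ)‖ * |t| * |χ t| ≤ 2*t := by
      rw [show ‖(2:ℂ)‖ = 2 by norm_num, abs_of_pos ht]
      nlinarith [hχabs t, abs_nonneg (χ t), (abs_le.mp (hχabs t)).1]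
    have e2 : |t|^2 * |deriv χ t| ≤ t^2*B₁ := by
      rw [sq_abs]
      exact mul_le_mul_of_nonneg_left (hB₁' t) (by positivity)
    linarith
  have hPddb : ∀ t : ℝ, 0 < t → t ≤ 2 → ‖Pdd t‖ ≤ 2 + 8*B₁ + 4*B₂ := by
    intro t ht ht2
    rw [hPdddef]
    refine (norm_add_le _ _).trans ?_
    refine (add_le_add (norm_add_le _ _) le_rfl).trans ?_
    simp only [norm_mul, norm_pow, Complex.norm_real, Real.norm_eq_abs]
    have e1 : ‖(2:ℂ)‖ * |χ t| ≤ 2 := by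
      rw [show ‖(2:ℂ)‖ = 2 by norm_num]
      nlinarith [hχabs t, abs_nonneg (χ t)]
    have e2 : ‖(4:ℂ)‖ * |t| * |deriv χ t| ≤ 8*B₁ := by
      rw [show ‖(4:ℂ)‖ = 4 by norm_num, abs_of_pos ht]
      nlinarith [hB₁' t, abs_nonneg (deriv χ t), mul_le_mul_of_nonneg_left (hB₁' t) (le_of_lt (by positivity : (0:ℝ) < 4*t)), mul_le_mul_of_nonneg_right ht2 hB₁0]
    have e3 : |t|^2 * |deriv (deriv χ) t| ≤ 4*B₂ := by
      rw [sq_abs]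
      calc t^2 * |deriv (deriv χ) t| ≤ t^2 * B₂ :=
            mul_le_mul_of_nonneg_left (hB₂' t) (by positivity)
        _ ≤ 4 * B₂ := mul_le_mul_of_nonneg_right (by nlinarith) hB₂0
    linarith
  -- pair bounds
  have hABb : ∀ t : ℝ, 0 < t → ‖A t * B t‖ ≤ t ^ (-(1:ℝ)-0-0) / S := by
    intro t ht
    have h := prod_bd ht hr0 hs0 (hw1b0 (t*r) (by positivity)) (hw2b0 (t*s) (by positivity))
    rw [Real.rpow_zero, Real.rpow_zero, mul_one, mul_one, ← hSdef] at h
    simp only [hAdef, hBdef]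
    rw [norm_mul]
    exact h
  have hG1Bb : ∀ t : ℝ, 0 < t → ‖G1 t * B t‖ ≤ t ^ (-(1:ℝ)-1-0) / S := by
    intro t ht
    have h := prod_bd ht hr0 hs0 (hw1b1 (t*r) (by positivity)) (hw2b0 (t*s) (by positivity))
    rw [Real.rpow_one, Real.rpow_zero, mul_one, ← hSdef] at h
    simp only [hG1def, hBdef]
    rw [norm_mul, norm_mul, Complex.norm_real, Real.norm_eq_abs, abs_of_pos hr0]
    exact h
  have hAG2b : ∀ t : ℝ, 0 < t → ‖A t * G2 t‖ ≤ t ^ (-(1:ℝ)-0-1) / S := by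
    intro t ht
    have h := prod_bd ht hr0 hs0 (hw1b0 (t*r) (by positivity)) (hw2b1 (t*s) (by positivity))
    rw [Real.rpow_one, Real.rpow_zero, mul_one, ← hSdef] at h
    simp only [hAdef, hG2def]
    rw [norm_mul, norm_mul, Complex.norm_real, Real.norm_eq_abs, abs_of_pos hs0]
    rw [show ‖ω₁ (t*r)‖ * (‖deriv ω₂ (t*s)‖ * s) = ‖ω₁ (t*r)‖ * ‖deriv ω₂ (t*s)‖ * s by ring]
    rw [show ‖ω₁ (t*r)‖ * ‖deriv ω₂ (t*s)‖ * s = ‖ω₁ (t*r)‖ * (‖deriv ω₂ (t*s)‖ * s) by ring]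
    exact h
  have hH1Bb : ∀ t : ℝ, 0 < t → ‖H1 t * B t‖ ≤ t ^ (-(1:ℝ)-2-0) / S := by
    intro t ht
    have h := prod_bd ht hr0 hs0 (hw1b2 (t*r) (by positivity)) (hw2b0 (t*s) (by positivity))
    rw [Real.rpow_zero, mul_one, ← hSdef] at h
    simp only [hH1def, hBdef]
    rw [norm_mul, norm_mul, norm_mul, Complex.norm_real, Real.norm_eq_abs, abs_of_pos hr0]
    calc ‖deriv (deriv ω₁) (t*r)‖ * r * r * ‖ω₂ (t*s)‖
        = ‖deriv (deriv ω₁) (t*r)‖ * r^(2:ℝ) * ‖ω₂ (t*s)‖ := by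
          rw [show r^(2:ℝ) = r^(2:ℕ) by rw [← Real.rpow_natCast]; norm_num]; ring
      _ ≤ t ^ (-(1:ℝ)-2-0) / S := h
  have hAH2b : ∀ t : ℝ, 0 < t → ‖A t * H2 t‖ ≤ t ^ (-(1:ℝ)-0-2) / S := by
    intro t ht
    have h := prod_bd ht hr0 hs0 (hw1b0 (t*r) (by positivity)) (hw2b2 (t*s) (by positivity))
    rw [Real.rpow_zero, mul_one, ← hSdef] at h
    simp only [hAdef, hH2def]
    rw [norm_mul, norm_mul, norm_mul, Complex.norm_real, Real.norm_eq_abs, abs_of_pos hs0]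
    calc ‖ω₁ (t*r)‖ * (‖deriv (deriv ω₂) (t*s)‖ * s * s)
        = ‖ω₁ (t*r)‖ * (‖deriv (deriv ω₂) (t*s)‖ * s^(2:ℝ)) := by
          rw [show s^(2:ℝ) = s^(2:ℕ) by rw [← Real.rpow_natCast]; norm_num]; ring
      _ ≤ t ^ (-(1:ℝ)-0-2) / S := h
  have hG1G2b : ∀ t : ℝ, 0 < t → ‖G1 t * G2 t‖ ≤ t ^ (-(1:ℝ)-1-1) / S := by
    intro t ht
    have h := prod_bd ht hr0 hs0 (hw1b1 (t*r) (by positivity)) (hw2b1 (t*s) (by positivity))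
    rw [Real.rpow_one, Real.rpow_one, ← hSdef] at h
    simp only [hG1def, hG2def]
    rw [norm_mul, norm_mul, norm_mul, Complex.norm_real, Complex.norm_real,
      Real.norm_eq_abs, Real.norm_eq_abs, abs_of_pos hr0, abs_of_pos hs0]
    exact h
  have hFb : ∀ t : ℝ, 0 < t → ‖F t‖ ≤ t / S := by
    intro t ht
    rw [hFdef]
    calc ‖A t * B t * P t‖ = ‖A t * B t‖ * ‖P t‖ := norm_mul _ _
      _ ≤ (t ^ (-(1:ℝ)-0-0) / S) * t^2 :=
          mul_le_mul (hABb t ht) (hPb t ht) (norm_nonneg _) (by positivity)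
      _ = t / S := by
          rw [show (-(1:ℝ)-0-0) = -((1:ℕ):ℝ) by norm_num, Real.rpow_neg ht.le,
            Real.rpow_natCast]
          field_simp
  have ht2inv : ∀ t : ℝ, 0 < t → t ^ (-(1:ℝ)-1-0) = (t^2)⁻¹ := by
    intro t ht
    rw [show (-(1:ℝ)-1-0) = -((2:ℕ):ℝ) by norm_num, Real.rpow_neg ht.le, Real.rpow_natCast]
  have ht2inv' : ∀ t : ℝ, 0 < t → t ^ (-(1:ℝ)-0-1) = (t^2)⁻¹ := by
    intro t ht
    rw [show (-(1:ℝ)-0-1) = -((2:ℕ):ℝ) by norm_num, Real.rpow_neg ht.le, Real.rpow_natCast]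
  have ht1inv : ∀ t : ℝ, 0 < t → t ^ (-(1:ℝ)-0-0) = t⁻¹ := by
    intro t ht
    rw [show (-(1:ℝ)-0-0) = -((1:ℕ):ℝ) by norm_num, Real.rpow_neg ht.le, Real.rpow_natCast,
      pow_one]
  have ht3inv : ∀ t : ℝ, 0 < t → ∀ e : ℝ, e = -(1:ℝ)-2-0 ∨ e = -(1:ℝ)-0-2 ∨ e = -(1:ℝ)-1-1 →
      t ^ e = (t^3)⁻¹ := by
    intro t ht e he
    have : e = -((3:ℕ):ℝ) := by rcases he with h|h|h <;> rw [h] <;> norm_num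
    rw [this, Real.rpow_neg ht.le, Real.rpow_natCast]
  have hF1b : ∀ t : ℝ, 0 < t → t ≤ 2 → ‖F1 t‖ ≤ (4 + 2*B₁) / S := by
    intro t ht ht2
    rw [hF1def]
    have step : ‖(G1 t * B t + A t * G2 t) * P t + A t * B t * Pd t‖
        ≤ (‖G1 t * B t‖ + ‖A t * G2 t‖) * ‖P t‖ + ‖A t * B t‖ * ‖Pd t‖ := by
      refine (norm_add_le _ _).trans (add_le_add ?_ ?_)
      · rw [norm_mul (G1 t * B t + A t * G2 t) (P t)]
        exact mul_le_mul_of_nonneg_right (norm_add_le _ _) (norm_nonneg _)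
      · rw [norm_mul (A t * B t) (Pd t)]
    refine step.trans ?_
    have b1 : (‖G1 t * B t‖ + ‖A t * G2 t‖) * ‖P t‖
        ≤ ((t^2)⁻¹/S + (t^2)⁻¹/S) * t^2 := by
      refine mul_le_mul (add_le_add ?_ ?_) (hPb t ht) (norm_nonneg _) (by positivity)
      · rw [← ht2inv t ht]; exact hG1Bb t ht
      · rw [← ht2inv' t ht]; exact hAG2b t ht
    have b2 : ‖A t * B t‖ * ‖Pd t‖ ≤ (t⁻¹/S) * (2*t + t^2*B₁) := by
      refine mul_le_mul ?_ (hPdb t ht) (norm_nonneg _) (by positivity)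
      rw [← ht1inv t ht]; exact hABb t ht
    have heq : ((t^2)⁻¹/S + (t^2)⁻¹/S) * t^2 + (t⁻¹/S) * (2*t + t^2*B₁)
        = (2 + (2 + t*B₁))/S := by
      field_simp
      ring
    have hle : (2 + (2 + t*B₁))/S ≤ (4 + 2*B₁)/S := by
      rw [div_le_div_iff₀ hS0 hS0]
      nlinarith [mul_le_mul_of_nonneg_right ht2 hB₁0, hS0.le,
        mul_le_mul_of_nonneg_right (show 2 + (2 + t*B₁) ≤ 4 + 2*B₁ by
          nlinarith [mul_le_mul_of_nonneg_right ht2 hB₁0]) hS0.le]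
    linarith
  have hF2b : ∀ t : ℝ, 0 < t → t ≤ 2 → ‖F2 t‖ ≤ (14 + 16*B₁ + 4*B₂) * t⁻¹ / S := by
    intro t ht ht2
    rw [hF2def]
    have hYb : ‖G1 t * B t + A t * G2 t‖ ≤ (t^2)⁻¹/S + (t^2)⁻¹/S := by
      refine (norm_add_le _ _).trans (add_le_add ?_ ?_)
      · rw [← ht2inv t ht]; exact hG1Bb t ht
      · rw [← ht2inv' t ht]; exact hAG2b t ht
    have hXb : ‖H1 t * B t + G1 t * G2 t + (G1 t * G2 t + A t * H2 t)‖
        ≤ (t^3)⁻¹/S + (t^3)⁻¹/S + ((t^3)⁻¹/S + (t^3)⁻¹/S) := by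
      refine (norm_add_le _ _).trans (add_le_add ((norm_add_le _ _).trans (add_le_add ?_ ?_))
        ((norm_add_le _ _).trans (add_le_add ?_ ?_)))
      · rw [← ht3inv t ht _ (Or.inl rfl)]; exact hH1Bb t ht
      · rw [← ht3inv t ht _ (Or.inr (Or.inr rfl))]; exact hG1G2b t ht
      · rw [← ht3inv t ht _ (Or.inr (Or.inr rfl))]; exact hG1G2b t ht
      · rw [← ht3inv t ht _ (Or.inr (Or.inl rfl))]; exact hAH2b t ht
    have step : ‖(H1 t * B t + G1 t * G2 t + (G1 t * G2 t + A t * H2 t)) * P t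
          + (G1 t * B t + A t * G2 t) * Pd t
          + ((G1 t * B t + A t * G2 t) * Pd t + A t * B t * Pdd t)‖
        ≤ ((t^3)⁻¹/S + (t^3)⁻¹/S + ((t^3)⁻¹/S + (t^3)⁻¹/S)) * t^2
          + ((t^2)⁻¹/S + (t^2)⁻¹/S) * (2*t + t^2*B₁)
          + (((t^2)⁻¹/S + (t^2)⁻¹/S) * (2*t + t^2*B₁) + (t⁻¹/S) * (2 + 8*B₁ + 4*B₂)) := by
      refine (norm_add_le _ _).trans (add_le_add ((norm_add_le _ _).trans (add_le_add ?_ ?_))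
        ((norm_add_le _ _).trans (add_le_add ?_ ?_)))
      · rw [norm_mul (H1 t * B t + G1 t * G2 t + (G1 t * G2 t + A t * H2 t)) (P t)]
        exact mul_le_mul hXb (hPb t ht) (norm_nonneg _) (by positivity)
      · rw [norm_mul (G1 t * B t + A t * G2 t) (Pd t)]
        exact mul_le_mul hYb (hPdb t ht) (norm_nonneg _) (by positivity)
      · rw [norm_mul (G1 t * B t + A t * G2 t) (Pd t)]
        exact mul_le_mul hYb (hPdb t ht) (norm_nonneg _) (by positivity)
      · rw [norm_mul (A t * B t) (Pdd t)]
        refine mul_le_mul ?_ (hPddb t ht ht2) (norm_nonneg _) (by positivity)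
        rw [← ht1inv t ht]; exact hABb t ht
    refine step.trans ?_
    have heq : ((t^3)⁻¹/S + (t^3)⁻¹/S + ((t^3)⁻¹/S + (t^3)⁻¹/S)) * t^2
          + ((t^2)⁻¹/S + (t^2)⁻¹/S) * (2*t + t^2*B₁)
          + (((t^2)⁻¹/S + (t^2)⁻¹/S) * (2*t + t^2*B₁) + (t⁻¹/S) * (2 + 8*B₁ + 4*B₂))
        = (4*t⁻¹ + 4*(2*t⁻¹ + B₁) + t⁻¹*(2 + 8*B₁ + 4*B₂))/S := by
      field_simp
      ring
    rw [heq, div_le_div_iff₀ hS0 hS0]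
    have hinv2 : (2:ℝ)⁻¹ ≤ t⁻¹ := inv_anti₀ ht ht2
    have hnum : 4*t⁻¹ + 4*(2*t⁻¹ + B₁) + t⁻¹*(2 + 8*B₁ + 4*B₂)
        ≤ (14 + 16*B₁ + 4*B₂) * t⁻¹ := by
      nlinarith [mul_le_mul_of_nonneg_left hinv2 (show (0:ℝ) ≤ 8*B₁ by positivity),
        inv_pos.mpr ht, hB₂0, hB₁0]
    nlinarith [mul_le_mul_of_nonneg_right hnum hS0.le, hS0.le]
  -- vanishing
  have hFlow : ∀ t : ℝ, t ≤ 1/(2*r) → F t = 0 := by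
    intro t ht
    have : t * r ≤ 1/2 := by
      have e : 1/(2*r)*r = 1/2 := by field_simp
      have h2 := mul_le_mul_of_nonneg_right ht hr0.le
      linarith
    rw [hFdef]
    simp only [hAdef]
    rw [hω₁0 (t*r) this]
    ring
  have hFhi : ∀ t : ℝ, 1 < t → F t = 0 := by
    intro t ht
    rw [hFdef]
    simp only [hPdef]
    rw [hχ1 t ht]
    push_cast
    ring
  have hF2eq0 : F 2 = 0 := hFhi 2 (by norm_num)
  have hF12eq0 : F1 2 = 0 := by
    rw [hF1def]
    simp only [hPdef, hPddef]
    rw [hχ1 2 (by norm_num), hχ'1 2 (by norm_num)]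
    push_cast
    ring
  -- continuity
  have hcont : ∀ f : ℝ → ℂ, ContDiffOn ℝ (⊤ : ℕ∞) f (Set.Ioi 0) → ∀ c : ℝ, 0 < c →
      ContinuousOn (fun t => f (t*c)) (Set.Ioi 0) := by
    intro f hf c hc
    exact hf.continuousOn.comp (by fun_prop) (fun t ht => mul_pos ht hc)
  have hχc : Continuous χ := hχ.continuous
  have hχ'c : Continuous (deriv χ) := hχ's.continuous
  have hPc : Continuous P := by
    rw [hPdef]
    exact ((Complex.continuous_ofReal).pow 2).mul (Complex.continuous_ofReal.comp hχc)
  have hPdc : Continuous Pd := by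
    rw [hPddef]
    exact ((continuous_const.mul Complex.continuous_ofReal).mul
        (Complex.continuous_ofReal.comp hχc)).add
      ((Complex.continuous_ofReal.pow 2).mul (Complex.continuous_ofReal.comp hχ'c))
  have hPddc : Continuous Pdd := by
    rw [hPdddef]
    exact ((continuous_const.mul (Complex.continuous_ofReal.comp hχc)).add
      ((continuous_const.mul Complex.continuous_ofReal).mul
        (Complex.continuous_ofReal.comp hχ'c))).add
      ((Complex.continuous_ofReal.pow 2).mul (Complex.continuous_ofReal.comp hχ''c))
  have hAc : ContinuousOn A (Set.Ioi 0) := by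
    rw [hAdef]; exact hcont ω₁ hω₁ r hr0
  have hBc : ContinuousOn B (Set.Ioi 0) := by
    rw [hBdef]; exact hcont ω₂ hω₂ s hs0
  have hG1c : ContinuousOn G1 (Set.Ioi 0) := by
    rw [hG1def]; exact (hcont (deriv ω₁) hg1s r hr0).mul continuousOn_const
  have hG2c : ContinuousOn G2 (Set.Ioi 0) := by
    rw [hG2def]; exact (hcont (deriv ω₂) hg2s s hs0).mul continuousOn_const
  have hH1c : ContinuousOn H1 (Set.Ioi 0) := by
    rw [hH1def]
    exact ((hcont (deriv (deriv ω₁)) hh1s r hr0).mul continuousOn_const).mul continuousOn_const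
  have hH2c : ContinuousOn H2 (Set.Ioi 0) := by
    rw [hH2def]
    exact ((hcont (deriv (deriv ω₂)) hh2s s hs0).mul continuousOn_const).mul continuousOn_const
  have hF1cont : ContinuousOn F1 (Set.Ioi 0) := by
    rw [hF1def]
    exact (((hG1c.mul hBc).add (hAc.mul hG2c)).mul hPc.continuousOn).add
      ((hAc.mul hBc).mul hPdc.continuousOn)
  have hF2cont : ContinuousOn F2 (Set.Ioi 0) := by
    rw [hF2def]
    exact ((((hH1c.mul hBc).add (hG1c.mul hG2c)).add
        ((hG1c.mul hG2c).add (hAc.mul hH2c))).mul hPc.continuousOn).add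
      (((hG1c.mul hBc).add (hAc.mul hG2c)).mul hPdc.continuousOn) |>.add
      ((((hG1c.mul hBc).add (hAc.mul hG2c)).mul hPdc.continuousOn).add
        ((hAc.mul hBc).mul hPddc.continuousOn))
  have hFcontOn : ContinuousOn F (Set.Ioi 0) := by
    rw [hFdef]
    exact (hAc.mul hBc).mul hPc.continuousOn
  have hFcont : Continuous F := by
    rw [continuous_iff_continuousAt]
    intro x
    rcases lt_or_ge 0 x with hx | hx
    · exact hFcontOn.continuousAt (Ioi_mem_nhds hx)
    · have hmem : Set.Iio (1/(2*r)) ∈ nhds x :=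
        Iio_mem_nhds (lt_of_le_of_lt hx (by positivity))
      have hev : F =ᶠ[nhds x] (fun _ => (0:ℂ)) :=
        Filter.eventuallyEq_of_mem hmem (fun y hy => hFlow y (le_of_lt hy))
      exact ContinuousAt.congr continuousAt_const hev.symm
  -- the exponential
  set c : ℂ := Complex.I * (μ : ℂ) with hcdef
  set E : ℝ → ℂ := fun t => Complex.exp (c * (t:ℂ)) with hEdef
  have hEc : Continuous E := by fun_prop
  have hEnorm : ∀ t : ℝ, ‖E t‖ = 1 := by
    intro t
    rw [hEdef]
    simp only []
    rw [show c * (t:ℂ) = ((μ*t : ℝ):ℂ) * Complex.I by rw [hcdef]; push_cast; ring]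
    exact Complex.norm_exp_ofReal_mul_I _
  have hEd : ∀ t : ℝ, HasDerivAt E (E t * c) t := by
    intro t
    rw [hEdef]
    have h1 : HasDerivAt (fun u : ℝ => c * (u:ℂ)) c t := by
      simpa using (hid t).const_mul c
    exact h1.cexp
  -- the integrand
  set f : ℝ → ℂ := fun l => E l * F l with hfdef
  have hfc : Continuous f := hEc.mul hFcont
  have hfsupp : HasCompactSupport f := by
    apply HasCompactSupport.intro (isCompact_Icc (a := (0:ℝ)) (b := 2))
    intro x hx
    simp only [Set.mem_Icc, not_and, not_le] at hx
    rw [hfdef]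
    simp only []
    rcases lt_or_ge x 0 with h | h
    · have h2r : (0:ℝ) < 1/(2*r) := by positivity
      rw [hFlow x (by linarith), mul_zero]
    · rw [hFhi x (by linarith [hx h]), mul_zero]
  have hfint : Integrable f := hfc.integrable_of_hasCompactSupport hfsupp
  have hinteq : (∫ l in Set.Ioi (0:ℝ),
      Complex.exp (Complex.I * (l * μ : ℝ)) * ω₁ (l * r) * ω₂ (l * s) *
        (l : ℂ) ^ 2 * (χ l : ℂ)) = ∫ l in Set.Ioi (0:ℝ), f l := by
    apply integral_congr_ae
    filter_upwards with l
    rw [hfdef]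
    simp only [hFdef, hAdef, hBdef, hPdef, hEdef]
    rw [show Complex.I * ((l*μ:ℝ):ℂ) = c * (l:ℂ) by rw [hcdef]; push_cast; ring]
    ring
  have htail0 : (∫ l in Set.Ioi (2:ℝ), f l) = 0 := by
    apply setIntegral_eq_zero_of_forall_eq_zero
    intro x hx
    simp only [hfdef]
    rw [hFhi x (by linarith [Set.mem_Ioi.mp hx]), mul_zero]
  have hsplit2 : ∀ a : ℝ, a ≤ 2 → (∫ l in Set.Ioi a, f l) = ∫ l in Set.Ioc a 2, f l := by
    intro a ha
    rw [← Set.Ioc_union_Ioi_eq_Ioi ha,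
      setIntegral_union (Set.Ioc_disjoint_Ioi le_rfl) measurableSet_Ioi
        hfint.integrableOn hfint.integrableOn, htail0, add_zero]
  -- low-part bound helper
  have hlow : ∀ a : ℝ, 0 < a → a ≤ 2 → ‖∫ l in Set.Ioc (0:ℝ) a, f l‖ ≤ a^2/2 / S := by
    intro a ha ha2
    calc ‖∫ l in Set.Ioc (0:ℝ) a, f l‖ ≤ ∫ l in Set.Ioc (0:ℝ) a, ‖f l‖ :=
          norm_integral_le_integral_norm _
      _ ≤ ∫ l in Set.Ioc (0:ℝ) a, l / S := by
          apply setIntegral_mono_on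
          · exact hfint.norm.integrableOn
          · exact (continuous_id.div_const S).integrableOn_Ioc
          · exact measurableSet_Ioc
          · intro x hx
            rw [hfdef]
            simp only []
            rw [norm_mul, hEnorm x, one_mul]
            exact hFb x hx.1
      _ = a^2/2/S := by
          rw [← intervalIntegral.integral_of_le ha.le, intervalIntegral.integral_div,
            integral_id]
          norm_num
  rw [hinteq]
  rcases le_or_gt m 2 with hm2 | hm2
  · -- trivial case
    have h1 : ‖∫ l in Set.Ioi (0:ℝ), f l‖ ≤ 2 / S := by
      have h0 : (0:ℝ) ≤ 2 := by norm_num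
      rw [hsplit2 0 h0]
      have := hlow 2 (by norm_num) le_rfl
      calc ‖∫ l in Set.Ioc (0:ℝ) 2, f l‖ ≤ 2^2/2/S := this
        _ = 2/S := by ring
    have hm2ε : m ^ (2 - ε) ≤ 4 := by
      calc m ^ (2-ε) ≤ 2 ^ (2-ε) := Real.rpow_le_rpow hm0.le hm2 (by linarith)
        _ ≤ 2 ^ (2:ℝ) := Real.rpow_le_rpow_of_exponent_le one_le_two (by linarith)
        _ = 4 := by
            rw [show (2:ℝ) = ((2:ℕ):ℝ) by norm_num, Real.rpow_natCast]; norm_num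
    have hmε0 : 0 < m ^ (2 - ε) := Real.rpow_pos_of_pos hm0 _
    calc ‖∫ l in Set.Ioi (0:ℝ), f l‖ ≤ 2/S := h1
      _ ≤ (8 + (3 + 4*(4+2*B₁) + 4*(14+16*B₁+4*B₂)*(1+1/ε))) / (S * m ^ (2-ε)) := by
          rw [div_le_div_iff₀ hS0 (by positivity)]
          calc 2*(S*m^(2-ε)) ≤ 2*(S*4) := by
                nlinarith [mul_le_mul_of_nonneg_left hm2ε hS0.le]
            _ ≤ (8 + (3 + 4*(4+2*B₁) + 4*(14+16*B₁+4*B₂)*(1+1/ε))) * S := by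
                nlinarith [mul_nonneg (show (0:ℝ) ≤ 3 + 4*(4+2*B₁) + 4*(14+16*B₁+4*B₂)*(1+1/ε)
                  by positivity) hS0.le]
  · -- main case : m > 2
    set t0 : ℝ := m⁻¹ with ht0def
    have ht00 : 0 < t0 := by rw [ht0def]; positivity
    have ht0half : t0 ≤ 2⁻¹ := by
      rw [ht0def]; exact inv_anti₀ (by norm_num) hm2.le
    have ht02 : t0 ≤ 2 := by
      have : (2:ℝ)⁻¹ ≤ 2 := by norm_num
      linarith
    have hμsq3 : 3 ≤ μ^2 := by nlinarith [hmsq]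
    have hμne : μ ≠ 0 := by
      intro h; rw [h] at hμsq3; norm_num at hμsq3
    have hcne : c ≠ 0 := by
      rw [hcdef]
      exact mul_ne_zero Complex.I_ne_zero (by exact_mod_cast hμne)
    have hnc : ‖c‖ = |μ| := by
      rw [hcdef, norm_mul, Complex.norm_I, one_mul, Complex.norm_real, Real.norm_eq_abs]
    have habs : m ≤ 2*|μ| := by
      nlinarith [abs_mul_abs_self μ, abs_nonneg μ, hmsq, hm2]
    have habs0 : 0 < |μ| := abs_pos.mpr hμne
    -- antiderivatives of the exponential
    set v : ℝ → ℂ := fun t => E t * c⁻¹ with hvdef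
    set v2 : ℝ → ℂ := fun t => E t * (c*c)⁻¹ with hv2def
    have hvc : Continuous v := by rw [hvdef]; exact hEc.mul continuous_const
    have hv2c : Continuous v2 := by rw [hv2def]; exact hEc.mul continuous_const
    have hvd : ∀ t : ℝ, HasDerivAt v (E t) t := by
      intro t
      rw [hvdef]
      have h := (hEd t).mul_const c⁻¹
      exact h.congr_deriv (by rw [mul_assoc, mul_inv_cancel₀ hcne, mul_one])
    have hv2d : ∀ t : ℝ, HasDerivAt v2 (v t) t := by
      intro t
      rw [hv2def, hvdef]
      have h := (hEd t).mul_const (c*c)⁻¹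
      exact h.congr_deriv (by rw [mul_inv, ← mul_assoc, mul_inv_cancel_right₀ hcne])
    have hvnorm : ∀ t : ℝ, ‖v t‖ = |μ|⁻¹ := by
      intro t
      rw [hvdef]
      simp only []
      rw [norm_mul, hEnorm t, one_mul, norm_inv, hnc]
    have hv2norm : ∀ t : ℝ, ‖v2 t‖ = (μ^2)⁻¹ := by
      intro t
      rw [hv2def]
      simp only []
      rw [norm_mul, hEnorm t, one_mul, norm_inv, norm_mul, hnc, abs_mul_abs_self, sq]
    -- interval integrability
    have hsub : Set.uIcc t0 2 ⊆ Set.Ioi 0 := by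
      rw [Set.uIcc_of_le ht02]
      exact fun x hx => lt_of_lt_of_le ht00 hx.1
    have hmem0 : ∀ x : ℝ, x ∈ Set.uIcc t0 2 → 0 < x := fun x hx => hsub hx
    have hF1int : IntervalIntegrable F1 volume t0 2 := (hF1cont.mono hsub).intervalIntegrable
    have hF2int : IntervalIntegrable F2 volume t0 2 := (hF2cont.mono hsub).intervalIntegrable
    -- integration by parts twice
    have hibp1 : (∫ t in t0..2, F t * E t)
        = F 2 * v 2 - F t0 * v t0 - ∫ t in t0..2, F1 t * v t :=
      intervalIntegral.integral_mul_deriv_eq_deriv_mul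
        (fun x hx => hFd x (hmem0 x hx)) (fun x _ => hvd x) hF1int
        (hEc.intervalIntegrable _ _)
    have hibp2 : (∫ t in t0..2, F1 t * v t)
        = F1 2 * v2 2 - F1 t0 * v2 t0 - ∫ t in t0..2, F2 t * v2 t :=
      intervalIntegral.integral_mul_deriv_eq_deriv_mul
        (fun x hx => hF1d x (hmem0 x hx)) (fun x _ => hv2d x) hF2int
        (hvc.intervalIntegrable _ _)
    -- splitting the integral
    have hIoi : (∫ l in Set.Ioi (0:ℝ), f l)
        = (∫ l in Set.Ioc (0:ℝ) t0, f l) + ∫ t in t0..2, F t * E t := by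
      rw [← Set.Ioc_union_Ioi_eq_Ioi ht00.le,
        setIntegral_union (Set.Ioc_disjoint_Ioi le_rfl) measurableSet_Ioi
          hfint.integrableOn hfint.integrableOn]
      congr 1
      rw [hsplit2 t0 ht02, ← intervalIntegral.integral_of_le ht02]
      apply intervalIntegral.integral_congr
      intro x _
      rw [hfdef]
      simp only []
      ring
    -- tail bound
    have hKnn : (0:ℝ) ≤ (14 + 16*B₁ + 4*B₂)/S * (μ^2)⁻¹ := by positivity
    have htail : ‖∫ t in t0..2, F2 t * v2 t‖
        ≤ (14 + 16*B₁ + 4*B₂)/S * (μ^2)⁻¹ * Real.log (2/t0) := by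
      have hb : ∀ t ∈ Set.Icc t0 2, ‖F2 t * v2 t‖
          ≤ ((14 + 16*B₁ + 4*B₂)/S * (μ^2)⁻¹) * t⁻¹ := by
        intro t htm
        rw [norm_mul, hv2norm t]
        calc ‖F2 t‖ * (μ^2)⁻¹ ≤ ((14 + 16*B₁ + 4*B₂) * t⁻¹/S) * (μ^2)⁻¹ :=
              mul_le_mul_of_nonneg_right
                (hF2b t (lt_of_lt_of_le ht00 htm.1) htm.2) (by positivity)
          _ = ((14 + 16*B₁ + 4*B₂)/S * (μ^2)⁻¹) * t⁻¹ := by ring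
      have hcont1 : ContinuousOn (fun t => ‖F2 t * v2 t‖) (Set.uIcc t0 2) :=
        ((hF2cont.mono hsub).mul hv2c.continuousOn).norm
      calc ‖∫ t in t0..2, F2 t * v2 t‖ ≤ ∫ t in t0..2, ‖F2 t * v2 t‖ :=
            intervalIntegral.norm_integral_le_integral_norm ht02
        _ ≤ ∫ t in t0..2, ((14 + 16*B₁ + 4*B₂)/S * (μ^2)⁻¹) * t⁻¹ := by
            apply intervalIntegral.integral_mono_on ht02
            · exact hcont1.intervalIntegrable
            · exact (continuousOn_const.mul (ContinuousOn.inv₀ continuousOn_id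
                (fun x hx => (hmem0 x hx).ne'))).intervalIntegrable
            · exact hb
        _ = (14 + 16*B₁ + 4*B₂)/S * (μ^2)⁻¹ * Real.log (2/t0) := by
            rw [intervalIntegral.integral_const_mul, integral_inv_of_pos ht00 two_pos]
    -- numbers
    have hmε1 : (1:ℝ) ≤ m^ε := by
      have h := Real.rpow_le_rpow_of_exponent_le hm1 hε0.le
      rwa [Real.rpow_zero] at h
    have hlog : Real.log (2/t0) ≤ (1 + 1/ε) * m^ε := by
      rw [ht0def, div_eq_mul_inv, inv_inv]
      rw [Real.log_mul (by norm_num) hm0.ne']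
      have h2 : Real.log 2 ≤ 1 := by
        nlinarith [Real.log_le_sub_one_of_pos (show (0:ℝ) < 2 by norm_num)]
      have h3 : Real.log m ≤ m^ε/ε := log_le_rpow_div hm1 hε0
      have he : (1 + 1/ε) * m^ε = m^ε + m^ε/ε := by ring
      linarith
    have hlognn : 0 ≤ Real.log (2/t0) := by
      apply Real.log_nonneg
      rw [ht0def, div_eq_mul_inv, inv_inv]
      nlinarith
    have hinvμ : |μ|⁻¹ ≤ 2*m⁻¹ := by
      have h1 : m/2 ≤ |μ| := by linarith
      have h2 : |μ|⁻¹ ≤ (m/2)⁻¹ := inv_anti₀ (by positivity) h1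
      rw [inv_div] at h2
      linarith [h2, (by ring : (2:ℝ)/m = 2*m⁻¹)]
    have hinvμ2 : (μ^2)⁻¹ ≤ 4*(m^2)⁻¹ := by
      have h1 : m^2/4 ≤ μ^2 := by nlinarith [abs_mul_abs_self μ, abs_nonneg μ]
      have h2 : (μ^2)⁻¹ ≤ (m^2/4)⁻¹ := inv_anti₀ (by positivity) h1
      rw [inv_div] at h2
      linarith [h2, (by ring : (4:ℝ)/m^2 = 4*(m^2)⁻¹)]
    -- individual piece bounds
    have hp1 : ‖∫ l in Set.Ioc (0:ℝ) t0, f l‖ ≤ (1/2) * m^ε/(S*m^2) := by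
      refine (hlow t0 ht00 ht02).trans ?_
      have ht0sq : t0^2 * m^2 = 1 := by
        rw [ht0def]; field_simp
      rw [div_le_div_iff₀ hS0 (by positivity)]
      have e : t0^2/2*(S*m^2) = S/2 := by linear_combination (S/2) * ht0sq
      rw [e]
      nlinarith [mul_le_mul_of_nonneg_left hmε1 (show (0:ℝ) ≤ S/2 by positivity)]
    have hp2 : ‖F t0‖ * ‖v t0‖ ≤ 2 * m^ε/(S*m^2) := by
      rw [hvnorm t0]
      calc ‖F t0‖ * |μ|⁻¹ ≤ (t0/S) * (2*m⁻¹) :=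
            mul_le_mul (hFb t0 ht00) hinvμ (by positivity) (by positivity)
        _ = 2/(S*m^2) := by rw [ht0def]; field_simp
        _ ≤ 2 * m^ε/(S*m^2) := by
            rw [div_le_div_iff₀ (by positivity) (by positivity)]
            nlinarith [mul_le_mul_of_nonneg_left hmε1
              (show (0:ℝ) ≤ 2*(S*m^2) by positivity)]
    have hp3 : ‖F1 t0‖ * ‖v2 t0‖ ≤ (4*(4 + 2*B₁)) * m^ε/(S*m^2) := by
      rw [hv2norm t0]
      calc ‖F1 t0‖ * (μ^2)⁻¹ ≤ ((4 + 2*B₁)/S) * (4*(m^2)⁻¹) :=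
            mul_le_mul (hF1b t0 ht00 ht02) hinvμ2 (by positivity) (by positivity)
        _ = (4*(4 + 2*B₁))/(S*m^2) := by field_simp
        _ ≤ (4*(4 + 2*B₁)) * m^ε/(S*m^2) := by
            rw [div_le_div_iff₀ (by positivity) (by positivity)]
            nlinarith [mul_le_mul_of_nonneg_left hmε1
              (show (0:ℝ) ≤ (4*(4 + 2*B₁))*(S*m^2) by positivity)]
    have hp4 : (14 + 16*B₁ + 4*B₂)/S * (μ^2)⁻¹ * Real.log (2/t0)
        ≤ (4*(14 + 16*B₁ + 4*B₂)*(1 + 1/ε)) * m^ε/(S*m^2) := by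
      calc (14 + 16*B₁ + 4*B₂)/S * (μ^2)⁻¹ * Real.log (2/t0)
          ≤ (14 + 16*B₁ + 4*B₂)/S * (4*(m^2)⁻¹) * ((1 + 1/ε) * m^ε) := by
            refine mul_le_mul (mul_le_mul_of_nonneg_left hinvμ2 (by positivity)) hlog
              hlognn (by positivity)
        _ = (4*(14 + 16*B₁ + 4*B₂)*(1 + 1/ε)) * m^ε/(S*m^2) := by
            field_simp
    -- put it together
    have hhigh : ‖∫ t in t0..2, F t * E t‖
        ≤ ‖F t0‖ * ‖v t0‖ + (‖F1 t0‖ * ‖v2 t0‖ + ‖∫ t in t0..2, F2 t * v2 t‖) := by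
      rw [hibp1, hibp2, hF2eq0, hF12eq0]
      have e : (0:ℂ) * v 2 - F t0 * v t0 - (0 * v2 2 - F1 t0 * v2 t0 - ∫ t in t0..2, F2 t * v2 t)
          = -(F t0 * v t0) + (F1 t0 * v2 t0 + ∫ t in t0..2, F2 t * v2 t) := by ring
      rw [e]
      refine (norm_add_le _ _).trans (add_le_add ?_ ((norm_add_le _ _).trans
        (add_le_add ?_ le_rfl)))
      · rw [norm_neg, norm_mul]
      · rw [norm_mul]
    have hfinal : ‖∫ l in Set.Ioi (0:ℝ), f l‖
        ≤ (1/2) * m^ε/(S*m^2) + (2 * m^ε/(S*m^2) + ((4*(4 + 2*B₁)) * m^ε/(S*m^2)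
          + (4*(14 + 16*B₁ + 4*B₂)*(1 + 1/ε)) * m^ε/(S*m^2))) := by
      rw [hIoi]
      refine (norm_add_le _ _).trans (add_le_add hp1 (hhigh.trans ?_))
      exact add_le_add hp2 (add_le_add hp3 (htail.trans hp4))
    have hpow : m^(2-ε) * m^ε = m^2 := by
      rw [← Real.rpow_add hm0, ← Real.rpow_natCast m 2]
      congr 1
      push_cast
      ring
    have hrhs : (8 + (3 + 4*(4+2*B₁) + 4*(14+16*B₁+4*B₂)*(1+1/ε))) / (S * m ^ (2-ε))
        = (8 + (3 + 4*(4+2*B₁) + 4*(14+16*B₁+4*B₂)*(1+1/ε))) * m^ε/(S*m^2) := by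
      rw [div_eq_div_iff (by positivity) (by positivity), ← hpow]
      ring
    rw [hrhs]
    refine hfinal.trans ?_
    have hfrac : 0 ≤ m^ε/(S*m^2) := by positivity
    have e : (1/2) * m^ε/(S*m^2) + (2 * m^ε/(S*m^2) + ((4*(4 + 2*B₁)) * m^ε/(S*m^2)
          + (4*(14 + 16*B₁ + 4*B₂)*(1 + 1/ε)) * m^ε/(S*m^2)))
        = (1/2 + 2 + 4*(4 + 2*B₁) + 4*(14 + 16*B₁ + 4*B₂)*(1 + 1/ε)) * (m^ε/(S*m^2)) := by
      ring
    rw [e, show (8 + (3 + 4*(4+2*B₁) + 4*(14+16*B₁+4*B₂)*(1+1/ε))) * m^ε/(S*m^2)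
        = (8 + (3 + 4*(4+2*B₁) + 4*(14+16*B₁+4*B₂)*(1+1/ε))) * (m^ε/(S*m^2)) by ring]
    exact mul_le_mul_of_nonneg_right (by nlinarith [hB₁0, hB₂0, hε0]) hfrac
end

section
/- Let λ₁ ∈ (0, 1/2] and let χ : ℝ → [0,1] be a smooth function supported in [0, 2λ₁] with bounded derivatives of all orders. Let η : (0, ∞) → ℂ be smooth with η(z) = 0 for z ≥ 1 and |η^{(ℓ)}(z)| ≤ z^{−1−ℓ} for ℓ = 0, 1, 2 and all z ∈ (0, 1], and let ω : (0, ∞) → ℂ be smooth with ω(z) = 0 for z ≤ 1/2 and |ω^{(j)}(z)| ≤ z^{−1/2−j} for j = 0, 1, 2 and all z > 0. Then there exists a constant C (depending on χ) such that for all r, s > 0 and either choice of sign: |∫₀^∞ e^{± iλs} η(λr) ω(λs) λ² χ(λ) dλ| ≤ C / ( r · ⟨r + s⟩² ). -/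
open MeasureTheory Real

set_option maxHeartbeats 1000000

private lemma iter_deriv_zero_of_gt {F : Type*} [NormedAddCommGroup F] [NormedSpace ℝ F]
    (f : ℝ → F) (c : ℝ) (h : ∀ z : ℝ, c < z → f z = 0) :
    ∀ k : ℕ, ∀ z : ℝ, c < z → deriv^[k] f z = 0 := by
  intro k
  induction k with
  | zero => intro z hz; simpa using h z hz
  | succ k ih =>
    intro z hz
    rw [Function.iterate_succ_apply']
    have he : deriv^[k] f =ᶠ[nhds z] fun _ => 0 :=
      Filter.eventuallyEq_of_mem (Ioi_mem_nhds hz) fun y hy => ih y hy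
    rw [he.deriv_eq]; simp

private lemma iter_deriv_zero_of_lt {F : Type*} [NormedAddCommGroup F] [NormedSpace ℝ F]
    (f : ℝ → F) (c : ℝ) (h : ∀ z : ℝ, z < c → f z = 0) :
    ∀ k : ℕ, ∀ z : ℝ, z < c → deriv^[k] f z = 0 := by
  intro k
  induction k with
  | zero => intro z hz; simpa using h z hz
  | succ k ih =>
    intro z hz
    rw [Function.iterate_succ_apply']
    have he : deriv^[k] f =ᶠ[nhds z] fun _ => 0 :=
      Filter.eventuallyEq_of_mem (Iio_mem_nhds hz) fun y hy => ih y hy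
    rw [he.deriv_eq]; simp

private lemma term_bd {l R S W p q t : ℝ} (hl : 0 < l) {x y z : ℂ}
    (hx : ‖x‖ ≤ R * l ^ p) (hy : ‖y‖ ≤ S * l ^ q) (hz : ‖z‖ ≤ W * l ^ t) :
    ‖x * y * z‖ ≤ R * S * W * l ^ (p + q + t) := by
  have h1 : ‖x * y * z‖ ≤ (R * l ^ p) * (S * l ^ q) * (W * l ^ t) := by
    rw [norm_mul, norm_mul]
    exact mul_le_mul (mul_le_mul hx hy (norm_nonneg _) ((norm_nonneg x).trans hx)) hz
      (norm_nonneg _) (mul_nonneg ((norm_nonneg x).trans hx) ((norm_nonneg y).trans hy))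
  calc ‖x * y * z‖ ≤ (R * l ^ p) * (S * l ^ q) * (W * l ^ t) := h1
    _ = R * S * W * (l ^ p * l ^ q * l ^ t) := by ring
    _ = R * S * W * l ^ (p + q + t) := by rw [← Real.rpow_add hl, ← Real.rpow_add hl]

private lemma hasDerivAt_comp_mul_const (g : ℝ → ℂ) (g' : ℂ) (c x : ℝ)
    (h : HasDerivAt g g' (x * c)) :
    HasDerivAt (fun t => g (t * c)) ((c:ℂ) * g') x := by
  have := h.scomp x (hasDerivAt_mul_const c)
  simp only [Complex.real_smul] at this; exact this

private lemma w0_arith {Wv l c : ℝ} (hc : |c| ≤ 1) (hW : 1 ≤ Wv) :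
    l^2 * |c| ≤ Wv * l^2 := by
  nlinarith [sq_nonneg l, abs_nonneg c]

private lemma w1_arith {B1 B2 l c d : ℝ} (hl : 0 < l) (hlb : l ≤ 3/2)
    (hc : |c| ≤ 1) (hd : |d| ≤ B1) (hB1 : 0 ≤ B1) (hB2 : 0 ≤ B2) :
    2*l * |c| + l^2 * |d| ≤ (3 + 6*B1 + 3*B2) * l := by
  have k1 : l^2 * |d| ≤ l^2 * B1 := mul_le_mul_of_nonneg_left hd (sq_nonneg l)
  have k2 : l^2 * B1 ≤ (3/2) * l * B1 := by
    nlinarith [mul_nonneg (mul_nonneg (show (0:ℝ) ≤ 3/2 - l by linarith) hl.le) hB1]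
  have k3 : 2*l * |c| ≤ 2*l := by
    nlinarith [mul_nonneg (show (0:ℝ) ≤ 1 - |c| by linarith) hl.le]
  nlinarith [mul_nonneg hl.le hB1, mul_nonneg hl.le hB2]

private lemma w2_arith {B1 B2 l c d g : ℝ} (hl : 0 < l) (hlb : l ≤ 3/2)
    (hc : |c| ≤ 1) (hd : |d| ≤ B1) (hg : |g| ≤ B2) (hB1 : 0 ≤ B1) (hB2 : 0 ≤ B2) :
    2 * |c| + 4*l * |d| + l^2 * |g| ≤ 3 + 6*B1 + 3*B2 := by
  have k1 : l * |d| ≤ (3/2) * B1 := mul_le_mul hlb hd (abs_nonneg _) (by norm_num)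
  have k2 : l^2 ≤ 9/4 := by nlinarith
  have k3 : l^2 * |g| ≤ (9/4) * B2 := mul_le_mul k2 hg (abs_nonneg _) (by norm_num)
  nlinarith [k1, k3]

/-- the oscillatory integral bound
`|∫₀^∞ e^{±iλs} η(λr) ω(λs) λ² χ(λ) dλ| ≤ C / (r ⟨r+s⟩²)` for `r, s > 0`,
where `η` is smooth on `(0,∞)`, vanishes on `[1,∞)`, and satisfies
`|η^{(ℓ)}(z)| ≤ z^{-1-ℓ}` on `(0,1]` for `ℓ = 0,1,2`, while `ω` is smooth on `(0,∞)`,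
vanishes on `(0,1/2]`, and satisfies `|ω^{(j)}(z)| ≤ z^{-1/2-j}` for `j = 0,1,2`. -/
theorem stmt_15 (lam₁ : ℝ) (hlam₁ : lam₁ ∈ Set.Ioc (0:ℝ) (1/2))
    (χ : ℝ → ℝ) (hχ : ContDiff ℝ (⊤ : ℕ∞) χ)
    (hχ01 : ∀ t, χ t ∈ Set.Icc (0:ℝ) 1)
    (hχsupp : ∀ t : ℝ, t ∉ Set.Icc (0:ℝ) (2 * lam₁) → χ t = 0)
    (hχbdd : ∀ n : ℕ, ∃ B : ℝ, ∀ t : ℝ, |iteratedDeriv n χ t| ≤ B)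
    (η : ℝ → ℂ) (hη : ContDiffOn ℝ (⊤ : ℕ∞) η (Set.Ioi 0))
    (hη0 : ∀ z : ℝ, 1 ≤ z → η z = 0)
    (hηb : ∀ z : ℝ, z ∈ Set.Ioc (0:ℝ) 1 → ∀ ℓ : ℕ, ℓ ≤ 2 →
      ‖iteratedDeriv ℓ η z‖ ≤ z ^ (-1 - (ℓ:ℝ)))
    (ω : ℝ → ℂ) (hω : ContDiffOn ℝ (⊤ : ℕ∞) ω (Set.Ioi 0))
    (hω0 : ∀ z : ℝ, z ≤ 1/2 → ω z = 0)
    (hωb : ∀ z : ℝ, 0 < z → ∀ j : ℕ, j ≤ 2 →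
      ‖iteratedDeriv j ω z‖ ≤ z ^ (-(1:ℝ)/2 - j)) :
    ∃ C : ℝ, 0 < C ∧ ∀ r s : ℝ, 0 < r → 0 < s → ∀ σ : ℝ, σ = 1 ∨ σ = -1 →
      ‖∫ l in Set.Ioi (0:ℝ),
          Complex.exp (Complex.I * (σ * l * s : ℝ)) * η (l * r) * ω (l * s) *
            (l : ℂ) ^ 2 * (χ l : ℂ)‖ ≤
        C / (r * (1 + (r + s) ^ 2)) := by
  obtain ⟨B1, hB1⟩ := hχbdd 1
  obtain ⟨B2, hB2⟩ := hχbdd 2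
  have hB1' : 0 ≤ B1 := (abs_nonneg _).trans (hB1 0)
  have hB2' : 0 ≤ B2 := (abs_nonneg _).trans (hB2 0)
  set W : ℝ := 3 + 6*B1 + 3*B2 with hW_def
  have hW : 0 < W := by positivity
  refine ⟨468 * W, by positivity, ?_⟩
  intro r s hr hs σ hσ
  -- basic vanishing of iterated derivatives
  have hηz : ∀ k : ℕ, ∀ z : ℝ, 1 < z → deriv^[k] η z = 0 :=
    iter_deriv_zero_of_gt η 1 (fun z hz => hη0 z hz.le)
  have hωz : ∀ k : ℕ, ∀ z : ℝ, z < 1/2 → deriv^[k] ω z = 0 :=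
    iter_deriv_zero_of_lt ω (1/2) (fun z hz => hω0 z hz.le)
  have hχz : ∀ k : ℕ, ∀ z : ℝ, 2*lam₁ < z → deriv^[k] χ z = 0 :=
    iter_deriv_zero_of_gt χ (2*lam₁) (fun z hz => hχsupp z (by simp [Set.mem_Icc]; intro _; linarith))
  have h2lam : 2 * lam₁ ≤ 1 := by have := hlam₁.2; linarith
  -- derivative bounds valid on all of (0,∞)
  have hDη : ∀ z : ℝ, 0 < z → ∀ k : ℕ, k ≤ 2 → ‖deriv^[k] η z‖ ≤ z ^ (-1 - (k:ℝ)) := by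
    intro z hz k hk
    rcases le_or_gt z 1 with h1 | h1
    · have := hηb z ⟨hz, h1⟩ k hk
      rwa [iteratedDeriv_eq_iterate] at this
    · rw [hηz k z h1]; simp; positivity
  have hDω : ∀ z : ℝ, 0 < z → ∀ k : ℕ, k ≤ 2 → ‖deriv^[k] ω z‖ ≤ z ^ (-(1:ℝ)/2 - (k:ℝ)) := by
    intro z hz k hk
    have := hωb z hz k hk
    rwa [iteratedDeriv_eq_iterate] at this
  by_cases hcase : 1/2 ≤ s ∧ r ≤ 2*s
  · obtain ⟨hs2, hrs⟩ := hcase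
    set a : ℝ := 1/(4*s) with ha_def
    set b : ℝ := 3/2 with hb_def
    have ha0 : 0 < a := by positivity
    have hab : a ≤ b := by
      have h1 : a ≤ 1/2 := by
        rw [ha_def, div_le_div_iff₀ (by positivity) (by norm_num)]
        nlinarith
      rw [hb_def]; linarith
    have huIcc : Set.uIcc a b = Set.Icc a b := Set.uIcc_of_le hab
    -- smoothness of derivatives on Ioi 0
    have hone : ((⊤:ℕ∞) : WithTop ℕ∞) ≠ 0 := by simp
    have htop : ((⊤:ℕ∞) : WithTop ℕ∞) + 1 ≤ ((⊤:ℕ∞) : WithTop ℕ∞) := by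
      exact_mod_cast le_top
    have hη' : ContDiffOn ℝ (⊤:ℕ∞) (deriv η) (Set.Ioi 0) :=
      hη.deriv_of_isOpen isOpen_Ioi htop
    have hη'' : ContDiffOn ℝ (⊤:ℕ∞) (deriv (deriv η)) (Set.Ioi 0) :=
      hη'.deriv_of_isOpen isOpen_Ioi htop
    have hω' : ContDiffOn ℝ (⊤:ℕ∞) (deriv ω) (Set.Ioi 0) :=
      hω.deriv_of_isOpen isOpen_Ioi htop
    have hω'' : ContDiffOn ℝ (⊤:ℕ∞) (deriv (deriv ω)) (Set.Ioi 0) :=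
      hω'.deriv_of_isOpen isOpen_Ioi htop
    have hχ1 : ContDiff ℝ (⊤:ℕ∞) (deriv χ) := by
      have := ContDiff.iterate_deriv 1 (f := χ) (by exact_mod_cast hχ)
      simpa using this
    have hχ2 : ContDiff ℝ (⊤:ℕ∞) (deriv (deriv χ)) := by
      have := ContDiff.iterate_deriv 1 (f := deriv χ) (by exact_mod_cast hχ1)
      simpa using this
    -- the nine basic functions
    set u : ℝ → ℂ := fun l => η (l * r) with hu_def
    set u1 : ℝ → ℂ := fun l => (r:ℂ) * deriv η (l * r) with hu1_def
    set u2 : ℝ → ℂ := fun l => (r:ℂ) * ((r:ℂ) * deriv (deriv η) (l * r)) with hu2_def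
    set v : ℝ → ℂ := fun l => ω (l * s) with hv_def
    set v1 : ℝ → ℂ := fun l => (s:ℂ) * deriv ω (l * s) with hv1_def
    set v2 : ℝ → ℂ := fun l => (s:ℂ) * ((s:ℂ) * deriv (deriv ω) (l * s)) with hv2_def
    set w : ℝ → ℂ := fun l => (l:ℂ)^2 * (χ l : ℂ) with hw_def
    set w1 : ℝ → ℂ := fun l => 2*(l:ℂ)*(χ l : ℂ) + (l:ℂ)^2 * ((deriv χ l : ℝ) : ℂ) with hw1_def
    set w2 : ℝ → ℂ := fun l => 2*(χ l : ℂ) + 4*(l:ℂ)*((deriv χ l : ℝ):ℂ)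
      + (l:ℂ)^2 * ((deriv (deriv χ) l : ℝ):ℂ) with hw2_def
    set f : ℝ → ℂ := fun l => u l * v l * w l with hf_def
    set f1 : ℝ → ℂ := fun l => u1 l * v l * w l + u l * v1 l * w l + u l * v l * w1 l with hf1_def
    set f2 : ℝ → ℂ := fun l =>
        (u2 l * v l * w l + u1 l * v1 l * w l + u1 l * v l * w1 l)
      + (u1 l * v1 l * w l + u l * v2 l * w l + u l * v1 l * w1 l)
      + (u1 l * v l * w1 l + u l * v1 l * w1 l + u l * v l * w2 l) with hf2_def
    set e : ℝ → ℂ := fun l => Complex.exp (Complex.I * ((σ * l * s : ℝ) : ℂ)) with he_def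
    -- differentiability facts
    have hdiffη : ∀ z : ℝ, 0 < z → HasDerivAt η (deriv η z) z := fun z hz =>
      (((hη.differentiableOn hone).differentiableAt (Ioi_mem_nhds hz)).hasDerivAt)
    have hdiffη' : ∀ z : ℝ, 0 < z → HasDerivAt (deriv η) (deriv (deriv η) z) z := fun z hz =>
      (((hη'.differentiableOn hone).differentiableAt (Ioi_mem_nhds hz)).hasDerivAt)
    have hdiffω : ∀ z : ℝ, 0 < z → HasDerivAt ω (deriv ω z) z := fun z hz =>
      (((hω.differentiableOn hone).differentiableAt (Ioi_mem_nhds hz)).hasDerivAt)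
    have hdiffω' : ∀ z : ℝ, 0 < z → HasDerivAt (deriv ω) (deriv (deriv ω) z) z := fun z hz =>
      (((hω'.differentiableOn hone).differentiableAt (Ioi_mem_nhds hz)).hasDerivAt)
    -- derivatives of the building blocks
    have hud : ∀ l : ℝ, 0 < l → HasDerivAt u (u1 l) l := by
      intro l hl
      have hlr : 0 < l * r := by positivity
      exact hasDerivAt_comp_mul_const η (deriv η (l*r)) r l (hdiffη _ hlr)
    have hu1d : ∀ l : ℝ, 0 < l → HasDerivAt u1 (u2 l) l := by
      intro l hl
      have hlr : 0 < l * r := by positivity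
      exact (hasDerivAt_comp_mul_const (deriv η) (deriv (deriv η) (l*r)) r l
        (hdiffη' _ hlr)).const_mul (r:ℂ)
    have hvd : ∀ l : ℝ, 0 < l → HasDerivAt v (v1 l) l := by
      intro l hl
      have hls : 0 < l * s := by positivity
      exact hasDerivAt_comp_mul_const ω (deriv ω (l*s)) s l (hdiffω _ hls)
    have hv1d : ∀ l : ℝ, 0 < l → HasDerivAt v1 (v2 l) l := by
      intro l hl
      have hls : 0 < l * s := by positivity
      exact (hasDerivAt_comp_mul_const (deriv ω) (deriv (deriv ω) (l*s)) s l
        (hdiffω' _ hls)).const_mul (s:ℂ)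
    have hsq : ∀ l : ℝ, HasDerivAt (fun t : ℝ => ((t:ℂ))^2) (2*(l:ℂ)) l := by
      intro l
      have h0 : HasDerivAt (fun t : ℝ => ((t:ℝ):ℂ)) ((1:ℝ):ℂ) l := (hasDerivAt_id l).ofReal_comp
      have h := h0.mul h0
      have h2 : HasDerivAt (fun t : ℝ => ((t:ℝ):ℂ) * ((t:ℝ):ℂ)) (2*(l:ℂ)) l := by
        refine h.congr_deriv ?_; push_cast; ring
      simpa [pow_two] using h2
    have hχreal : ∀ l : ℝ, HasDerivAt (fun t : ℝ => ((χ t : ℝ):ℂ)) ((deriv χ l : ℝ):ℂ) l :=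
      fun l => (((hχ.differentiable (by simp)).differentiableAt).hasDerivAt).ofReal_comp
    have hχreal' : ∀ l : ℝ, HasDerivAt (fun t : ℝ => ((deriv χ t : ℝ):ℂ)) ((deriv (deriv χ) l : ℝ):ℂ) l :=
      fun l => (((hχ1.differentiable (by simp)).differentiableAt).hasDerivAt).ofReal_comp
    have hwd : ∀ l : ℝ, HasDerivAt w (w1 l) l := by
      intro l
      have := (hsq l).mul (hχreal l)
      rw [hw_def, hw1_def]
      refine this.congr_deriv ?_
      all_goals (push_cast; ring)
    have hw1d : ∀ l : ℝ, HasDerivAt w1 (w2 l) l := by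
      intro l
      have hid : HasDerivAt (fun t : ℝ => ((t:ℝ):ℂ)) ((1:ℝ):ℂ) l := (hasDerivAt_id l).ofReal_comp
      have hA : HasDerivAt (fun t : ℝ => 2*(t:ℂ)*(χ t : ℂ))
          (2*((1:ℝ):ℂ)*(χ l : ℂ) + 2*(l:ℂ)*((deriv χ l : ℝ):ℂ)) l := by
        have := ((hid.const_mul (2:ℂ)).mul (hχreal l))
        refine this.congr_deriv ?_
        all_goals (push_cast; ring)
      have hB : HasDerivAt (fun t : ℝ => (t:ℂ)^2 * ((deriv χ t : ℝ):ℂ))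
          (2*(l:ℂ)*((deriv χ l : ℝ):ℂ) + (l:ℂ)^2 * ((deriv (deriv χ) l : ℝ):ℂ)) l := by
        have := (hsq l).mul (hχreal' l)
        refine this.congr_deriv ?_
        all_goals (push_cast; ring)
      have := hA.add hB
      rw [hw1_def, hw2_def]
      refine this.congr_deriv ?_
      push_cast
      ring
    have hfd : ∀ l : ℝ, 0 < l → HasDerivAt f (f1 l) l := by
      intro l hl
      have := ((hud l hl).mul (hvd l hl)).mul (hwd l)
      rw [hf_def, hf1_def]
      refine this.congr_deriv ?_
      simp only [Pi.mul_apply]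
      ring
    have hf1d : ∀ l : ℝ, 0 < l → HasDerivAt f1 (f2 l) l := by
      intro l hl
      have hT1 := (((hu1d l hl).mul (hvd l hl)).mul (hwd l))
      have hT2 := (((hud l hl).mul (hv1d l hl)).mul (hwd l))
      have hT3 := (((hud l hl).mul (hvd l hl)).mul (hw1d l))
      have := (hT1.add hT2).add hT3
      rw [hf1_def, hf2_def]
      refine this.congr_deriv ?_
      simp only [Pi.mul_apply]
      ring
    -- values at the endpoints
    have has : a * s = 1/4 := by rw [ha_def]; field_simp
    have hva : v a = 0 := by
      simp only [hv_def]; rw [has]; exact hω0 _ (by norm_num)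
    have hv1a : v1 a = 0 := by
      have h0 : deriv ω (1/4 : ℝ) = 0 := by
        have := hωz 1 (1/4) (by norm_num); simpa using this
      simp only [hv1_def]; rw [has, h0, mul_zero]
    have hχb : χ b = 0 := by
      apply hχsupp; rw [hb_def]; simp [Set.mem_Icc]; intro _; linarith
    have hχb' : deriv χ b = 0 := by
      have := hχz 1 b (by rw [hb_def]; linarith); simpa using this
    have hwb : w b = 0 := by simp only [hw_def]; rw [hχb]; simp
    have hw1b : w1 b = 0 := by simp only [hw1_def]; rw [hχb, hχb']; simp
    have hfa : f a = 0 := by simp only [hf_def]; rw [hva, mul_zero, zero_mul]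
    have hfb : f b = 0 := by simp only [hf_def]; rw [hwb, mul_zero]
    have hf1a : f1 a = 0 := by simp only [hf1_def]; rw [hva, hv1a]; ring
    have hf1b : f1 b = 0 := by simp only [hf1_def]; rw [hwb, hw1b]; ring
    -- positivity on the interval
    have hpos : ∀ x ∈ Set.uIcc a b, 0 < x := by
      intro x hx; rw [huIcc] at hx; exact lt_of_lt_of_le ha0 hx.1
    -- continuity facts
    have hχc : Continuous χ := hχ.continuous
    have hχc1 : Continuous (deriv χ) := hχ1.continuous
    have hχc2 : Continuous (deriv (deriv χ)) := hχ2.continuous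
    have hmapr : Set.MapsTo (fun l : ℝ => l * r) (Set.uIcc a b) (Set.Ioi 0) := by
      intro x hx; exact Set.mem_Ioi.2 (mul_pos (hpos x hx) hr)
    have hmaps : Set.MapsTo (fun l : ℝ => l * s) (Set.uIcc a b) (Set.Ioi 0) := by
      intro x hx; exact Set.mem_Ioi.2 (mul_pos (hpos x hx) hs)
    have hcmulr : ContinuousOn (fun l : ℝ => l * r) (Set.uIcc a b) :=
      (continuous_id.mul continuous_const).continuousOn
    have hcmuls : ContinuousOn (fun l : ℝ => l * s) (Set.uIcc a b) :=
      (continuous_id.mul continuous_const).continuousOn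
    have hcu : ContinuousOn u (Set.uIcc a b) := by
      rw [hu_def]; exact hη.continuousOn.comp hcmulr hmapr
    have hcu1 : ContinuousOn u1 (Set.uIcc a b) := by
      rw [hu1_def]; exact continuousOn_const.mul (hη'.continuousOn.comp hcmulr hmapr)
    have hcu2 : ContinuousOn u2 (Set.uIcc a b) := by
      rw [hu2_def]
      exact continuousOn_const.mul (continuousOn_const.mul
        (hη''.continuousOn.comp hcmulr hmapr))
    have hcv : ContinuousOn v (Set.uIcc a b) := by
      rw [hv_def]; exact hω.continuousOn.comp hcmuls hmaps
    have hcv1 : ContinuousOn v1 (Set.uIcc a b) := by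
      rw [hv1_def]; exact continuousOn_const.mul (hω'.continuousOn.comp hcmuls hmaps)
    have hcv2 : ContinuousOn v2 (Set.uIcc a b) := by
      rw [hv2_def]
      exact continuousOn_const.mul (continuousOn_const.mul
        (hω''.continuousOn.comp hcmuls hmaps))
    have hcw : Continuous w := by
      rw [hw_def]
      exact (Complex.continuous_ofReal.pow 2).mul (Complex.continuous_ofReal.comp hχc)
    have hcw1 : Continuous w1 := by
      rw [hw1_def]
      exact ((continuous_const.mul Complex.continuous_ofReal).mul
        (Complex.continuous_ofReal.comp hχc)).add
        ((Complex.continuous_ofReal.pow 2).mul (Complex.continuous_ofReal.comp hχc1))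
    have hcw2 : Continuous w2 := by
      rw [hw2_def]
      exact ((continuous_const.mul (Complex.continuous_ofReal.comp hχc)).add
        (((continuous_const.mul Complex.continuous_ofReal)).mul
          (Complex.continuous_ofReal.comp hχc1))).add
        ((Complex.continuous_ofReal.pow 2).mul (Complex.continuous_ofReal.comp hχc2))
    have hcf1 : ContinuousOn f1 (Set.uIcc a b) := fun x hx =>
      ((hf1d x (hpos x hx)).continuousAt).continuousWithinAt
    have hcf2 : ContinuousOn f2 (Set.uIcc a b) := by
      rw [hf2_def]
      exact ((((hcu2.mul hcv).mul hcw.continuousOn).add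
              ((hcu1.mul hcv1).mul hcw.continuousOn)).add
              ((hcu1.mul hcv).mul hcw1.continuousOn)).add
            ((((hcu1.mul hcv1).mul hcw.continuousOn).add
              ((hcu.mul hcv2).mul hcw.continuousOn)).add
              ((hcu.mul hcv1).mul hcw1.continuousOn)) |>.add
            ((((hcu1.mul hcv).mul hcw1.continuousOn).add
              ((hcu.mul hcv1).mul hcw1.continuousOn)).add
              ((hcu.mul hcv).mul hcw2.continuousOn))
    have hconte : Continuous e := by
      rw [he_def]
      exact Complex.continuous_exp.comp (continuous_const.mul
        (Complex.continuous_ofReal.comp ((continuous_const.mul continuous_id).mul continuous_const)))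
    have hintf1 : IntervalIntegrable f1 volume a b := hcf1.intervalIntegrable
    have hintf2 : IntervalIntegrable f2 volume a b := hcf2.intervalIntegrable
    have hinte : IntervalIntegrable e volume a b := hconte.intervalIntegrable a b
    -- reduce to an interval integral
    have hred : (∫ l in Set.Ioi (0:ℝ),
          Complex.exp (Complex.I * (σ * l * s : ℝ)) * η (l * r) * ω (l * s) *
            (l : ℂ) ^ 2 * (χ l : ℂ))
        = ∫ l in a..b, f l * e l := by
      have h1 : Set.EqOn (fun l : ℝ =>
          Complex.exp (Complex.I * (σ * l * s : ℝ)) * η (l * r) * ω (l * s) *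
            (l : ℂ) ^ 2 * (χ l : ℂ))
          (Set.indicator (Set.Ioc a b) (fun l => f l * e l)) (Set.Ioi 0) := by
        intro l hl
        have hl0 : (0:ℝ) < l := hl
        by_cases hmem : l ∈ Set.Ioc a b
        · rw [Set.indicator_of_mem hmem]
          simp only [hf_def, he_def, hu_def, hv_def, hw_def]
          ring
        · rw [Set.indicator_of_notMem hmem]
          simp only [Set.mem_Ioc, not_and_or, not_lt, not_le] at hmem
          rcases hmem with hla | hbl
          · have hls : l * s ≤ 1/2 := by
              have : l * s ≤ a * s := by
                apply mul_le_mul_of_nonneg_right hla hs.le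
              rw [has] at this; linarith
            simp [hω0 _ hls]
          · have : χ l = 0 := by
              apply hχsupp; simp only [Set.mem_Icc, not_and_or, not_le]
              right; rw [hb_def] at hbl; linarith
            simp [this]
      have hsub : Set.Ioi (0:ℝ) ∩ Set.Ioc a b = Set.Ioc a b :=
        Set.inter_eq_self_of_subset_right (fun x hx => lt_trans ha0 hx.1)
      rw [setIntegral_congr_fun measurableSet_Ioi h1,
        setIntegral_indicator measurableSet_Ioc, hsub,
        intervalIntegral.integral_of_le hab]
    -- the oscillation factor
    set cc : ℂ := Complex.I * ((σ * s : ℝ) : ℂ) with hcc_def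
    have hccn : ‖cc‖ = s := by
      rw [hcc_def, norm_mul, Complex.norm_I, one_mul, Complex.norm_real]
      rcases hσ with h | h <;> rw [h] <;>
        simp [Real.norm_eq_abs, abs_of_pos hs]
    have hccne : cc ≠ 0 := by
      intro h; rw [h, norm_zero] at hccn; exact absurd hccn.symm (ne_of_gt hs)
    set E : ℝ → ℂ := fun l => cc⁻¹ * e l with hE_def
    have hed : ∀ l : ℝ, HasDerivAt e (e l * cc) l := by
      intro l
      have h0 : HasDerivAt (fun l : ℝ => σ * l * s) (σ * s) l := by
        simpa using ((hasDerivAt_id l).const_mul σ).mul_const s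
      have h1 : HasDerivAt (fun l : ℝ => ((σ * l * s : ℝ):ℂ)) ((σ*s:ℝ):ℂ) l := h0.ofReal_comp
      have h2 := (h1.const_mul Complex.I).cexp
      rw [he_def, hcc_def]
      convert h2 using 1
      all_goals ring
    have hEd : ∀ l : ℝ, HasDerivAt E (e l) l := by
      intro l
      have h := (hed l).const_mul cc⁻¹
      rw [hE_def]
      refine h.congr_deriv ?_
      rw [mul_comm (e l) cc, ← mul_assoc, inv_mul_cancel₀ hccne, one_mul]
    -- integration by parts, twice
    have ibp1 : (∫ l in a..b, f l * e l) = -(cc⁻¹ * ∫ l in a..b, f1 l * e l) := by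
      have h := intervalIntegral.integral_mul_deriv_eq_deriv_mul
        (u := f) (u' := f1) (v := E) (v' := e)
        (fun x hx => hfd x (hpos x hx)) (fun x _ => hEd x) hintf1 hinte
      rw [hfa, hfb, zero_mul, zero_mul, sub_zero, zero_sub] at h
      rw [h]
      congr 1
      rw [show (∫ l in a..b, f1 l * E l) = ∫ l in a..b, cc⁻¹ * (f1 l * e l) from
        intervalIntegral.integral_congr (fun x _ => by rw [hE_def]; ring),
        intervalIntegral.integral_const_mul]
    have ibp2 : (∫ l in a..b, f1 l * e l) = -(cc⁻¹ * ∫ l in a..b, f2 l * e l) := by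
      have h := intervalIntegral.integral_mul_deriv_eq_deriv_mul
        (u := f1) (u' := f2) (v := E) (v' := e)
        (fun x hx => hf1d x (hpos x hx)) (fun x _ => hEd x) hintf2 hinte
      rw [hf1a, hf1b, zero_mul, zero_mul, sub_zero, zero_sub] at h
      rw [h]
      congr 1
      rw [show (∫ l in a..b, f2 l * E l) = ∫ l in a..b, cc⁻¹ * (f2 l * e l) from
        intervalIntegral.integral_congr (fun x _ => by rw [hE_def]; ring),
        intervalIntegral.integral_const_mul]
    have hIBP : (∫ l in a..b, f l * e l) = cc⁻¹ * (cc⁻¹ * ∫ l in a..b, f2 l * e l) := by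
      rw [ibp1, ibp2]; ring
    -- pointwise bounds
    have hB1d : ∀ t : ℝ, |deriv χ t| ≤ B1 := by
      intro t; have := hB1 t; rwa [iteratedDeriv_one] at this
    have hB2d : ∀ t : ℝ, |deriv (deriv χ) t| ≤ B2 := by
      intro t; have := hB2 t
      rwa [iteratedDeriv_succ, iteratedDeriv_one] at this
    have hrmul : ∀ p : ℝ, r * r ^ (p - 1 : ℝ) = r ^ p := by
      intro p
      rw [Real.rpow_sub hr, Real.rpow_one, mul_comm, div_mul_cancel₀ _ hr.ne']
    have hsmul : ∀ p : ℝ, s * s ^ (p - 1 : ℝ) = s ^ p := by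
      intro p
      rw [Real.rpow_sub hs, Real.rpow_one, mul_comm, div_mul_cancel₀ _ hs.ne']
    have hrr1 : r * r ^ (-2:ℝ) = r ^ (-1:ℝ) := by
      have := hrmul (-1:ℝ); norm_num at this ⊢; try exact this
    have hrr2 : r * (r * r ^ (-3:ℝ)) = r ^ (-1:ℝ) := by
      have h1 : r * r ^ (-3:ℝ) = r ^ (-2:ℝ) := by
        have := hrmul (-2:ℝ); convert this using 3; norm_num
      rw [h1, hrr1]
    have hss1 : s * s ^ (-3/2:ℝ) = s ^ (-1/2:ℝ) := by
      have := hsmul (-1/2:ℝ); convert this using 3; norm_num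
    have hss2 : s * (s * s ^ (-5/2:ℝ)) = s ^ (-1/2:ℝ) := by
      have h1 : s * s ^ (-5/2:ℝ) = s ^ (-3/2:ℝ) := by
        have := hsmul (-3/2:ℝ); convert this using 3; norm_num
      rw [h1, hss1]
    have hbu0 : ∀ l ∈ Set.Icc a b, ‖u l‖ ≤ r ^ (-1:ℝ) * l ^ (-1:ℝ) := by
      intro l hl
      have hl0 : 0 < l := lt_of_lt_of_le ha0 hl.1
      have hlr : 0 < l * r := mul_pos hl0 hr
      have h := hDη (l*r) hlr 0 (by norm_num)
      have h' : ‖η (l*r)‖ ≤ (l*r) ^ (-1:ℝ) := by simpa using h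
      rw [Real.mul_rpow hl0.le hr.le] at h'
      simp only [hu_def]
      exact h'.trans_eq (mul_comm _ _)
    have hbu1 : ∀ l ∈ Set.Icc a b, ‖u1 l‖ ≤ r ^ (-1:ℝ) * l ^ (-2:ℝ) := by
      intro l hl
      have hl0 : 0 < l := lt_of_lt_of_le ha0 hl.1
      have hlr : 0 < l * r := mul_pos hl0 hr
      have h := hDη (l*r) hlr 1 (by norm_num)
      have h' : ‖deriv η (l*r)‖ ≤ (l*r) ^ (-2:ℝ) := by
        rw [Function.iterate_one] at h
        convert h using 2; norm_num
      have hn : ‖u1 l‖ = r * ‖deriv η (l*r)‖ := by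
        simp only [hu1_def]
        rw [norm_mul, Complex.norm_real, Real.norm_eq_abs, abs_of_pos hr]
      rw [hn]
      calc r * ‖deriv η (l*r)‖ ≤ r * (l*r) ^ (-2:ℝ) :=
            mul_le_mul_of_nonneg_left h' hr.le
        _ = r ^ (-1:ℝ) * l ^ (-2:ℝ) := by
            rw [Real.mul_rpow hl0.le hr.le]
            calc r * (l ^ (-2:ℝ) * r ^ (-2:ℝ)) = (r * r ^ (-2:ℝ)) * l ^ (-2:ℝ) := by ring
              _ = r ^ (-1:ℝ) * l ^ (-2:ℝ) := by rw [hrr1]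
    have hbu2 : ∀ l ∈ Set.Icc a b, ‖u2 l‖ ≤ r ^ (-1:ℝ) * l ^ (-3:ℝ) := by
      intro l hl
      have hl0 : 0 < l := lt_of_lt_of_le ha0 hl.1
      have hlr : 0 < l * r := mul_pos hl0 hr
      have h := hDη (l*r) hlr 2 (by norm_num)
      have h' : ‖deriv (deriv η) (l*r)‖ ≤ (l*r) ^ (-3:ℝ) := by
        rw [show deriv^[2] η = deriv (deriv η) from by
          rw [show (2:ℕ) = 1+1 from rfl, Function.iterate_add, Function.iterate_one]; rfl] at h
        convert h using 2; norm_num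
      have hn : ‖u2 l‖ = r * (r * ‖deriv (deriv η) (l*r)‖) := by
        simp only [hu2_def]
        rw [norm_mul, norm_mul, Complex.norm_real, Real.norm_eq_abs, abs_of_pos hr]
      rw [hn]
      calc r * (r * ‖deriv (deriv η) (l*r)‖) ≤ r * (r * (l*r) ^ (-3:ℝ)) := by
            apply mul_le_mul_of_nonneg_left _ hr.le
            exact mul_le_mul_of_nonneg_left h' hr.le
        _ = r ^ (-1:ℝ) * l ^ (-3:ℝ) := by
            rw [Real.mul_rpow hl0.le hr.le]
            calc r * (r * (l ^ (-3:ℝ) * r ^ (-3:ℝ))) = (r * (r * r ^ (-3:ℝ))) * l ^ (-3:ℝ) := by ring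
              _ = r ^ (-1:ℝ) * l ^ (-3:ℝ) := by rw [hrr2]
    have hbv0 : ∀ l ∈ Set.Icc a b, ‖v l‖ ≤ s ^ (-1/2:ℝ) * l ^ (-1/2:ℝ) := by
      intro l hl
      have hl0 : 0 < l := lt_of_lt_of_le ha0 hl.1
      have hls : 0 < l * s := mul_pos hl0 hs
      have h := hDω (l*s) hls 0 (by norm_num)
      have h' : ‖ω (l*s)‖ ≤ (l*s) ^ (-1/2:ℝ) := by simpa using h
      rw [Real.mul_rpow hl0.le hs.le] at h'
      simp only [hv_def]
      exact h'.trans_eq (mul_comm _ _)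
    have hbv1 : ∀ l ∈ Set.Icc a b, ‖v1 l‖ ≤ s ^ (-1/2:ℝ) * l ^ (-3/2:ℝ) := by
      intro l hl
      have hl0 : 0 < l := lt_of_lt_of_le ha0 hl.1
      have hls : 0 < l * s := mul_pos hl0 hs
      have h := hDω (l*s) hls 1 (by norm_num)
      have h' : ‖deriv ω (l*s)‖ ≤ (l*s) ^ (-3/2:ℝ) := by
        rw [Function.iterate_one] at h
        convert h using 2; norm_num
      have hn : ‖v1 l‖ = s * ‖deriv ω (l*s)‖ := by
        simp only [hv1_def]
        rw [norm_mul, Complex.norm_real, Real.norm_eq_abs, abs_of_pos hs]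
      rw [hn]
      calc s * ‖deriv ω (l*s)‖ ≤ s * (l*s) ^ (-3/2:ℝ) :=
            mul_le_mul_of_nonneg_left h' hs.le
        _ = s ^ (-1/2:ℝ) * l ^ (-3/2:ℝ) := by
            rw [Real.mul_rpow hl0.le hs.le]
            calc s * (l ^ (-3/2:ℝ) * s ^ (-3/2:ℝ)) = (s * s ^ (-3/2:ℝ)) * l ^ (-3/2:ℝ) := by ring
              _ = s ^ (-1/2:ℝ) * l ^ (-3/2:ℝ) := by rw [hss1]
    have hbv2 : ∀ l ∈ Set.Icc a b, ‖v2 l‖ ≤ s ^ (-1/2:ℝ) * l ^ (-5/2:ℝ) := by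
      intro l hl
      have hl0 : 0 < l := lt_of_lt_of_le ha0 hl.1
      have hls : 0 < l * s := mul_pos hl0 hs
      have h := hDω (l*s) hls 2 (by norm_num)
      have h' : ‖deriv (deriv ω) (l*s)‖ ≤ (l*s) ^ (-5/2:ℝ) := by
        rw [show deriv^[2] ω = deriv (deriv ω) from by
          rw [show (2:ℕ) = 1+1 from rfl, Function.iterate_add, Function.iterate_one]; rfl] at h
        convert h using 2; norm_num
      have hn : ‖v2 l‖ = s * (s * ‖deriv (deriv ω) (l*s)‖) := by
        simp only [hv2_def]
        rw [norm_mul, norm_mul, Complex.norm_real, Real.norm_eq_abs, abs_of_pos hs]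
      rw [hn]
      calc s * (s * ‖deriv (deriv ω) (l*s)‖) ≤ s * (s * (l*s) ^ (-5/2:ℝ)) := by
            apply mul_le_mul_of_nonneg_left _ hs.le
            exact mul_le_mul_of_nonneg_left h' hs.le
        _ = s ^ (-1/2:ℝ) * l ^ (-5/2:ℝ) := by
            rw [Real.mul_rpow hl0.le hs.le]
            calc s * (s * (l ^ (-5/2:ℝ) * s ^ (-5/2:ℝ))) = (s * (s * s ^ (-5/2:ℝ))) * l ^ (-5/2:ℝ) := by ring
              _ = s ^ (-1/2:ℝ) * l ^ (-5/2:ℝ) := by rw [hss2]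
    -- bounds for the cutoff factor
    have hbw0 : ∀ l ∈ Set.Icc a b, ‖w l‖ ≤ W * l ^ (2:ℝ) := by
      intro l hl
      have hl0 : 0 < l := lt_of_lt_of_le ha0 hl.1
      have h1 : |χ l| ≤ 1 := abs_le.mpr ⟨by linarith [(hχ01 l).1], (hχ01 l).2⟩
      have hp : l ^ (2:ℝ) = l^(2:ℕ) := by
        rw [show (2:ℝ) = ((2:ℕ):ℝ) by norm_num, Real.rpow_natCast]
      simp only [hw_def]
      have hn : ‖(l:ℂ)^2 * ((χ l : ℝ):ℂ)‖ = |l|^2 * |χ l| := by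
        simp [norm_mul, norm_pow, Complex.norm_real, Real.norm_eq_abs]
      rw [hn, hp, abs_of_pos hl0]
      exact w0_arith h1 (by rw [hW_def]; nlinarith)
    have hbw1 : ∀ l ∈ Set.Icc a b, ‖w1 l‖ ≤ W * l ^ (1:ℝ) := by
      intro l hl
      have hl0 : 0 < l := lt_of_lt_of_le ha0 hl.1
      have hlb : l ≤ 3/2 := by have := hl.2; rw [hb_def] at this; exact this
      have h1 : |χ l| ≤ 1 := abs_le.mpr ⟨by linarith [(hχ01 l).1], (hχ01 l).2⟩
      rw [Real.rpow_one]
      simp only [hw1_def]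
      refine (norm_add_le _ _).trans ?_
      have e1 : ‖2*(l:ℂ)*((χ l : ℝ):ℂ)‖ = 2*|l| * |χ l| := by
        simp [norm_mul, Complex.norm_real, Real.norm_eq_abs]
      have e2 : ‖(l:ℂ)^2*((deriv χ l : ℝ):ℂ)‖ = |l|^2 * |deriv χ l| := by
        simp [norm_mul, norm_pow, Complex.norm_real, Real.norm_eq_abs]
      rw [e1, e2, abs_of_pos hl0]
      rw [hW_def]
      exact w1_arith hl0 hlb h1 (hB1d l) hB1' hB2'
    have hbw2 : ∀ l ∈ Set.Icc a b, ‖w2 l‖ ≤ W * l ^ (0:ℝ) := by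
      intro l hl
      have hl0 : 0 < l := lt_of_lt_of_le ha0 hl.1
      have hlb : l ≤ 3/2 := by have := hl.2; rw [hb_def] at this; exact this
      have h1 : |χ l| ≤ 1 := abs_le.mpr ⟨by linarith [(hχ01 l).1], (hχ01 l).2⟩
      rw [Real.rpow_zero, mul_one]
      simp only [hw2_def]
      refine (norm_add_le _ _).trans ?_
      refine le_trans (add_le_add_left (norm_add_le _ _) _) ?_
      have e1 : ‖2*((χ l : ℝ):ℂ)‖ = 2 * |χ l| := by
        simp [norm_mul, Complex.norm_real, Real.norm_eq_abs]
      have e2 : ‖4*(l:ℂ)*((deriv χ l : ℝ):ℂ)‖ = 4*|l| * |deriv χ l| := by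
        simp [norm_mul, Complex.norm_real, Real.norm_eq_abs]
      have e3 : ‖(l:ℂ)^2*((deriv (deriv χ) l : ℝ):ℂ)‖ = |l|^2 * |deriv (deriv χ) l| := by
        simp [norm_mul, norm_pow, Complex.norm_real, Real.norm_eq_abs]
      rw [e1, e2, e3, abs_of_pos hl0]
      rw [hW_def]
      exact w2_arith hl0 hlb h1 (hB1d l) (hB2d l) hB1' hB2'
    -- the master pointwise bound for f2
    have hbf2 : ∀ l ∈ Set.Icc a b,
        ‖f2 l‖ ≤ 9 * (r ^ (-1:ℝ) * s ^ (-1/2:ℝ) * W) * l ^ (-3/2:ℝ) := by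
      intro l hl
      have hl0 : 0 < l := lt_of_lt_of_le ha0 hl.1
      have conv : ∀ (X : ℂ) (p : ℝ), p = (-3/2:ℝ) →
          ‖X‖ ≤ r ^ (-1:ℝ) * s ^ (-1/2:ℝ) * W * l ^ p →
          ‖X‖ ≤ r ^ (-1:ℝ) * s ^ (-1/2:ℝ) * W * l ^ (-3/2:ℝ) := by
        intro X p hp h; rwa [hp] at h
      have T1 := conv _ _ (by norm_num) (term_bd hl0 (hbu2 l hl) (hbv0 l hl) (hbw0 l hl))
      have T2 := conv _ _ (by norm_num) (term_bd hl0 (hbu1 l hl) (hbv1 l hl) (hbw0 l hl))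
      have T3 := conv _ _ (by norm_num) (term_bd hl0 (hbu1 l hl) (hbv0 l hl) (hbw1 l hl))
      have T5 := conv _ _ (by norm_num) (term_bd hl0 (hbu0 l hl) (hbv2 l hl) (hbw0 l hl))
      have T6 := conv _ _ (by norm_num) (term_bd hl0 (hbu0 l hl) (hbv1 l hl) (hbw1 l hl))
      have T9 := conv _ _ (by norm_num) (term_bd hl0 (hbu0 l hl) (hbv0 l hl) (hbw2 l hl))
      simp only [hf2_def]
      refine le_trans norm_add₃_le ?_
      have hg1 : ‖u2 l * v l * w l + u1 l * v1 l * w l + u1 l * v l * w1 l‖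
          ≤ 3 * (r ^ (-1:ℝ) * s ^ (-1/2:ℝ) * W * l ^ (-3/2:ℝ)) :=
        le_trans norm_add₃_le (by linarith)
      have hg2 : ‖u1 l * v1 l * w l + u l * v2 l * w l + u l * v1 l * w1 l‖
          ≤ 3 * (r ^ (-1:ℝ) * s ^ (-1/2:ℝ) * W * l ^ (-3/2:ℝ)) :=
        le_trans norm_add₃_le (by linarith)
      have hg3 : ‖u1 l * v l * w1 l + u l * v1 l * w1 l + u l * v l * w2 l‖
          ≤ 3 * (r ^ (-1:ℝ) * s ^ (-1/2:ℝ) * W * l ^ (-3/2:ℝ)) :=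
        le_trans norm_add₃_le (by linarith)
      linarith
    -- norm of the phase
    have hnorme : ∀ l : ℝ, ‖e l‖ = 1 := by
      intro l; rw [he_def]
      simp [Complex.norm_exp]
    -- integral comparison
    have step1 : ‖∫ l in a..b, f2 l * e l‖ ≤ ∫ l in a..b, ‖f2 l‖ := by
      refine (intervalIntegral.norm_integral_le_integral_norm hab).trans_eq ?_
      apply intervalIntegral.integral_congr
      intro x _
      show ‖f2 x * e x‖ = ‖f2 x‖
      rw [norm_mul, hnorme x, mul_one]
    have hint_norm : IntervalIntegrable (fun l => ‖f2 l‖) volume a b :=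
      (hcf2.norm).intervalIntegrable
    have hint_pow : IntervalIntegrable
        (fun l : ℝ => 9 * (r ^ (-1:ℝ) * s ^ (-1/2:ℝ) * W) * l ^ (-3/2:ℝ)) volume a b := by
      apply ContinuousOn.intervalIntegrable
      exact continuousOn_const.mul
        (continuousOn_id.rpow_const (fun x hx => Or.inl (ne_of_gt (hpos x hx))))
    have step2 : (∫ l in a..b, ‖f2 l‖)
        ≤ ∫ l in a..b, 9 * (r ^ (-1:ℝ) * s ^ (-1/2:ℝ) * W) * l ^ (-3/2:ℝ) :=
      intervalIntegral.integral_mono_on hab hint_norm hint_pow hbf2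
    have step3 : (∫ l in a..b, 9 * (r ^ (-1:ℝ) * s ^ (-1/2:ℝ) * W) * l ^ (-3/2:ℝ))
        = 9 * (r ^ (-1:ℝ) * s ^ (-1/2:ℝ) * W) * ∫ l in a..b, l ^ (-3/2:ℝ) :=
      intervalIntegral.integral_const_mul _ _
    have step4 : (∫ l in a..b, l ^ (-3/2:ℝ)) ≤ 2 * (4*s) ^ ((1:ℝ)/2) := by
      have h0 : (0:ℝ) ∉ Set.uIcc a b := by
        rw [huIcc]; intro h; exact absurd h.1 (not_le.2 ha0)
      rw [integral_rpow (Or.inr ⟨by norm_num, h0⟩)]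
      have hb' : (0:ℝ) ≤ b ^ (-3/2+1:ℝ) := Real.rpow_nonneg (by rw [hb_def]; norm_num) _
      have ha' : a ^ (-3/2+1:ℝ) = (4*s) ^ ((1:ℝ)/2) := by
        rw [ha_def, show (-3/2+1 : ℝ) = -((1:ℝ)/2) by norm_num, one_div,
          Real.rpow_neg (by positivity), Real.inv_rpow (by positivity), inv_inv]
      rw [ha']
      rw [div_le_iff_of_neg (by norm_num)]
      nlinarith [hb', Real.rpow_nonneg (show (0:ℝ) ≤ 4*s by positivity) ((1:ℝ)/2)]
    have h4half : ((4:ℝ)) ^ ((1:ℝ)/2) = 2 := by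
      rw [show (4:ℝ) = (2:ℝ)^(2:ℕ) by norm_num, ← Real.rpow_natCast (2:ℝ) 2,
        ← Real.rpow_mul (by norm_num)]
      norm_num
    have hQ : s ^ (-1/2:ℝ) * (4*s) ^ ((1:ℝ)/2) = 2 := by
      rw [Real.mul_rpow (by norm_num) hs.le, h4half]
      calc s ^ (-1/2:ℝ) * (2 * s ^ ((1:ℝ)/2)) = 2 * (s ^ (-1/2:ℝ) * s ^ ((1:ℝ)/2)) := by ring
        _ = 2 * s ^ (0:ℝ) := by rw [← Real.rpow_add hs]; norm_num
        _ = 2 := by rw [Real.rpow_zero]; norm_num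
    -- final numeric assembly
    have hX : ‖∫ l in a..b, f2 l * e l‖ ≤ 36 * W * r ^ (-1:ℝ) := by
      have h1 : (∫ l in a..b, ‖f2 l‖) ≤ 9 * (r ^ (-1:ℝ) * s ^ (-1/2:ℝ) * W) * (2 * (4*s) ^ ((1:ℝ)/2)) := by
        rw [step3] at step2
        refine step2.trans ?_
        have hK : 0 ≤ 9 * (r ^ (-1:ℝ) * s ^ (-1/2:ℝ) * W) := by positivity
        exact mul_le_mul_of_nonneg_left step4 hK
      have h2 : 9 * (r ^ (-1:ℝ) * s ^ (-1/2:ℝ) * W) * (2 * (4*s) ^ ((1:ℝ)/2))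
          = 36 * W * r ^ (-1:ℝ) := by
        calc 9 * (r ^ (-1:ℝ) * s ^ (-1/2:ℝ) * W) * (2 * (4*s) ^ ((1:ℝ)/2))
            = 18 * W * r ^ (-1:ℝ) * (s ^ (-1/2:ℝ) * (4*s) ^ ((1:ℝ)/2)) := by ring
          _ = 36 * W * r ^ (-1:ℝ) := by rw [hQ]; ring
      rw [h2] at h1
      exact step1.trans h1
    rw [hred, hIBP, norm_mul, norm_mul, norm_inv, hccn]
    have hfinal1 : s⁻¹ * (s⁻¹ * ‖∫ l in a..b, f2 l * e l‖)
        ≤ s⁻¹ * (s⁻¹ * (36 * W * r ^ (-1:ℝ))) := by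
      have h0 : (0:ℝ) ≤ s⁻¹ := by positivity
      exact mul_le_mul_of_nonneg_left (mul_le_mul_of_nonneg_left hX h0) h0
    refine hfinal1.trans ?_
    rw [Real.rpow_neg_one]
    have hkey : 1+(r+s)^2 ≤ 13*s^2 := by
      nlinarith [mul_nonneg (show (0:ℝ) ≤ 2*s-1 by linarith) (show (0:ℝ) ≤ 2*s+1 by linarith),
        mul_nonneg (show (0:ℝ) ≤ 2*s-r by linarith) (show (0:ℝ) ≤ 4*s+r by linarith)]
    have heq : s⁻¹ * (s⁻¹ * (36 * W * r⁻¹)) = 36*W/(r*s^2) := by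
      field_simp
    rw [heq, div_le_div_iff₀ (by positivity) (by positivity)]
    nlinarith [mul_nonneg (mul_nonneg hW.le hr.le) (sub_nonneg.2 hkey)]
  · -- the integrand vanishes identically
    have hzero : Set.EqOn (fun l : ℝ =>
        Complex.exp (Complex.I * (σ * l * s : ℝ)) * η (l * r) * ω (l * s) *
          (l : ℂ) ^ 2 * (χ l : ℂ)) (fun _ => (0:ℂ)) (Set.Ioi 0) := by
      intro l hl
      simp only [Set.mem_Ioi] at hl
      by_cases hωl : ω (l * s) = 0
      · simp [hωl]
      · have hls : 1/2 < l * s := by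
          by_contra hc; push_neg at hc; exact hωl (hω0 _ hc)
        push_neg at hcase
        rcases lt_or_ge s (1/2) with hslt | hsge
        · have hl1 : 1 < l := by nlinarith
          have : χ l = 0 := hχsupp l (by simp [Set.mem_Icc]; intro _; linarith)
          simp [this]
        · have hrlt := hcase hsge
          have : (1:ℝ) < l * r := by nlinarith
          simp [hη0 _ this.le]
    rw [setIntegral_congr_fun measurableSet_Ioi hzero]
    simp only [integral_zero, norm_zero]
    positivity
end

section
/- Let λ₁ ∈ (0, 1/2] and let χ : ℝ → [0,1] be a smooth function supported in [0, 2λ₁] with bounded derivatives of all orders. Let ρ : ℝ → ℂ be a smooth function supported in [0, 1] with |ρ^{(ℓ)}(z)| ≤ 1 for ℓ = 0, 1, 2, 3, and let ω : (0, ∞) → ℂ be smooth with ω(z) = 0 for z ≤ 1/2 and |ω^{(j)}(z)| ≤ z^{−1/2−j} for j = 0, 1, 2, 3 and all z > 0. Then there exists a constant C (depending on χ) such that for all r, s > 0: |∫₀^∞ e^{iλr} ω(λr) ρ(λs) λ² χ(λ) dλ| ≤ C / ( r · ⟨r + s⟩² ). -/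
open MeasureTheory Real Topology

private lemma itD_ofReal {f : ℝ → ℝ} (hf : ContDiff ℝ (⊤:ℕ∞) f) (n : ℕ) :
    iteratedDeriv n (fun t => (f t : ℂ)) = fun t => ((iteratedDeriv n f t : ℝ) : ℂ) := by
  induction n with
  | zero => simp
  | succ n ih =>
    rw [iteratedDeriv_succ, ih, iteratedDeriv_succ]
    funext t
    exact (((hf.differentiable_iteratedDeriv n
      (by exact_mod_cast lt_top_iff_ne_top.2 (by simp))) t).hasDerivAt.ofReal_comp).deriv

private lemma itD_zero_fun (n : ℕ) (x : ℝ) : iteratedDeriv n (fun _ : ℝ => (0:ℂ)) x = 0 := by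
  cases n with
  | zero => simp
  | succ n =>
    rw [iteratedDeriv_eq_iteratedFDeriv, iteratedFDeriv_const_of_ne (Nat.succ_ne_zero n)]
    simp

private lemma itD_zero_of_eventually {f : ℝ → ℂ} {x : ℝ} (h : f =ᶠ[𝓝 x] fun _ => 0) (n : ℕ) :
    iteratedDeriv n f x = 0 := by
  rw [h.iteratedDeriv_eq n]
  exact itD_zero_fun n x

private lemma leib {f₁ f₂ : ℝ → ℂ} (h₁ : ContDiff ℝ (⊤:ℕ∞) f₁) (h₂ : ContDiff ℝ (⊤:ℕ∞) f₂)
    {c₁ c₂ e₁ e₂ : ℝ} (hc₁ : 0 ≤ c₁) (hc₂ : 0 ≤ c₂) {x : ℝ} (hx : 0 < x) (n : ℕ)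
    (hb₁ : ∀ j ≤ n, ‖iteratedDeriv j f₁ x‖ ≤ c₁ * x ^ (e₁ - j))
    (hb₂ : ∀ j ≤ n, ‖iteratedDeriv j f₂ x‖ ≤ c₂ * x ^ (e₂ - j)) :
    ‖iteratedDeriv n (fun y => f₁ y * f₂ y) x‖ ≤ 2 ^ n * (c₁ * c₂) * x ^ (e₁ + e₂ - n) := by
  have key : ∀ i ∈ Finset.range (n+1),
      (n.choose i : ℝ) * ‖iteratedFDeriv ℝ i f₁ x‖ * ‖iteratedFDeriv ℝ (n-i) f₂ x‖ ≤
      (n.choose i : ℝ) * ((c₁ * c₂) * x ^ (e₁ + e₂ - n)) := by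
    intro i hi
    rw [Finset.mem_range] at hi
    have hi' : i ≤ n := Nat.lt_succ_iff.1 hi
    rw [norm_iteratedFDeriv_eq_norm_iteratedDeriv, norm_iteratedFDeriv_eq_norm_iteratedDeriv,
      mul_assoc, mul_assoc]
    refine mul_le_mul_of_nonneg_left ?_ (by positivity)
    calc ‖iteratedDeriv i f₁ x‖ * ‖iteratedDeriv (n-i) f₂ x‖
        ≤ (c₁ * x ^ (e₁ - i)) * (c₂ * x ^ (e₂ - (n-i : ℕ))) := by
          exact mul_le_mul (hb₁ i hi') (hb₂ _ (Nat.sub_le n i)) (norm_nonneg _) (by positivity)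
      _ = (c₁ * c₂) * (x ^ (e₁ - i) * x ^ (e₂ - (n-i : ℕ))) := by ring
      _ = c₁ * (c₂ * x ^ (e₁ + e₂ - n)) := by
          rw [← Real.rpow_add hx]
          have : ((n - i : ℕ) : ℝ) = (n : ℝ) - i := by
            rw [Nat.cast_sub hi']
          rw [this]
          ring_nf
  calc ‖iteratedDeriv n (fun y => f₁ y * f₂ y) x‖
      = ‖iteratedFDeriv ℝ n (fun y => f₁ y * f₂ y) x‖ :=
        (norm_iteratedFDeriv_eq_norm_iteratedDeriv).symm
    _ ≤ ∑ i ∈ Finset.range (n+1), (n.choose i : ℝ) * ‖iteratedFDeriv ℝ i f₁ x‖ *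
          ‖iteratedFDeriv ℝ (n-i) f₂ x‖ :=
        norm_iteratedFDeriv_mul_le h₁ h₂ x (by exact_mod_cast le_top)
    _ ≤ ∑ i ∈ Finset.range (n+1), (n.choose i : ℝ) * ((c₁ * c₂) * x ^ (e₁ + e₂ - n)) :=
        Finset.sum_le_sum key
    _ = (∑ i ∈ Finset.range (n+1), (n.choose i : ℕ) : ℕ) * ((c₁ * c₂) * x ^ (e₁ + e₂ - n)) := by
        push_cast; rw [Finset.sum_mul]
    _ = 2 ^ n * ((c₁ * c₂) * x ^ (e₁ + e₂ - n)) := by rw [Nat.sum_range_choose]; push_cast; ring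
    _ = 2 ^ n * (c₁ * c₂) * x ^ (e₁ + e₂ - n) := by ring

set_option maxHeartbeats 1600000 in
/-- the oscillatory integral bound
`|∫₀^∞ e^{iλr} ω(λr) ρ(λs) λ² χ(λ) dλ| ≤ C / (r ⟨r+s⟩²)` for `r, s > 0`,
where `ρ` is smooth, supported in `[0,1]`, with `|ρ^{(ℓ)}| ≤ 1` for `ℓ = 0,1,2,3`,
and `ω` is smooth on `(0,∞)`, vanishes on `(0,1/2]`, and satisfies
`|ω^{(j)}(z)| ≤ z^{-1/2-j}` for `j = 0,1,2,3`. -/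
theorem stmt_16 (lam₁ : ℝ) (hlam₁ : lam₁ ∈ Set.Ioc (0:ℝ) (1/2))
    (χ : ℝ → ℝ) (hχ : ContDiff ℝ (⊤ : ℕ∞) χ)
    (hχ01 : ∀ t, χ t ∈ Set.Icc (0:ℝ) 1)
    (hχsupp : ∀ t : ℝ, t ∉ Set.Icc (0:ℝ) (2 * lam₁) → χ t = 0)
    (hχbdd : ∀ n : ℕ, ∃ B : ℝ, ∀ t : ℝ, |iteratedDeriv n χ t| ≤ B)
    (ρ : ℝ → ℂ) (hρ : ContDiff ℝ (⊤ : ℕ∞) ρ)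
    (hρsupp : ∀ z : ℝ, z ∉ Set.Icc (0:ℝ) 1 → ρ z = 0)
    (hρb : ∀ z : ℝ, ∀ ℓ : ℕ, ℓ ≤ 3 → ‖iteratedDeriv ℓ ρ z‖ ≤ 1)
    (ω : ℝ → ℂ) (hω : ContDiffOn ℝ (⊤ : ℕ∞) ω (Set.Ioi 0))
    (hω0 : ∀ z : ℝ, z ≤ 1/2 → ω z = 0)
    (hωb : ∀ z : ℝ, 0 < z → ∀ j : ℕ, j ≤ 3 →
      ‖iteratedDeriv j ω z‖ ≤ z ^ (-(1:ℝ)/2 - j)) :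
    ∃ C : ℝ, 0 < C ∧ ∀ r s : ℝ, 0 < r → 0 < s →
      ‖∫ l in Set.Ioi (0:ℝ),
          Complex.exp (Complex.I * (l * r : ℝ)) * ω (l * r) * ρ (l * s) *
            (l : ℂ) ^ 2 * (χ l : ℂ)‖ ≤
        C / (r * (1 + (r + s) ^ 2)) := by
  classical
  obtain ⟨hlam₁0, hlam₁2⟩ := hlam₁
  choose B hB using hχbdd
  set Bm : ℝ := |B 0| + |B 1| + |B 2| + |B 3| + 1 with hBmdef
  have hBmpos : 0 < Bm := by positivity
  have hBle : ∀ k ≤ 3, ∀ t : ℝ, |iteratedDeriv k χ t| ≤ Bm := by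
    intro k hk t
    interval_cases k <;>
      exact (hB _ t).trans (by
        rw [hBmdef]
        nlinarith [le_abs_self (B 0), le_abs_self (B 1), le_abs_self (B 2), le_abs_self (B 3),
          abs_nonneg (B 0), abs_nonneg (B 1), abs_nonneg (B 2), abs_nonneg (B 3)])
  -- ω is globally smooth
  have hωC : ContDiff ℝ (⊤:ℕ∞) ω := by
    rw [contDiff_iff_contDiffAt]
    intro x
    rcases lt_or_ge x (1/2) with hx | hx
    · have hev : ω =ᶠ[𝓝 x] fun _ => 0 := by
        filter_upwards [Iio_mem_nhds hx] with y hy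
        exact hω0 y (le_of_lt hy)
      exact (contDiffAt_const (c := (0:ℂ))).congr_of_eventuallyEq hev
    · exact hω.contDiffAt (Ioi_mem_nhds (by linarith))
  -- derivatives of ρ vanish beyond 1
  have hρd : ∀ k : ℕ, ∀ z : ℝ, 1 < z → iteratedDeriv k ρ z = 0 := by
    intro k z hz
    refine itD_zero_of_eventually ?_ k
    filter_upwards [Ioi_mem_nhds hz] with y hy
    exact hρsupp y (fun hmem => absurd hmem.2 (not_le.2 hy))
  refine ⟨39936 * Bm, by positivity, ?_⟩
  intro r s hr hs
  have hRHSpos : 0 < (39936 * Bm) / (r * (1 + (r + s) ^ 2)) := by positivity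
  by_cases hA : 1/(4*lam₁) ≤ r ∧ s ≤ 2*r
  swap
  · -- degenerate case: the integrand vanishes identically
    have h0 : Set.EqOn (fun l : ℝ => Complex.exp (Complex.I * ((l * r : ℝ):ℂ)) * ω (l * r) *
        ρ (l * s) * (l : ℂ) ^ 2 * (χ l : ℂ)) (fun _ => 0) (Set.Ioi 0) := by
      intro l hl
      simp only [Set.mem_Ioi] at hl
      by_cases hχl : χ l = 0
      · simp [hχl]
      by_cases hωl : ω (l * r) = 0
      · simp [hωl]
      have hl2 : l ≤ 2 * lam₁ := by
        by_contra hcon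
        exact hχl (hχsupp l (fun hmem => hcon hmem.2))
      have hlr : 1/2 < l * r := by
        by_contra hcon
        exact hωl (hω0 _ (not_lt.1 hcon))
      have hr4 : 1/(4*lam₁) ≤ r := by
        rw [div_le_iff₀ (by positivity)]
        nlinarith
      have h2rs : 2*r < s := by
        by_contra hcon
        exact hA ⟨hr4, not_lt.1 hcon⟩
      have hls : 1 < l * s := by
        have : 1/2 < l * r := hlr
        nlinarith
      have : ρ (l * s) = 0 := hρsupp _ (fun hmem => absurd hmem.2 (not_le.2 hls))
      simp [this]
    rw [MeasureTheory.setIntegral_congr_fun measurableSet_Ioi h0]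
    simpa using hRHSpos.le
  obtain ⟨hr4, hs2r⟩ := hA
  have hr12 : (1:ℝ)/2 ≤ r := le_trans (by rw [le_div_iff₀ (by positivity)]; nlinarith) hr4
  set b : ℝ := 1/(2*r) with hbdef
  have hb0 : 0 < b := by positivity
  have hb1 : b ≤ 1 := by rw [hbdef, div_le_one (by positivity)]; linarith
  -- the pieces
  set gg : ℝ → ℂ := fun x => ω (r * x) with hggdef
  set hh : ℝ → ℂ := fun x => ρ (s * x) with hhhdef
  set sq : ℝ → ℂ := fun x => ((x^2 : ℝ) : ℂ) with hsqdef
  set cχ : ℝ → ℂ := fun x => ((χ x : ℝ) : ℂ) with hcχdef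
  set qq : ℝ → ℂ := fun x => sq x * cχ x with hqqdef
  set FF : ℝ → ℂ := fun x => (gg x * hh x) * qq x with hFFdef
  set EE : ℝ → ℂ := fun x => Complex.exp (Complex.I * ((x * r : ℝ):ℂ)) with hEEdef
  have hg : ContDiff ℝ (⊤:ℕ∞) gg := hωC.comp (contDiff_const.mul contDiff_id)
  have hhC : ContDiff ℝ (⊤:ℕ∞) hh := hρ.comp (contDiff_const.mul contDiff_id)
  have hsqR : ContDiff ℝ (⊤:ℕ∞) (fun x : ℝ => x^2) := contDiff_id.pow 2
  have hsqC : ContDiff ℝ (⊤:ℕ∞) sq := Complex.ofRealCLM.contDiff.comp hsqR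
  have hcχC : ContDiff ℝ (⊤:ℕ∞) cχ := Complex.ofRealCLM.contDiff.comp hχ
  have hqqC : ContDiff ℝ (⊤:ℕ∞) qq := hsqC.mul hcχC
  have hFFC : ContDiff ℝ (⊤:ℕ∞) FF := (hg.mul hhC).mul hqqC
  have hEEcont : Continuous EE := by
    apply Complex.continuous_exp.comp
    fun_prop
  -- bound on gg derivatives
  have hgb : ∀ j ≤ 3, ∀ x ∈ Set.Ioc (0:ℝ) 1,
      ‖iteratedDeriv j gg x‖ ≤ r ^ (-(1:ℝ)/2) * x ^ (-(1:ℝ)/2 - j) := by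
    intro j hj x hx
    have hxr : 0 < r * x := mul_pos hr hx.1
    have hsm := congrFun (iteratedDeriv_comp_const_smul
      (hωC.of_le (by exact_mod_cast le_top) : ContDiff ℝ j ω) r) x
    rw [hggdef]
    rw [hsm, norm_smul, Real.norm_eq_abs, abs_of_nonneg (pow_nonneg hr.le j)]
    calc r ^ j * ‖iteratedDeriv j ω (r * x)‖
        ≤ r ^ j * (r * x) ^ (-(1:ℝ)/2 - j) :=
          mul_le_mul_of_nonneg_left (hωb (r*x) hxr j hj) (pow_nonneg hr.le j)
      _ = r ^ (-(1:ℝ)/2) * x ^ (-(1:ℝ)/2 - j) := by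
          rw [Real.mul_rpow hr.le hx.1.le, ← Real.rpow_natCast r j, ← mul_assoc,
            ← Real.rpow_add hr, show (j:ℝ) + (-(1:ℝ)/2 - j) = -(1:ℝ)/2 by ring]
  -- bound on hh derivatives
  have hhb : ∀ k ≤ 3, ∀ x ∈ Set.Ioc (0:ℝ) 1,
      ‖iteratedDeriv k hh x‖ ≤ 1 * x ^ ((0:ℝ) - k) := by
    intro k hk x hx
    have hsm := congrFun (iteratedDeriv_comp_const_smul
      (hρ.of_le (by exact_mod_cast le_top) : ContDiff ℝ k ρ) s) x
    rw [hhhdef]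
    rw [hsm]
    have hxpow : x ^ ((0:ℝ) - k) = (x⁻¹)^k := by
      rw [show (0:ℝ) - k = -(k:ℝ) by ring, Real.rpow_neg hx.1.le, Real.rpow_natCast, ← inv_pow]
    rcases le_or_gt (s * x) 1 with hsx | hsx
    · rw [norm_smul, Real.norm_eq_abs, abs_of_nonneg (pow_nonneg hs.le k), one_mul, hxpow]
      have h1 : ‖iteratedDeriv k ρ (s*x)‖ ≤ 1 := hρb _ k hk
      have h2 : s ≤ x⁻¹ := by
        rw [← one_div, le_div_iff₀ hx.1]
        linarith
      calc s ^ k * ‖iteratedDeriv k ρ (s*x)‖ ≤ s ^ k * 1 :=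
            mul_le_mul_of_nonneg_left h1 (pow_nonneg hs.le k)
        _ = s ^ k := mul_one _
        _ ≤ (x⁻¹) ^ k := pow_le_pow_left₀ hs.le h2 k
    · rw [hρd k (s*x) hsx]
      simp only [smul_zero, norm_zero, one_mul]
      exact Real.rpow_nonneg hx.1.le _
  -- bound on sq derivatives
  have hsqb : ∀ j ≤ 3, ∀ x ∈ Set.Ioc (0:ℝ) 1,
      ‖iteratedDeriv j sq x‖ ≤ 2 * x ^ ((2:ℝ) - j) := by
    have hd1 : deriv (fun t:ℝ => t^2) = fun t => 2*t := by
      funext t; simp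
    have hd2 : deriv (fun t:ℝ => 2*t) = fun _ => (2:ℝ) := by
      funext t; simpa using ((hasDerivAt_id t).const_mul (2:ℝ)).deriv
    have hd3 : deriv (fun _:ℝ => (2:ℝ)) = fun _ => (0:ℝ) := by
      funext t; simp
    have it1 : iteratedDeriv 1 (fun t:ℝ => t^2) = fun t => 2*t := by
      rw [iteratedDeriv_one, hd1]
    have it2 : iteratedDeriv 2 (fun t:ℝ => t^2) = fun _ => (2:ℝ) := by
      rw [show (2:ℕ) = 1+1 from rfl, iteratedDeriv_succ, it1, hd2]
    have it3 : iteratedDeriv 3 (fun t:ℝ => t^2) = fun _ => (0:ℝ) := by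
      rw [show (3:ℕ) = 2+1 from rfl, iteratedDeriv_succ, it2, hd3]
    intro j hj x hx
    have hor := itD_ofReal hsqR j
    rw [hsqdef]
    rw [show iteratedDeriv j (fun t : ℝ => ((t^2:ℝ):ℂ)) x
        = ((iteratedDeriv j (fun t:ℝ => t^2) x : ℝ) : ℂ) from congrFun hor x,
      Complex.norm_real, Real.norm_eq_abs]
    interval_cases j
    · rw [iteratedDeriv_zero, show ((2:ℝ) - (0:ℕ)) = ((2:ℕ):ℝ) by norm_num, Real.rpow_natCast]
      rw [abs_of_nonneg (by positivity)]
      nlinarith [sq_nonneg x]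
    · rw [it1, show ((2:ℝ) - (1:ℕ)) = ((1:ℕ):ℝ) by norm_num, Real.rpow_natCast]
      rw [show |(fun t:ℝ => 2*t) x| = 2*x from by rw [abs_of_nonneg (by simp; linarith [hx.1])]]
      simp
    · rw [it2, show ((2:ℝ) - (2:ℕ)) = (0:ℝ) by norm_num, Real.rpow_zero]
      rw [abs_of_nonneg (by norm_num)]
      norm_num
    · rw [it3]
      show |(0:ℝ)| ≤ _
      rw [abs_zero]
      have := Real.rpow_nonneg hx.1.le ((2:ℝ) - ((3:ℕ):ℝ))
      linarith
  -- bound on cχ derivatives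
  have hcχb : ∀ k ≤ 3, ∀ x ∈ Set.Ioc (0:ℝ) 1,
      ‖iteratedDeriv k cχ x‖ ≤ Bm * x ^ ((0:ℝ) - k) := by
    intro k hk x hx
    rw [hcχdef]
    rw [show iteratedDeriv k (fun t : ℝ => ((χ t:ℝ):ℂ)) x
        = ((iteratedDeriv k χ x : ℝ) : ℂ) from congrFun (itD_ofReal hχ k) x,
      Complex.norm_real, Real.norm_eq_abs]
    have h1 : 1 ≤ x ^ ((0:ℝ) - k) :=
      Real.one_le_rpow_of_pos_of_le_one_of_nonpos hx.1 hx.2 (by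
        have : (0:ℝ) ≤ (k:ℝ) := Nat.cast_nonneg k
        linarith)
    calc |iteratedDeriv k χ x| ≤ Bm := hBle k hk x
      _ ≤ Bm * x ^ ((0:ℝ) - k) := le_mul_of_one_le_right hBmpos.le h1
  -- product bounds
  have hghb : ∀ i ≤ 3, ∀ x ∈ Set.Ioc (0:ℝ) 1,
      ‖iteratedDeriv i (fun y => gg y * hh y) x‖ ≤
        (8 * r ^ (-(1:ℝ)/2)) * x ^ (-(1:ℝ)/2 - i) := by
    intro i hi x hx
    have hle := leib hg hhC (by positivity) (zero_le_one) hx.1 i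
      (fun j hj => hgb j (hj.trans hi) x hx) (fun j hj => hhb j (hj.trans hi) x hx)
    rw [show (-(1:ℝ)/2 + 0 - (i:ℝ)) = (-(1:ℝ)/2 - (i:ℝ)) by ring] at hle
    refine hle.trans ?_
    have h2i : (2:ℝ)^i ≤ 8 := by
      calc (2:ℝ)^i ≤ 2^3 := pow_le_pow_right₀ (by norm_num) hi
        _ = 8 := by norm_num
    have hX : (0:ℝ) ≤ x ^ (-(1:ℝ)/2 - i) := Real.rpow_nonneg hx.1.le _
    have hc : (0:ℝ) ≤ r ^ (-(1:ℝ)/2) := Real.rpow_nonneg hr.le _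
    calc (2:ℝ)^i * (r ^ (-(1:ℝ)/2) * 1) * x ^ (-(1:ℝ)/2 - i)
        = (2:ℝ)^i * (r ^ (-(1:ℝ)/2) * x ^ (-(1:ℝ)/2 - i)) := by ring
      _ ≤ 8 * (r ^ (-(1:ℝ)/2) * x ^ (-(1:ℝ)/2 - i)) :=
          mul_le_mul_of_nonneg_right h2i (mul_nonneg hc hX)
      _ = (8 * r ^ (-(1:ℝ)/2)) * x ^ (-(1:ℝ)/2 - i) := by ring
  have hqqb : ∀ m ≤ 3, ∀ x ∈ Set.Ioc (0:ℝ) 1,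
      ‖iteratedDeriv m qq x‖ ≤ (16 * Bm) * x ^ ((2:ℝ) - m) := by
    intro m hm x hx
    have hle := leib hsqC hcχC (by norm_num) hBmpos.le hx.1 m
      (fun j hj => hsqb j (hj.trans hm) x hx) (fun j hj => hcχb j (hj.trans hm) x hx)
    rw [show ((2:ℝ) + 0 - (m:ℝ)) = ((2:ℝ) - (m:ℝ)) by ring] at hle
    rw [hqqdef]
    refine hle.trans ?_
    have h2i : (2:ℝ)^m ≤ 8 := by
      calc (2:ℝ)^m ≤ 2^3 := pow_le_pow_right₀ (by norm_num) hm
        _ = 8 := by norm_num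
    have hX : (0:ℝ) ≤ x ^ ((2:ℝ) - m) := Real.rpow_nonneg hx.1.le _
    calc (2:ℝ)^m * (2 * Bm) * x ^ ((2:ℝ) - m)
        = ((2:ℝ)^m * 2) * (Bm * x ^ ((2:ℝ) - m)) := by ring
      _ ≤ 16 * (Bm * x ^ ((2:ℝ) - m)) := by
          refine mul_le_mul_of_nonneg_right (by nlinarith) (mul_nonneg hBmpos.le hX)
      _ = (16 * Bm) * x ^ ((2:ℝ) - m) := by ring
  have hFFb : ∀ x ∈ Set.Ioc (0:ℝ) 1,
      ‖iteratedDeriv 3 FF x‖ ≤ (1024 * Bm * r ^ (-(1:ℝ)/2)) * x ^ (-(3:ℝ)/2) := by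
    intro x hx
    have hle := leib (hg.mul hhC) hqqC (by positivity) (by positivity) hx.1 3
      (fun j hj => hghb j hj x hx) (fun j hj => hqqb j hj x hx)
    rw [show (-(1:ℝ)/2 + 2 - ((3:ℕ):ℝ)) = (-(3:ℝ)/2) by norm_num] at hle
    refine le_trans (le_of_eq ?_) (hle.trans (le_of_eq (by ring)))
    rw [hFFdef]
  -- support facts
  have hFIio : Set.EqOn FF (fun _ => 0) (Set.Iio b) := by
    intro x hx
    have hxb : x < b := hx
    have hxr : r * x < 1/2 := by
      calc r * x < r * b := mul_lt_mul_of_pos_left hxb hr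
        _ = 1/2 := by rw [hbdef]; field_simp
    simp [hFFdef, hggdef, hω0 _ hxr.le]
  have hFIoi : Set.EqOn FF (fun _ => 0) (Set.Ioi 1) := by
    intro x hx
    have hx1 : (1:ℝ) < x := hx
    have hχx : χ x = 0 := by
      refine hχsupp x ?_
      intro hmem
      have h2 := hmem.2
      linarith
    simp [hFFdef, hqqdef, hcχdef, hχx]
  -- integral conversion
  have hfeq : ∀ l : ℝ, Complex.exp (Complex.I * ((l * r : ℝ):ℂ)) * ω (l * r) * ρ (l * s) *
      (l:ℂ)^2 * ((χ l : ℝ):ℂ) = EE l * FF l := by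
    intro l
    simp only [hEEdef, hFFdef, hggdef, hhhdef, hqqdef, hsqdef, hcχdef]
    rw [mul_comm r l, mul_comm s l]
    push_cast
    ring
  have hcompl : ∀ l : ℝ, l ∉ Set.Ioi (0:ℝ) → EE l * FF l = 0 := by
    intro l hl
    simp only [Set.mem_Ioi, not_lt] at hl
    rw [hFIio (show l ∈ Set.Iio b from lt_of_le_of_lt hl hb0)]
    simp
  have hsupp : Function.support (fun l => EE l * FF l) ⊆ Set.Ioc 0 2 := by
    intro l hl
    simp only [Function.mem_support] at hl
    constructor
    · by_contra hc
      exact hl (by rw [hFIio (show l ∈ Set.Iio b from lt_of_le_of_lt (not_lt.1 hc) hb0)]; simp)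
    · by_contra hc
      push_neg at hc
      exact hl (by rw [hFIoi (show l ∈ Set.Ioi 1 from lt_trans one_lt_two hc)]; simp)
  -- smoothness/integrability facts
  have hFFd : ∀ k : ℕ, Differentiable ℝ (iteratedDeriv k FF) := fun k =>
    hFFC.differentiable_iteratedDeriv k (by exact_mod_cast lt_top_iff_ne_top.2 (by simp))
  have hFFc : ∀ k : ℕ, Continuous (iteratedDeriv k FF) := fun k => (hFFd k).continuous
  have hder : ∀ (k : ℕ) (x : ℝ), HasDerivAt (iteratedDeriv k FF) (iteratedDeriv (k+1) FF x) x := by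
    intro k x
    rw [iteratedDeriv_succ]
    exact ((hFFd k) x).hasDerivAt
  have hIrne : (Complex.I * (r:ℂ)) ≠ 0 :=
    mul_ne_zero Complex.I_ne_zero (Complex.ofReal_ne_zero.2 hr.ne')
  have hEder : ∀ x : ℝ, HasDerivAt (fun y => EE y / (Complex.I * r)) (EE x) x := by
    intro x
    have h1 : HasDerivAt (fun y : ℝ => Complex.I * ((y * r : ℝ):ℂ)) (Complex.I * r) x := by
      have heq : (fun y : ℝ => Complex.I * ((y * r : ℝ):ℂ))
          = fun y : ℝ => (Complex.I * (r:ℂ)) * ((y:ℝ):ℂ) := by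
        funext y; push_cast; ring
      rw [heq]
      simpa using (Complex.ofRealCLM.hasDerivAt (x := x)).const_mul (Complex.I * (r:ℂ))
    have h2 : HasDerivAt EE (EE x * (Complex.I * r)) x := by
      rw [hEEdef]; exact h1.cexp
    have h3 := h2.div_const (Complex.I * (r:ℂ))
    rwa [mul_div_assoc, div_self hIrne, mul_one] at h3
  have hbound0 : ∀ k : ℕ, iteratedDeriv k FF 0 = 0 := by
    intro k
    refine itD_zero_of_eventually ?_ k
    filter_upwards [Iio_mem_nhds hb0] with y hy
    exact hFIio hy
  have hbound2 : ∀ k : ℕ, iteratedDeriv k FF 2 = 0 := by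
    intro k
    refine itD_zero_of_eventually ?_ k
    filter_upwards [Ioi_mem_nhds (show (1:ℝ) < 2 by norm_num)] with y hy
    exact hFIoi hy
  -- integration by parts
  have hibp : ∀ k : ℕ, (∫ x in (0:ℝ)..2, iteratedDeriv k FF x * EE x)
      = -(Complex.I * (r:ℂ))⁻¹ * ∫ x in (0:ℝ)..2, iteratedDeriv (k+1) FF x * EE x := by
    intro k
    have h := intervalIntegral.integral_mul_deriv_eq_deriv_mul
      (u := iteratedDeriv k FF) (u' := iteratedDeriv (k+1) FF)
      (v := fun y => EE y / (Complex.I * r)) (v' := EE)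
      (fun x _ => hder k x) (fun x _ => hEder x)
      ((hFFc (k+1)).intervalIntegrable 0 2) (hEEcont.intervalIntegrable 0 2)
    rw [hbound0 k, hbound2 k, zero_mul, zero_mul, sub_zero, zero_sub] at h
    rw [h]
    have hptw : ∀ x : ℝ, iteratedDeriv (k+1) FF x * (EE x / (Complex.I * r))
        = (Complex.I * (r:ℂ))⁻¹ * (iteratedDeriv (k+1) FF x * EE x) := by
      intro x; rw [div_eq_mul_inv]; ring
    rw [show (∫ x in (0:ℝ)..2, iteratedDeriv (k+1) FF x * (EE x / (Complex.I * r)))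
        = ∫ x in (0:ℝ)..2, (Complex.I * (r:ℂ))⁻¹ * (iteratedDeriv (k+1) FF x * EE x) from
      intervalIntegral.integral_congr (fun x _ => hptw x)]
    rw [intervalIntegral.integral_const_mul]
    ring
  have h1 := hibp 0; have h2 := hibp 1; have h3 := hibp 2
  simp only [Nat.reduceAdd] at h1 h2 h3
  have hchain : (∫ x in (0:ℝ)..2, iteratedDeriv 0 FF x * EE x)
      = -(Complex.I * (r:ℂ))⁻¹ * (-(Complex.I * (r:ℂ))⁻¹ * (-(Complex.I * (r:ℂ))⁻¹ *
        ∫ x in (0:ℝ)..2, iteratedDeriv 3 FF x * EE x)) := by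
    rw [h1, h2, h3]
  have hI0eq : (∫ l in Set.Ioi (0:ℝ), Complex.exp (Complex.I * ((l * r:ℝ):ℂ)) * ω (l*r) *
      ρ (l*s) * (l:ℂ)^2 * ((χ l:ℝ):ℂ))
      = ∫ x in (0:ℝ)..2, iteratedDeriv 0 FF x * EE x := by
    rw [MeasureTheory.setIntegral_congr_fun measurableSet_Ioi (fun l _ => hfeq l)]
    rw [MeasureTheory.setIntegral_eq_integral_of_forall_compl_eq_zero hcompl]
    rw [← intervalIntegral.integral_eq_integral_of_support_subset hsupp]
    exact intervalIntegral.integral_congr (fun x _ => by rw [iteratedDeriv_zero]; ring)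
  -- norm of the phase
  have hEnorm : ∀ x : ℝ, ‖EE x‖ = 1 := by
    intro x
    rw [hEEdef]
    simp [Complex.norm_exp]
  have hc1 : ‖(Complex.I * (r:ℂ))⁻¹‖ = r⁻¹ := by
    rw [norm_inv, norm_mul, Complex.norm_I, one_mul, Complex.norm_real, Real.norm_eq_abs,
      abs_of_nonneg hr.le]
  -- bound the thrice-differentiated integral
  set Kc : ℝ := 1024 * Bm * r ^ (-(1:ℝ)/2) with hKcdef
  have hKcpos : 0 < Kc := by
    rw [hKcdef]
    positivity
  have hint1 : IntervalIntegrable (fun x => iteratedDeriv 3 FF x * EE x) volume 0 b :=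
    ((hFFc 3).mul hEEcont).intervalIntegrable 0 b
  have hint2 : IntervalIntegrable (fun x => iteratedDeriv 3 FF x * EE x) volume b 2 :=
    ((hFFc 3).mul hEEcont).intervalIntegrable b 2
  have hintsplit : (∫ x in (0:ℝ)..2, iteratedDeriv 3 FF x * EE x)
      = (∫ x in (0:ℝ)..b, iteratedDeriv 3 FF x * EE x)
        + ∫ x in b..2, iteratedDeriv 3 FF x * EE x :=
    (intervalIntegral.integral_add_adjacent_intervals hint1 hint2).symm
  have hfirst : (∫ x in (0:ℝ)..b, iteratedDeriv 3 FF x * EE x) = 0 := by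
    have hbae : ∀ᵐ (x:ℝ) ∂(volume : Measure ℝ), x ≠ b := by
      have hset : {x : ℝ | ¬ x ≠ b} = {b} := by ext; simp
      rw [MeasureTheory.ae_iff, hset]
      exact measure_singleton b
    have hae : ∀ᵐ x ∂(volume : Measure ℝ), x ∈ Set.uIoc (0:ℝ) b →
        iteratedDeriv 3 FF x * EE x = 0 := by
      filter_upwards [hbae] with x hxb hxmem
      rw [Set.uIoc_of_le hb0.le] at hxmem
      have hxlt : x < b := lt_of_le_of_ne hxmem.2 hxb
      have h0 : iteratedDeriv 3 FF x = 0 := by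
        rw [(hFIio.iteratedDeriv_of_isOpen isOpen_Iio 3) hxlt, itD_zero_fun]
      rw [h0, zero_mul]
    rw [intervalIntegral.integral_congr_ae hae]
    simp
  have hbval : b ^ (-(1:ℝ)/2) = (2*r) ^ ((1:ℝ)/2) := by
    rw [hbdef, one_div, show (-(1:ℝ)/2) = -((1:ℝ)/2) by norm_num,
      Real.inv_rpow (by positivity), Real.rpow_neg (by positivity), inv_inv]
  have hsecond : ‖∫ x in b..2, iteratedDeriv 3 FF x * EE x‖ ≤ Kc * (2 * (2*r) ^ ((1:ℝ)/2)) := by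
    have hgcont : ContinuousOn (fun x : ℝ => Kc * x ^ (-(3:ℝ)/2)) (Set.uIcc b 2) := by
      apply ContinuousOn.mul continuousOn_const
      apply ContinuousOn.rpow_const continuousOn_id
      intro x hx
      left
      rw [Set.uIcc_of_le (by linarith : b ≤ 2)] at hx
      exact ne_of_gt (lt_of_lt_of_le hb0 hx.1)
    have hgint : IntervalIntegrable (fun x : ℝ => Kc * x ^ (-(3:ℝ)/2)) volume b 2 :=
      hgcont.intervalIntegrable
    have hpt : ∀ t ∈ Set.uIoc b 2, ‖iteratedDeriv 3 FF t * EE t‖ ≤ Kc * t ^ (-(3:ℝ)/2) := by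
      intro t ht
      rw [Set.uIoc_of_le (by linarith : b ≤ 2)] at ht
      rcases le_or_gt t 1 with ht1 | ht1
      · rw [norm_mul, hEnorm t, mul_one]
        exact hFFb t ⟨hb0.trans ht.1, ht1⟩
      · have h0 : iteratedDeriv 3 FF t = 0 := by
          rw [(hFIoi.iteratedDeriv_of_isOpen isOpen_Ioi 3) ht1, itD_zero_fun]
        rw [h0, zero_mul, norm_zero]
        have := Real.rpow_nonneg (show (0:ℝ) ≤ t by linarith) (-(3:ℝ)/2)
        positivity
    have hle := intervalIntegral.norm_integral_le_abs_of_norm_le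
      (f := fun x => iteratedDeriv 3 FF x * EE x) (g := fun x : ℝ => Kc * x ^ (-(3:ℝ)/2))
      ((MeasureTheory.ae_restrict_iff' measurableSet_uIoc).2 (Filter.Eventually.of_forall hpt))
      hgint
    refine hle.trans ?_
    have hval : (∫ x in b..2, Kc * x ^ (-(3:ℝ)/2))
        = Kc * (((2:ℝ) ^ (-(3:ℝ)/2 + 1) - b ^ (-(3:ℝ)/2 + 1)) / (-(3:ℝ)/2 + 1)) := by
      rw [intervalIntegral.integral_const_mul, integral_rpow (Or.inr ⟨by norm_num, by
        rw [Set.uIcc_of_le (by linarith : b ≤ 2)]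
        rintro ⟨hc1', hc2'⟩
        linarith⟩)]
    rw [hval, show (-(3:ℝ)/2 + 1) = -(1:ℝ)/2 by norm_num]
    have hb12 : (1:ℝ) ≤ b ^ (-(1:ℝ)/2) := by
      rw [hbval]
      refine Real.one_le_rpow (by linarith) (by norm_num)
    have h212 : (0:ℝ) ≤ (2:ℝ) ^ (-(1:ℝ)/2) := Real.rpow_nonneg (by norm_num) _
    have habs : |Kc * (((2:ℝ) ^ (-(1:ℝ)/2) - b ^ (-(1:ℝ)/2)) / (-(1:ℝ)/2))|
        = Kc * ((b ^ (-(1:ℝ)/2) - (2:ℝ) ^ (-(1:ℝ)/2)) * 2) := by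
      rw [abs_of_nonneg]
      · ring
      · have h2b : (2:ℝ) ^ (-(1:ℝ)/2) ≤ 1 := by
          refine Real.rpow_le_one_of_one_le_of_nonpos (by norm_num) (by norm_num)
        nlinarith
    rw [habs, hbval]
    nlinarith [Real.rpow_nonneg (show (0:ℝ) ≤ 2*r by linarith) ((1:ℝ)/2), h212, hKcpos]
  have hJ3 : ‖∫ x in (0:ℝ)..2, iteratedDeriv 3 FF x * EE x‖ ≤ 3072 * Bm := by
    rw [hintsplit, hfirst, zero_add]
    refine hsecond.trans ?_
    have h2r : (2*r) ^ ((1:ℝ)/2) = 2^((1:ℝ)/2) * r^((1:ℝ)/2) := Real.mul_rpow (by norm_num) hr.le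
    have hrr : r ^ (-(1:ℝ)/2) * r ^ ((1:ℝ)/2) = 1 := by
      rw [← Real.rpow_add hr]; norm_num
    have hsqrt2 : (2:ℝ) ^ ((1:ℝ)/2) ≤ 3/2 := by
      have hsq : ((2:ℝ) ^ ((1:ℝ)/2))^(2:ℕ) = 2 := by
        rw [← Real.rpow_natCast ((2:ℝ)^((1:ℝ)/2)) 2, ← Real.rpow_mul (by norm_num)]
        norm_num
      nlinarith [Real.rpow_nonneg (show (0:ℝ) ≤ 2 by norm_num) ((1:ℝ)/2)]
    calc Kc * (2 * (2*r)^((1:ℝ)/2))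
        = 2048 * Bm * (2:ℝ)^((1:ℝ)/2) * (r^(-(1:ℝ)/2) * r^((1:ℝ)/2)) := by
          rw [h2r, hKcdef]; ring
      _ = 2048 * Bm * (2:ℝ)^((1:ℝ)/2) := by rw [hrr, mul_one]
      _ ≤ 3072 * Bm := by nlinarith [hBmpos, hsqrt2]
  -- final assembly
  have hnorm : ‖∫ l in Set.Ioi (0:ℝ), Complex.exp (Complex.I * ((l * r:ℝ):ℂ)) * ω (l*r) *
      ρ (l*s) * (l:ℂ)^2 * ((χ l:ℝ):ℂ)‖ ≤ (r⁻¹)^3 * (3072 * Bm) := by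
    rw [hI0eq, hchain]
    rw [norm_mul, norm_neg, hc1, norm_mul, norm_neg, hc1, norm_mul, norm_neg, hc1]
    have hrinv : (0:ℝ) ≤ r⁻¹ := by positivity
    calc r⁻¹ * (r⁻¹ * (r⁻¹ * ‖∫ x in (0:ℝ)..2, iteratedDeriv 3 FF x * EE x‖))
        ≤ r⁻¹ * (r⁻¹ * (r⁻¹ * (3072 * Bm))) := by
          exact mul_le_mul_of_nonneg_left (mul_le_mul_of_nonneg_left
            (mul_le_mul_of_nonneg_left hJ3 hrinv) hrinv) hrinv
      _ = (r⁻¹)^3 * (3072 * Bm) := by ring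
  rw [le_div_iff₀ (by positivity : 0 < r * (1 + (r+s)^2))]
  have h13 : 1 + (r+s)^2 ≤ 13 * r^2 := by nlinarith
  have hcube : (r⁻¹)^3 * r^3 = 1 := by
    rw [← mul_pow, inv_mul_cancel₀ hr.ne', one_pow]
  calc ‖∫ l in Set.Ioi (0:ℝ), Complex.exp (Complex.I * ((l * r:ℝ):ℂ)) * ω (l*r) *
        ρ (l*s) * (l:ℂ)^2 * ((χ l:ℝ):ℂ)‖ * (r * (1 + (r+s)^2))
      ≤ ((r⁻¹)^3 * (3072 * Bm)) * (r * (13 * r^2)) := by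
        refine mul_le_mul hnorm (mul_le_mul_of_nonneg_left h13 hr.le) (by positivity)
          (by positivity)
    _ = 39936 * Bm * ((r⁻¹)^3 * r^3) := by ring
    _ = 39936 * Bm := by rw [hcube, mul_one]
end

section
/- Let λ₁ ∈ (0, 1/2] and let χ : ℝ → [0,1] be a smooth function supported in [0, 2λ₁] with bounded derivatives of all orders. Let ω₁, ω₂ : (0, ∞) → ℂ be smooth functions with ω_i(z) = 0 for z ≤ 1/2 and satisfying |ω_i^{(j)}(z)| ≤ z^{−1/2−j} for j = 0, 1, 2, 3 and all z > 0 (i = 1, 2). Then there exists a constant C (depending on χ) such that for all r, s ≥ 1: |∫₀^∞ e^{iλ(r−s)} ω₁(λr) ω₂(λs) λ χ(λ) dλ| ≤ C · s · (1 + log r) / ( r · ⟨r + s⟩ · ⟨r − s⟩ ). -/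
open MeasureTheory Real Filter

private lemma iteratedDeriv_zero_fun' (n : ℕ) : iteratedDeriv n (fun _ : ℝ => (0:ℂ)) = fun _ => 0 := by
  induction n with
  | zero => simp [iteratedDeriv_zero]
  | succ n ih => rw [iteratedDeriv_succ', show deriv (fun _ : ℝ => (0:ℂ)) = fun _ => (0:ℂ) by funext x; simp]; exact ih

private lemma smooth_glue {ω : ℝ → ℂ} (h1 : ContDiffOn ℝ (⊤ : ℕ∞) ω (Set.Ioi 0))
    (h0 : ∀ z : ℝ, z ≤ 1/2 → ω z = 0) : ContDiff ℝ (⊤ : ℕ∞) ω := by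
  rw [contDiff_iff_contDiffAt]
  intro x
  rcases lt_or_ge 0 x with hx | hx
  · exact h1.contDiffAt (isOpen_Ioi.mem_nhds hx)
  · have : ω =ᶠ[nhds x] fun _ => 0 := by
      filter_upwards [Iio_mem_nhds (show x < 1/2 by linarith)] with y hy
      exact h0 y (le_of_lt hy)
    exact (contDiffAt_const (c := (0:ℂ))).congr_of_eventuallyEq this

private lemma ibp_step {a : ℝ} (ha : a ≠ 0) {F : ℝ → ℂ} (hFsm : ContDiff ℝ (⊤ : ℕ∞) F)
    (h0 : F =ᶠ[nhds (0:ℝ)] fun _ => 0) (h2 : F =ᶠ[nhds (2:ℝ)] fun _ => 0) :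
    ‖∫ l in (0:ℝ)..2, Complex.exp (Complex.I * a * l) * F l‖
      = |a|⁻¹ * ‖∫ l in (0:ℝ)..2, Complex.exp (Complex.I * a * l) * deriv F l‖ := by
  set c : ℂ := Complex.I * a with hc
  have ha' : c ≠ 0 := by
    simp [hc, Complex.ext_iff, Complex.I_mul_re, Complex.I_mul_im, ha]
  have hE : ∀ l : ℝ, HasDerivAt (fun l : ℝ => Complex.exp (c * l)) (c * Complex.exp (c * l)) l := by
    intro l
    have h1 : HasDerivAt (fun z : ℂ => Complex.exp (c * z)) (c * Complex.exp (c * l)) (l : ℂ) := by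
      simpa [mul_comm] using ((hasDerivAt_id (l:ℂ)).const_mul c).cexp
    exact h1.comp_ofReal
  have hdF : ContDiff ℝ (⊤ : ℕ∞) (deriv F) := (contDiff_infty_iff_deriv.mp hFsm).2
  have hFd : ∀ l : ℝ, HasDerivAt F (deriv F l) l :=
    fun l => ((hFsm.differentiable (by simp)) l).hasDerivAt
  have hG : ∀ l : ℝ, HasDerivAt (fun l : ℝ => c⁻¹ * (Complex.exp (c * l) * F l))
      (Complex.exp (c * l) * F l + c⁻¹ * (Complex.exp (c * l) * deriv F l)) l := by
    intro l
    have := ((hE l).mul (hFd l)).const_mul c⁻¹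
    refine this.congr_deriv ?_
    linear_combination (Complex.exp (c * l) * F l) * inv_mul_cancel₀ ha'
  have hcont : Continuous fun l : ℝ => Complex.exp (c * l) * F l + c⁻¹ * (Complex.exp (c * l) * deriv F l) := by
    exact (((Complex.continuous_exp.comp (by continuity)).mul hFsm.continuous).add (continuous_const.mul ((Complex.continuous_exp.comp (by continuity)).mul hdF.continuous)))
  have hint := intervalIntegral.integral_eq_sub_of_hasDerivAt (f := fun l : ℝ => c⁻¹ * (Complex.exp (c * l) * F l))
    (fun x _ => hG x) (hcont.intervalIntegrable 0 2)
  have hF0 : F 0 = 0 := h0.eq_of_nhds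
  have hF2 : F 2 = 0 := h2.eq_of_nhds
  simp only [hF0, hF2, mul_zero, sub_zero, sub_self] at hint
  have hi1 : IntervalIntegrable (fun l : ℝ => Complex.exp (c * l) * F l) volume 0 2 :=
    (Continuous.mul (by continuity) hFsm.continuous).intervalIntegrable 0 2
  have hi2 : IntervalIntegrable (fun l : ℝ => Complex.exp (c * l) * deriv F l) volume 0 2 :=
    (Continuous.mul (by continuity) hdF.continuous).intervalIntegrable 0 2
  rw [intervalIntegral.integral_add hi1 (hi2.const_mul _), intervalIntegral.integral_const_mul] at hint
  have key : (∫ l in (0:ℝ)..2, Complex.exp (c * l) * F l)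
      = -(c⁻¹ * ∫ l in (0:ℝ)..2, Complex.exp (c * l) * deriv F l) := by linear_combination hint
  rw [key, norm_neg, norm_mul, norm_inv]
  congr 1
  simp [hc]

private lemma ibp_iter {a : ℝ} (ha : a ≠ 0) {F : ℝ → ℂ} (hFsm : ContDiff ℝ (⊤ : ℕ∞) F)
    (h0 : F =ᶠ[nhds (0:ℝ)] fun _ => 0) (h2 : F =ᶠ[nhds (2:ℝ)] fun _ => 0) (n : ℕ) :
    ‖∫ l in (0:ℝ)..2, Complex.exp (Complex.I * a * l) * F l‖
      = (|a|⁻¹) ^ n * ‖∫ l in (0:ℝ)..2, Complex.exp (Complex.I * a * l) * iteratedDeriv n F l‖ := by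
  induction n generalizing F with
  | zero => simp [iteratedDeriv_zero]
  | succ n ih =>
    have hdF : ContDiff ℝ (⊤ : ℕ∞) (deriv F) := (contDiff_infty_iff_deriv.mp hFsm).2
    have h0' : deriv F =ᶠ[nhds (0:ℝ)] fun _ => 0 := by
      have := h0.deriv; simpa using this
    have h2' : deriv F =ᶠ[nhds (2:ℝ)] fun _ => 0 := by
      have := h2.deriv; simpa using this
    rw [ibp_step ha hFsm h0 h2, ih hdF h0' h2']
    rw [iteratedDeriv_succ']
    ring

private lemma norm_exp_Ial (a l : ℝ) : ‖Complex.exp (Complex.I * a * l)‖ = 1 := by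
  have : Complex.I * a * l = ((a*l : ℝ) : ℂ) * Complex.I := by push_cast; ring
  rw [this, Complex.norm_exp_ofReal_mul_I]

private lemma norm_int_le {a : ℝ} {G : ℝ → ℂ} {φ : ℝ → ℝ} (hG : Continuous G)
    (hφ : IntervalIntegrable φ volume 0 2)
    (hbd : ∀ l ∈ Set.Icc (0:ℝ) 2, ‖G l‖ ≤ φ l) :
    ‖∫ l in (0:ℝ)..2, Complex.exp (Complex.I * a * l) * G l‖ ≤ ∫ l in (0:ℝ)..2, φ l := by
  have h1 : ‖∫ l in (0:ℝ)..2, Complex.exp (Complex.I * a * l) * G l‖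
      ≤ ∫ l in (0:ℝ)..2, ‖Complex.exp (Complex.I * a * l) * G l‖ :=
    intervalIntegral.norm_integral_le_integral_norm (by norm_num)
  refine h1.trans (intervalIntegral.integral_mono_on (by norm_num) ?_ hφ ?_)
  · exact ((Complex.continuous_exp.comp (by continuity)).mul hG).norm.intervalIntegrable 0 2
  · intro x hx
    rw [norm_mul, norm_exp_Ial, one_mul]
    exact hbd x hx

private lemma scaled_bound {ω : ℝ → ℂ} (hsm : ContDiff ℝ (⊤ : ℕ∞) ω)
    (hb : ∀ z : ℝ, 0 < z → ∀ j : ℕ, j ≤ 3 → ‖iteratedDeriv j ω z‖ ≤ z ^ (-(1:ℝ)/2 - j))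
    {r : ℝ} (hr : 1 ≤ r) {i : ℕ} (hi : i ≤ 3) {l : ℝ} (hl : 0 < l) :
    ‖iteratedDeriv i (fun l => ω (l * r)) l‖ ≤ l ^ (-(1:ℝ)/2 - i) * r ^ (-(1:ℝ)/2) := by
  have hr0 : (0:ℝ) < r := lt_of_lt_of_le one_pos hr
  have hfun : (fun l : ℝ => ω (l * r)) = fun l : ℝ => ω (r * l) := by
    funext x; rw [mul_comm]
  rw [hfun, iteratedDeriv_comp_const_smul (hsm.of_le (by exact_mod_cast le_top)) r]
  rw [norm_smul]
  have h1 : ‖iteratedDeriv i ω (r * l)‖ ≤ (r * l) ^ (-(1:ℝ)/2 - i) :=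
    hb (r * l) (by positivity) i hi
  have h2 : ‖r ^ i‖ = r ^ (i : ℝ) := by
    rw [Real.norm_eq_abs, abs_pow, abs_of_pos hr0, Real.rpow_natCast]
  calc ‖r ^ i‖ * ‖iteratedDeriv i ω (r * l)‖
      ≤ r ^ (i:ℝ) * (r * l) ^ (-(1:ℝ)/2 - i) := by
        rw [h2]; exact mul_le_mul_of_nonneg_left h1 (by positivity)
    _ = l ^ (-(1:ℝ)/2 - i) * r ^ (-(1:ℝ)/2) := by
        rw [Real.mul_rpow (le_of_lt hr0) (le_of_lt hl), ← mul_assoc, ← Real.rpow_add hr0,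
          show (i:ℝ) + (-(1:ℝ)/2 - i) = -(1:ℝ)/2 by ring, mul_comm]

private lemma iter_id_mul {χ : ℝ → ℝ} (hχ : ContDiff ℝ (⊤ : ℕ∞) χ) (k : ℕ) :
    iteratedDeriv k (fun l => l * χ l)
      = fun l => (k : ℝ) * iteratedDeriv (k-1) χ l + l * iteratedDeriv k χ l := by
  have hdiff : ∀ j : ℕ, Differentiable ℝ (iteratedDeriv j χ) := by
    intro j
    exact hχ.differentiable_iteratedDeriv j (by exact_mod_cast WithTop.coe_lt_top j)
  induction k with
  | zero => simp
  | succ k ih =>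
    rw [iteratedDeriv_succ, ih]
    funext l
    have h1 : HasDerivAt (fun l : ℝ => (k : ℝ) * iteratedDeriv (k-1) χ l)
        ((k : ℝ) * iteratedDeriv (k-1+1) χ l) l := by
      have := ((hdiff (k-1)) l).hasDerivAt
      simpa [iteratedDeriv_succ] using this.const_mul (k : ℝ)
    have h2 : HasDerivAt (fun l : ℝ => l * iteratedDeriv k χ l)
        (iteratedDeriv k χ l + l * iteratedDeriv (k+1) χ l) l := by
      have := (hasDerivAt_id' l).mul ((hdiff k) l).hasDerivAt
      exact this.congr_deriv (by rw [iteratedDeriv_succ, one_mul])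
    have := (h1.add h2).deriv
    refine this.trans ?_
    rcases Nat.eq_zero_or_pos k with hk | hk
    · subst hk; simp
    · have hk1 : k - 1 + 1 = k := Nat.succ_pred_eq_of_pos hk
      rw [hk1, show (k + 1 : ℕ) - 1 = k from rfl]
      push_cast
      ring

private lemma gC_eq {χ : ℝ → ℝ} :
    (fun l : ℝ => (l:ℂ) * (χ l : ℂ)) = Complex.ofRealLI ∘ (fun l : ℝ => l * χ l) := by
  funext l
  show (l:ℂ) * (χ l : ℂ) = ((l * χ l : ℝ) : ℂ)
  push_cast; ring

private lemma gC_norm_iter {χ : ℝ → ℝ} (hχ : ContDiff ℝ (⊤ : ℕ∞) χ) (k : ℕ) (l : ℝ) :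
    ‖iteratedDeriv k (fun l : ℝ => (l:ℂ) * (χ l : ℂ)) l‖
      = |(k : ℝ) * iteratedDeriv (k-1) χ l + l * iteratedDeriv k χ l| := by
  rw [gC_eq, ← norm_iteratedFDeriv_eq_norm_iteratedDeriv,
    Complex.ofRealLI.norm_iteratedFDeriv_comp_left (x := l)
      (show ContDiff ℝ (⊤:ℕ∞) (fun l : ℝ => l * χ l) from contDiff_id.mul hχ).contDiffAt (by exact_mod_cast le_top),
    norm_iteratedFDeriv_eq_norm_iteratedDeriv, iter_id_mul hχ k]
  rfl

private lemma inner_bound {ω₂ : ℝ → ℂ} {χ : ℝ → ℝ}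
    (hω₂sm : ContDiff ℝ (⊤ : ℕ∞) ω₂) (hχ : ContDiff ℝ (⊤ : ℕ∞) χ)
    (hχ01 : ∀ t, χ t ∈ Set.Icc (0:ℝ) 1)
    {B : ℝ} (hB1 : 1 ≤ B) (hB : ∀ k : ℕ, k ≤ 3 → ∀ t, |iteratedDeriv k χ t| ≤ B)
    (hω₂b : ∀ z : ℝ, 0 < z → ∀ j : ℕ, j ≤ 3 → ‖iteratedDeriv j ω₂ z‖ ≤ z ^ (-(1:ℝ)/2 - j))
    {s : ℝ} (hs : 1 ≤ s) {q : ℕ} (hq : q ≤ 3) {l : ℝ} (hl0 : 0 < l) (hl1 : l ≤ 1) :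
    ‖iteratedDeriv q (fun l : ℝ => ω₂ (l * s) * ((l:ℂ) * (χ l : ℂ))) l‖
      ≤ 2^q * (4*B) * (l ^ ((1:ℝ)/2 - q) * s ^ (-(1:ℝ)/2)) := by
  have hgsm : ContDiff ℝ (⊤ : ℕ∞) (fun l : ℝ => (l:ℂ) * (χ l : ℂ)) := by
    rw [gC_eq]
    exact Complex.ofRealLI.toContinuousLinearMap.contDiff.comp (contDiff_id.mul hχ)
  have hAsm : ContDiff ℝ (⊤ : ℕ∞) (fun l : ℝ => ω₂ (l * s)) :=
    hω₂sm.comp (contDiff_id.mul contDiff_const)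
  have h := norm_iteratedFDeriv_mul_le (𝕜 := ℝ) (f := fun l : ℝ => ω₂ (l * s))
    (g := fun l : ℝ => (l:ℂ) * (χ l : ℂ)) (N := (⊤ : ℕ∞)) hAsm hgsm l
    (n := q) (by exact_mod_cast le_top)
  simp only [norm_iteratedFDeriv_eq_norm_iteratedDeriv] at h
  refine (le_trans h ?_)
  have hterm : ∀ j ∈ Finset.range (q+1),
      (q.choose j : ℝ) * ‖iteratedDeriv j (fun l : ℝ => ω₂ (l * s)) l‖ *
        ‖iteratedDeriv (q - j) (fun l : ℝ => (l:ℂ) * (χ l : ℂ)) l‖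
      ≤ (q.choose j : ℝ) * ((4*B) * (l ^ ((1:ℝ)/2 - q) * s ^ (-(1:ℝ)/2))) := by
    intro j hj
    have hjq : j ≤ q := Nat.lt_succ_iff.mp (Finset.mem_range.mp hj)
    have hA : ‖iteratedDeriv j (fun l : ℝ => ω₂ (l * s)) l‖ ≤ l ^ (-(1:ℝ)/2 - j) * s ^ (-(1:ℝ)/2) :=
      scaled_bound hω₂sm hω₂b hs (le_trans hjq hq) hl0
    rcases Nat.eq_zero_or_pos (q - j) with hk | hk
    · -- k = 0, so j = q; use ‖gC l‖ ≤ l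
      have hjq' : j = q := by omega
      have hg0 : ‖iteratedDeriv (q - j) (fun l : ℝ => (l:ℂ) * (χ l : ℂ)) l‖ ≤ l := by
        rw [hk, gC_norm_iter hχ 0 l]
        simp only [Nat.cast_zero, zero_mul, zero_add, Nat.zero_sub]
        rw [abs_mul, abs_of_pos hl0]
        have := (hχ01 l).2
        have h0 := (hχ01 l).1
        calc l * |χ l| ≤ l * 1 := by
              apply mul_le_mul_of_nonneg_left _ (le_of_lt hl0)
              rw [abs_of_nonneg h0]; exact this
          _ = l := mul_one l
      calc (q.choose j : ℝ) * ‖iteratedDeriv j (fun l : ℝ => ω₂ (l * s)) l‖ *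
            ‖iteratedDeriv (q - j) (fun l : ℝ => (l:ℂ) * (χ l : ℂ)) l‖
          ≤ (q.choose j : ℝ) * (l ^ (-(1:ℝ)/2 - j) * s ^ (-(1:ℝ)/2)) * l := by
            apply mul_le_mul (mul_le_mul_of_nonneg_left hA (by positivity)) hg0
              (norm_nonneg _) (by positivity)
        _ = (q.choose j : ℝ) * (l ^ ((1:ℝ)/2 - q) * s ^ (-(1:ℝ)/2)) := by
            subst hjq'
            have hll : l ^ (-(1:ℝ)/2 - (j:ℝ)) * l = l ^ ((1:ℝ)/2 - (j:ℝ)) := by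
              rw [← Real.rpow_add_one (ne_of_gt hl0)]
              congr 1
              ring
            linear_combination ((j.choose j : ℝ) * s ^ (-(1:ℝ)/2)) * hll
        _ ≤ (q.choose j : ℝ) * ((4*B) * (l ^ ((1:ℝ)/2 - q) * s ^ (-(1:ℝ)/2))) := by
            apply mul_le_mul_of_nonneg_left _ (by positivity)
            nlinarith [Real.rpow_pos_of_pos hl0 ((1:ℝ)/2 - q), Real.rpow_pos_of_pos
              (lt_of_lt_of_le one_pos hs) (-(1:ℝ)/2), mul_pos (Real.rpow_pos_of_pos hl0 ((1:ℝ)/2 - q)) (Real.rpow_pos_of_pos (lt_of_lt_of_le one_pos hs) (-(1:ℝ)/2))]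
    · -- k ≥ 1
      have hk3 : q - j ≤ 3 := le_trans (Nat.sub_le _ _) hq
      have hg : ‖iteratedDeriv (q - j) (fun l : ℝ => (l:ℂ) * (χ l : ℂ)) l‖ ≤ 4*B := by
        rw [gC_norm_iter hχ _ l]
        have h1 := hB (q - j - 1) (by omega) l
        have h2 := hB (q - j) hk3 l
        have habs : |l| ≤ 1 := abs_le.mpr ⟨by linarith, hl1⟩
        calc |((q-j : ℕ) : ℝ) * iteratedDeriv (q-j-1) χ l + l * iteratedDeriv (q-j) χ l|
            ≤ |((q-j : ℕ) : ℝ)| * |iteratedDeriv (q-j-1) χ l| + |l| * |iteratedDeriv (q-j) χ l| := by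
              refine le_trans (abs_add_le _ _) (by rw [abs_mul, abs_mul])
          _ ≤ 3 * B + 1 * B := by
              apply add_le_add
              · apply mul_le_mul _ h1 (abs_nonneg _) (by norm_num)
                rw [abs_of_nonneg (by positivity)]
                exact_mod_cast hk3
              · exact mul_le_mul habs h2 (abs_nonneg _) (by norm_num)
          _ = 4*B := by ring
      have hl' : l ^ (-(1:ℝ)/2 - j) ≤ l ^ ((1:ℝ)/2 - q) := by
        apply Real.rpow_le_rpow_of_exponent_ge hl0 hl1
        have : (j:ℝ) + 1 ≤ (q:ℝ) := by exact_mod_cast Nat.add_one_le_iff.mpr (by omega)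
        linarith
      calc (q.choose j : ℝ) * ‖iteratedDeriv j (fun l : ℝ => ω₂ (l * s)) l‖ *
            ‖iteratedDeriv (q - j) (fun l : ℝ => (l:ℂ) * (χ l : ℂ)) l‖
          ≤ (q.choose j : ℝ) * (l ^ ((1:ℝ)/2 - q) * s ^ (-(1:ℝ)/2)) * (4*B) := by
            apply mul_le_mul _ hg (norm_nonneg _) (by positivity)
            apply mul_le_mul_of_nonneg_left (hA.trans _) (by positivity)
            exact mul_le_mul_of_nonneg_right hl' (by positivity)
        _ = (q.choose j : ℝ) * ((4*B) * (l ^ ((1:ℝ)/2 - q) * s ^ (-(1:ℝ)/2))) := by ring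
  refine le_trans (Finset.sum_le_sum hterm) ?_
  rw [← Finset.sum_mul]
  have : (∑ j ∈ Finset.range (q+1), (q.choose j : ℝ)) = 2^q := by
    rw [← Nat.cast_sum]
    norm_cast
    exact Nat.sum_range_choose q
  rw [this]
  exact le_of_eq (by ring)

private lemma F_bound {ω₁ ω₂ : ℝ → ℂ} {χ : ℝ → ℝ}
    (hω₁sm : ContDiff ℝ (⊤ : ℕ∞) ω₁) (hω₂sm : ContDiff ℝ (⊤ : ℕ∞) ω₂)
    (hχ : ContDiff ℝ (⊤ : ℕ∞) χ) (hχ01 : ∀ t, χ t ∈ Set.Icc (0:ℝ) 1)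
    {B : ℝ} (hB1 : 1 ≤ B) (hB : ∀ k : ℕ, k ≤ 3 → ∀ t, |iteratedDeriv k χ t| ≤ B)
    (hω₁b : ∀ z : ℝ, 0 < z → ∀ j : ℕ, j ≤ 3 → ‖iteratedDeriv j ω₁ z‖ ≤ z ^ (-(1:ℝ)/2 - j))
    (hω₂b : ∀ z : ℝ, 0 < z → ∀ j : ℕ, j ≤ 3 → ‖iteratedDeriv j ω₂ z‖ ≤ z ^ (-(1:ℝ)/2 - j))
    {r s : ℝ} (hr : 1 ≤ r) (hs : 1 ≤ s)
    {n : ℕ} (hn : n ≤ 3) {l : ℝ} (hl0 : 0 < l) (hl1 : l ≤ 1) :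
    ‖iteratedDeriv n (fun l : ℝ => ω₁ (l * r) * (ω₂ (l * s) * ((l:ℂ) * (χ l : ℂ)))) l‖
      ≤ 256 * B * l ^ (-(n:ℝ)) * (r ^ (-(1:ℝ)/2) * s ^ (-(1:ℝ)/2)) := by
  have hgsm : ContDiff ℝ (⊤ : ℕ∞) (fun l : ℝ => (l:ℂ) * (χ l : ℂ)) := by
    rw [gC_eq]
    exact Complex.ofRealLI.toContinuousLinearMap.contDiff.comp (contDiff_id.mul hχ)
  have hA1sm : ContDiff ℝ (⊤ : ℕ∞) (fun l : ℝ => ω₁ (l * r)) :=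
    hω₁sm.comp (contDiff_id.mul contDiff_const)
  have hA2sm : ContDiff ℝ (⊤ : ℕ∞) (fun l : ℝ => ω₂ (l * s)) :=
    hω₂sm.comp (contDiff_id.mul contDiff_const)
  have h := norm_iteratedFDeriv_mul_le (𝕜 := ℝ) (f := fun l : ℝ => ω₁ (l * r))
    (g := fun l : ℝ => ω₂ (l * s) * ((l:ℂ) * (χ l : ℂ))) (N := (⊤ : ℕ∞))
    hA1sm (hA2sm.mul hgsm) l (n := n) (by exact_mod_cast le_top)
  simp only [norm_iteratedFDeriv_eq_norm_iteratedDeriv] at h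
  refine le_trans h ?_
  have hterm : ∀ i ∈ Finset.range (n+1),
      (n.choose i : ℝ) * ‖iteratedDeriv i (fun l : ℝ => ω₁ (l * r)) l‖ *
        ‖iteratedDeriv (n - i) (fun l : ℝ => ω₂ (l * s) * ((l:ℂ) * (χ l : ℂ))) l‖
      ≤ (n.choose i : ℝ) * (8 * (4*B) * (l ^ (-(n:ℝ)) * (r ^ (-(1:ℝ)/2) * s ^ (-(1:ℝ)/2)))) := by
    intro i hi
    have hin : i ≤ n := Nat.lt_succ_iff.mp (Finset.mem_range.mp hi)
    have hA : ‖iteratedDeriv i (fun l : ℝ => ω₁ (l * r)) l‖ ≤ l ^ (-(1:ℝ)/2 - i) * r ^ (-(1:ℝ)/2) :=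
      scaled_bound hω₁sm hω₁b hr (le_trans hin hn) hl0
    have hInner := inner_bound hω₂sm hχ hχ01 hB1 hB hω₂b hs (q := n - i)
      (le_trans (Nat.sub_le _ _) hn) hl0 hl1
    have h2pow : (2:ℝ) ^ (n - i) ≤ 8 := by
      calc (2:ℝ) ^ (n-i) ≤ 2 ^ 3 := by
            apply pow_le_pow_right₀ (by norm_num) (le_trans (Nat.sub_le _ _) hn)
        _ = 8 := by norm_num
    calc (n.choose i : ℝ) * ‖iteratedDeriv i (fun l : ℝ => ω₁ (l * r)) l‖ *
          ‖iteratedDeriv (n - i) (fun l : ℝ => ω₂ (l * s) * ((l:ℂ) * (χ l : ℂ))) l‖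
        ≤ (n.choose i : ℝ) * (l ^ (-(1:ℝ)/2 - i) * r ^ (-(1:ℝ)/2)) *
            (2^(n-i) * (4*B) * (l ^ ((1:ℝ)/2 - (n-i : ℕ)) * s ^ (-(1:ℝ)/2))) := by
          apply mul_le_mul (mul_le_mul_of_nonneg_left hA (by positivity)) hInner
            (norm_nonneg _) (by positivity)
      _ ≤ (n.choose i : ℝ) * (l ^ (-(1:ℝ)/2 - i) * r ^ (-(1:ℝ)/2)) *
            (8 * (4*B) * (l ^ ((1:ℝ)/2 - (n-i : ℕ)) * s ^ (-(1:ℝ)/2))) := by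
          apply mul_le_mul_of_nonneg_left _ (by positivity)
          apply mul_le_mul_of_nonneg_right _ (by positivity)
          apply mul_le_mul_of_nonneg_right h2pow (by positivity)
      _ = (n.choose i : ℝ) * (8 * (4*B) * (l ^ (-(n:ℝ)) * (r ^ (-(1:ℝ)/2) * s ^ (-(1:ℝ)/2)))) := by
          have hll : l ^ (-(1:ℝ)/2 - (i:ℝ)) * l ^ ((1:ℝ)/2 - ((n-i : ℕ):ℝ)) = l ^ (-(n:ℝ)) := by
            rw [← Real.rpow_add hl0]
            congr 1
            have : ((n - i : ℕ) : ℝ) = (n : ℝ) - i := by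
              have := Nat.cast_sub hin (R := ℝ); linarith [this]
            rw [this]; ring
          linear_combination ((n.choose i : ℝ) * 8 * (4*B) * r ^ (-(1:ℝ)/2) * s ^ (-(1:ℝ)/2)) * hll
  refine le_trans (Finset.sum_le_sum hterm) ?_
  rw [← Finset.sum_mul]
  have hsum : (∑ i ∈ Finset.range (n+1), (n.choose i : ℝ)) = 2^n := by
    rw [← Nat.cast_sum]; norm_cast; exact Nat.sum_range_choose n
  rw [hsum]
  have h2n : (2:ℝ)^n ≤ 8 := by
    calc (2:ℝ)^n ≤ 2^3 := by apply pow_le_pow_right₀ (by norm_num) hn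
      _ = 8 := by norm_num
  calc (2:ℝ)^n * (8 * (4*B) * (l ^ (-(n:ℝ)) * (r ^ (-(1:ℝ)/2) * s ^ (-(1:ℝ)/2))))
      ≤ 8 * (8 * (4*B) * (l ^ (-(n:ℝ)) * (r ^ (-(1:ℝ)/2) * s ^ (-(1:ℝ)/2)))) := by
        apply mul_le_mul_of_nonneg_right h2n (by positivity)
    _ = 256 * B * l ^ (-(n:ℝ)) * (r ^ (-(1:ℝ)/2) * s ^ (-(1:ℝ)/2)) := by ring

private lemma indicator_intable {lam0 : ℝ} (h0 : 0 < lam0) (h1 : lam0 ≤ 1) (c : ℝ) (n : ℕ) :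
    IntervalIntegrable ((Set.Icc lam0 1).indicator (fun l => c * l ^ (-(n:ℝ)))) volume 0 2 := by
  have hco : IntegrableOn (fun l => c * l ^ (-(n:ℝ))) (Set.Icc lam0 1) := by
    apply ContinuousOn.integrableOn_Icc
    apply ContinuousOn.mul continuousOn_const
    intro x hx
    exact (Real.continuousAt_rpow_const x _ (Or.inl (ne_of_gt (lt_of_lt_of_le h0 hx.1)))).continuousWithinAt
  have := hco.integrable_indicator measurableSet_Icc
  exact this.intervalIntegrable

private lemma indicator_int_eq {lam0 : ℝ} (h0 : 0 < lam0) (h1 : lam0 ≤ 1) (c : ℝ) (n : ℕ) :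
    ∫ l in (0:ℝ)..2, ((Set.Icc lam0 1).indicator (fun l => c * l ^ (-(n:ℝ)))) l
      = c * ∫ l in lam0..1, l ^ (-(n:ℝ)) := by
  rw [intervalIntegral.integral_of_le (by norm_num : (0:ℝ) ≤ 2),
    setIntegral_indicator measurableSet_Icc,
    show Set.Ioc (0:ℝ) 2 ∩ Set.Icc lam0 1 = Set.Icc lam0 1 by
      apply Set.inter_eq_self_of_subset_right
      intro x hx
      exact ⟨lt_of_lt_of_le h0 hx.1, le_trans hx.2 (by norm_num)⟩,
    MeasureTheory.integral_Icc_eq_integral_Ioc,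
    ← intervalIntegral.integral_of_le h1, intervalIntegral.integral_const_mul]

private lemma J0_le {lam0 : ℝ} (h0 : 0 < lam0) (h1 : lam0 ≤ 1) :
    ∫ l in lam0..1, l ^ (-((0:ℕ):ℝ)) ≤ 1 := by
  simp only [Nat.cast_zero, neg_zero, Real.rpow_zero]
  rw [intervalIntegral.integral_const]
  simp
  linarith

private lemma J1_le {lam0 : ℝ} (h0 : 0 < lam0) (h1 : lam0 ≤ 1) :
    ∫ l in lam0..1, l ^ (-((1:ℕ):ℝ)) ≤ Real.log (1/lam0) := by
  have hne : (0:ℝ) ∉ Set.uIcc lam0 1 := by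
    rw [Set.uIcc_of_le h1]
    intro hmem
    exact absurd hmem.1 (not_le.mpr h0)
  have heq : ∫ l in lam0..1, l ^ (-((1:ℕ):ℝ)) = ∫ l in lam0..1, l⁻¹ := by
    apply intervalIntegral.integral_congr
    intro x hx
    rw [Set.uIcc_of_le h1] at hx
    have hx0 : 0 < x := lt_of_lt_of_le h0 hx.1
    show x ^ (-((1:ℕ):ℝ)) = x⁻¹
    rw [show -((1:ℕ):ℝ) = ((-1 : ℤ) : ℝ) by norm_num, Real.rpow_intCast, zpow_neg_one]
  rw [heq, integral_inv hne]

private lemma J3_le {lam0 : ℝ} (h0 : 0 < lam0) (h1 : lam0 ≤ 1) :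
    ∫ l in lam0..1, l ^ (-((3:ℕ):ℝ)) ≤ lam0 ^ (-(2:ℝ)) / 2 := by
  have hne : (0:ℝ) ∉ Set.uIcc lam0 1 := by
    rw [Set.uIcc_of_le h1]
    intro hmem
    exact absurd hmem.1 (not_le.mpr h0)
  rw [integral_rpow (Or.inr ⟨by norm_num, hne⟩)]
  have h2 : (1:ℝ) ^ (-((3:ℕ):ℝ) + 1) = 1 := Real.one_rpow _
  rw [h2]
  have h3 : -((3:ℕ):ℝ) + 1 = -2 := by norm_num
  rw [h3]
  have hpos : 0 < lam0 ^ (-(2:ℝ)) := Real.rpow_pos_of_pos h0 _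
  have h4 : (1 - lam0 ^ (-(2:ℝ))) / (-2 : ℝ) = (lam0 ^ (-(2:ℝ)) - 1) / 2 := by ring
  rw [h4]
  linarith


private lemma arith_sq {x : ℝ} (hx : 0 ≤ x) : 1 + x^2 ≤ (1+x)^2 := by nlinarith

private lemma arith_half {r s : ℝ} (hr0 : 0 < r) (hrs : r ≤ 2*s) : (r/2)^2 ≤ r*s := by nlinarith

private lemma arith_caseC {r s : ℝ} (h : 2*s < r) (hs : 0 < s) : r^2 ≤ 4*(r-s)^2 := by nlinarith

private lemma arith1 {B s L : ℝ} (hB : 0 < B) (hs : 0 < s) (hL : 1 ≤ L) :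
    4096*B*s ≤ 12288*B*s*L := by nlinarith [mul_pos hB hs, mul_nonneg (mul_pos hB hs).le (sub_nonneg.mpr hL)]

private lemma arith2 {B s L : ℝ} (hB : 0 < B) (hs : 0 < s) (hL : 1 ≤ L) :
    4096*B*s*L ≤ 12288*B*s*L := by nlinarith [mul_pos hB hs, mul_nonneg (mul_nonneg (mul_pos hB hs).le (sub_nonneg.mpr hL)) (le_trans zero_le_one hL)]

private lemma arith3 {B s L X : ℝ} (hB : 0 < B) (hs : 0 < s) (hL : 1 ≤ L) (hX : 0 ≤ X) :
    12288*B*s*X ≤ 12288*B*s*L*X := by nlinarith [mul_nonneg (mul_nonneg (mul_pos hB hs).le (sub_nonneg.mpr hL)) hX]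

set_option maxHeartbeats 1600000 in
/-- the oscillatory integral bound
`|∫₀^∞ e^{iλ(r-s)} ω₁(λr) ω₂(λs) λ χ(λ) dλ| ≤ C s (1 + log r) / (r ⟨r+s⟩ ⟨r-s⟩)` for
`r, s ≥ 1`, where the `ωᵢ` are smooth on `(0,∞)`, vanish on `(0, 1/2]`, and satisfy
`|ωᵢ^{(j)}(z)| ≤ z^{-1/2-j}` for `j = 0,1,2,3`. -/
theorem stmt_17 (lam₁ : ℝ) (hlam₁ : lam₁ ∈ Set.Ioc (0:ℝ) (1/2))
    (χ : ℝ → ℝ) (hχ : ContDiff ℝ (⊤ : ℕ∞) χ)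
    (hχ01 : ∀ t, χ t ∈ Set.Icc (0:ℝ) 1)
    (hχsupp : ∀ t : ℝ, t ∉ Set.Icc (0:ℝ) (2 * lam₁) → χ t = 0)
    (hχbdd : ∀ n : ℕ, ∃ B : ℝ, ∀ t : ℝ, |iteratedDeriv n χ t| ≤ B)
    (ω₁ ω₂ : ℝ → ℂ)
    (hω₁ : ContDiffOn ℝ (⊤ : ℕ∞) ω₁ (Set.Ioi 0))
    (hω₂ : ContDiffOn ℝ (⊤ : ℕ∞) ω₂ (Set.Ioi 0))
    (hω₁0 : ∀ z : ℝ, z ≤ 1/2 → ω₁ z = 0) (hω₂0 : ∀ z : ℝ, z ≤ 1/2 → ω₂ z = 0)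
    (hω₁b : ∀ z : ℝ, 0 < z → ∀ j : ℕ, j ≤ 3 →
      ‖iteratedDeriv j ω₁ z‖ ≤ z ^ (-(1:ℝ)/2 - j))
    (hω₂b : ∀ z : ℝ, 0 < z → ∀ j : ℕ, j ≤ 3 →
      ‖iteratedDeriv j ω₂ z‖ ≤ z ^ (-(1:ℝ)/2 - j)) :
    ∃ C : ℝ, 0 < C ∧ ∀ r s : ℝ, 1 ≤ r → 1 ≤ s →
      ‖∫ l in Set.Ioi (0:ℝ),
          Complex.exp (Complex.I * (l * (r - s) : ℝ)) * ω₁ (l * r) * ω₂ (l * s) *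
            (l : ℂ) * (χ l : ℂ)‖ ≤
        C * s * (1 + Real.log r) /
          (r * Real.sqrt (1 + (r + s) ^ 2) * Real.sqrt (1 + (r - s) ^ 2)) := by
  obtain ⟨B0, hB0⟩ := hχbdd 0
  obtain ⟨B1', hB1'⟩ := hχbdd 1
  obtain ⟨B2', hB2'⟩ := hχbdd 2
  obtain ⟨B3', hB3'⟩ := hχbdd 3
  set B : ℝ := max 1 (max (max B0 B1') (max B2' B3')) with hBdef
  have hB1 : 1 ≤ B := le_max_left _ _
  have hB0pos : 0 < B := lt_of_lt_of_le one_pos hB1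
  have hB : ∀ k : ℕ, k ≤ 3 → ∀ t, |iteratedDeriv k χ t| ≤ B := by
    intro k hk t
    interval_cases k
    · exact le_trans (hB0 t) (le_trans (le_max_left _ _) (le_trans (le_max_left _ _) (le_max_right _ _)))
    · exact le_trans (hB1' t) (le_trans (le_max_right _ _) (le_trans (le_max_left _ _) (le_max_right _ _)))
    · exact le_trans (hB2' t) (le_trans (le_max_left _ _) (le_trans (le_max_right _ _) (le_max_right _ _)))
    · exact le_trans (hB3' t) (le_trans (le_max_right _ _) (le_trans (le_max_right _ _) (le_max_right _ _)))
  have hω₁sm : ContDiff ℝ (⊤ : ℕ∞) ω₁ := smooth_glue hω₁ hω₁0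
  have hω₂sm : ContDiff ℝ (⊤ : ℕ∞) ω₂ := smooth_glue hω₂ hω₂0
  refine ⟨12288 * B, by positivity, ?_⟩
  intro r s hr hs
  have hr0 : (0:ℝ) < r := lt_of_lt_of_le one_pos hr
  have hs0 : (0:ℝ) < s := lt_of_lt_of_le one_pos hs
  set m : ℝ := min r s with hmdef
  have hm1 : 1 ≤ m := le_min hr hs
  have hm0 : (0:ℝ) < m := lt_of_lt_of_le one_pos hm1
  set lam0 : ℝ := 1/(2*m) with hlam0def
  have hlam00 : 0 < lam0 := by positivity
  have hlam01 : lam0 ≤ 1 := by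
    rw [hlam0def, div_le_one (by positivity)]
    linarith
  set F : ℝ → ℂ := fun l => ω₁ (l * r) * (ω₂ (l * s) * ((l:ℂ) * (χ l : ℂ))) with hFdef
  have hgsm : ContDiff ℝ (⊤ : ℕ∞) (fun l : ℝ => (l:ℂ) * (χ l : ℂ)) := by
    rw [gC_eq]
    exact Complex.ofRealLI.toContinuousLinearMap.contDiff.comp (contDiff_id.mul hχ)
  have hFsm : ContDiff ℝ (⊤ : ℕ∞) F := by
    exact ((hω₁sm.comp (contDiff_id.mul contDiff_const)).mul
      ((hω₂sm.comp (contDiff_id.mul contDiff_const)).mul hgsm))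
  -- reduction to interval integral
  have hEq : (∫ l in Set.Ioi (0:ℝ),
        Complex.exp (Complex.I * (l * (r - s) : ℝ)) * ω₁ (l * r) * ω₂ (l * s) *
          (l : ℂ) * (χ l : ℂ))
      = ∫ l in (0:ℝ)..2, Complex.exp (Complex.I * ((r - s : ℝ) : ℂ) * (l : ℂ)) * F l := by
    have hfun : ∀ l : ℝ, Complex.exp (Complex.I * (l * (r - s) : ℝ)) * ω₁ (l * r) * ω₂ (l * s) *
        (l : ℂ) * (χ l : ℂ)
        = Complex.exp (Complex.I * ((r - s : ℝ) : ℂ) * (l : ℂ)) * F l := by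
      intro l
      have harg : Complex.I * ((l * (r - s) : ℝ) : ℂ) = Complex.I * ((r - s : ℝ) : ℂ) * (l : ℂ) := by
        push_cast; ring
      rw [hFdef, harg]; ring
    simp only [hfun]
    have hzero : ∀ l : ℝ, l ∉ Set.Ioi (0:ℝ) →
        Complex.exp (Complex.I * ((r - s : ℝ) : ℂ) * (l : ℂ)) * F l = 0 := by
      intro l hl
      have hl0 : l ≤ 0 := not_lt.mp hl
      have h1 : ω₁ (l * r) = 0 := hω₁0 _ (le_trans
        (mul_nonpos_of_nonpos_of_nonneg hl0 (by linarith)) (by norm_num))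
      rw [hFdef]
      simp only [h1, zero_mul, mul_zero]
    rw [setIntegral_eq_integral_of_forall_compl_eq_zero hzero]
    rw [intervalIntegral.integral_eq_integral_of_support_subset]
    intro l hl
    simp only [Function.mem_support] at hl
    constructor
    · by_contra hc
      exact hl (hzero l (by simpa using hc))
    · by_contra hc
      have hχ0 : χ l = 0 := hχsupp l (by
        intro hmem
        have h2 : 2 * lam₁ ≤ 1 := by linarith [hlam₁.2]
        push_neg at hc
        linarith [hmem.2])
      apply hl
      rw [hFdef]
      simp only [hχ0, Complex.ofReal_zero, mul_zero]
  -- vanishing of F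
  have hFlow : ∀ l : ℝ, l < lam0 → F l = 0 := by
    intro l hl
    rcases le_total r s with hrs | hrs
    · have hmr : m = r := min_eq_left hrs
      have : l * r < 1/2 := by
        have := mul_lt_mul_of_pos_right hl hr0
        rw [hlam0def, hmr] at this
        calc l * r < 1/(2*r) * r := this
          _ = 1/2 := by field_simp
      rw [hFdef]
      simp only [hω₁0 _ (le_of_lt this), zero_mul]
    · have hms : m = s := min_eq_right hrs
      have : l * s < 1/2 := by
        have := mul_lt_mul_of_pos_right hl hs0
        rw [hlam0def, hms] at this
        calc l * s < 1/(2*s) * s := this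
          _ = 1/2 := by field_simp
      rw [hFdef]
      simp only [hω₂0 _ (le_of_lt this), zero_mul, mul_zero]
  have hFhigh : ∀ l : ℝ, 1 < l → F l = 0 := by
    intro l hl
    have hχ0 : χ l = 0 := hχsupp l (by
      intro hmem
      have h2 : 2 * lam₁ ≤ 1 := by linarith [hlam₁.2]
      linarith [hmem.2])
    rw [hFdef]
    simp only [hχ0, Complex.ofReal_zero, mul_zero]
  have h0ev : F =ᶠ[nhds (0:ℝ)] (fun _ => 0) :=
    Filter.eventuallyEq_of_mem (Iio_mem_nhds hlam00) (fun y hy => hFlow y hy)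
  have h2ev : F =ᶠ[nhds (2:ℝ)] (fun _ => 0) :=
    Filter.eventuallyEq_of_mem (Ioi_mem_nhds (by norm_num : (1:ℝ) < 2)) (fun y hy => hFhigh y hy)
  have hDzero : ∀ n : ℕ, ∀ l : ℝ, l ∉ Set.Icc lam0 1 → iteratedDeriv n F l = 0 := by
    intro n l hl
    rw [Set.mem_Icc, not_and_or] at hl
    rcases hl with hl | hl
    · push_neg at hl
      have : iteratedDeriv n F l = iteratedDeriv n (fun _ => (0:ℂ)) l :=
        Filter.EventuallyEq.iteratedDeriv_eq n
          (Filter.eventuallyEq_of_mem (Iio_mem_nhds hl) (fun y hy => hFlow y hy))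
      rw [this, iteratedDeriv_zero_fun']
    · push_neg at hl
      have : iteratedDeriv n F l = iteratedDeriv n (fun _ => (0:ℂ)) l :=
        Filter.EventuallyEq.iteratedDeriv_eq n
          (Filter.eventuallyEq_of_mem (Ioi_mem_nhds hl) (fun y hy => hFhigh y hy))
      rw [this, iteratedDeriv_zero_fun']
  -- key estimate
  have hkey : ∀ n : ℕ, n ≤ 3 → (n = 0 ∨ r - s ≠ 0) →
      ‖∫ l in (0:ℝ)..2, Complex.exp (Complex.I * ((r - s : ℝ) : ℂ) * (l : ℂ)) * F l‖
        ≤ (|r - s|⁻¹)^n * ((256*B*(r ^ (-(1:ℝ)/2) * s ^ (-(1:ℝ)/2))) *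
            ∫ l in lam0..1, l ^ (-(n:ℝ))) := by
    intro n hn hcase
    have hibp : ‖∫ l in (0:ℝ)..2, Complex.exp (Complex.I * ((r - s : ℝ) : ℂ) * (l : ℂ)) * F l‖
        = (|r - s|⁻¹)^n *
          ‖∫ l in (0:ℝ)..2, Complex.exp (Complex.I * ((r - s : ℝ) : ℂ) * (l : ℂ)) *
            iteratedDeriv n F l‖ := by
      rcases hcase with h | h
      · subst h; simp [iteratedDeriv_zero]
      · exact ibp_iter h hFsm h0ev h2ev n
    rw [hibp]
    apply mul_le_mul_of_nonneg_left _ (by positivity)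
    have hnle := norm_int_le (a := r - s) (G := iteratedDeriv n F)
      (φ := (Set.Icc lam0 1).indicator (fun l => (256*B*(r ^ (-(1:ℝ)/2) * s ^ (-(1:ℝ)/2))) * l ^ (-(n:ℝ))))
      (hFsm.continuous_iteratedDeriv n (by exact_mod_cast le_top))
      (indicator_intable hlam00 hlam01 _ n) ?_
    · rw [indicator_int_eq hlam00 hlam01] at hnle
      exact hnle
    · intro l hl
      by_cases hmem : l ∈ Set.Icc lam0 1
      · rw [Set.indicator_of_mem hmem]
        have hl0 : 0 < l := lt_of_lt_of_le hlam00 hmem.1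
        have := F_bound hω₁sm hω₂sm hχ hχ01 hB1 hB hω₁b hω₂b hr hs hn hl0 hmem.2
        calc ‖iteratedDeriv n F l‖ ≤ 256 * B * l ^ (-(n:ℝ)) * (r ^ (-(1:ℝ)/2) * s ^ (-(1:ℝ)/2)) := this
          _ = 256*B*(r ^ (-(1:ℝ)/2) * s ^ (-(1:ℝ)/2)) * l ^ (-(n:ℝ)) := by ring
      · rw [Set.indicator_of_notMem hmem, hDzero n l hmem, norm_zero]
  -- endgame
  rw [hEq]
  set N := ‖∫ l in (0:ℝ)..2, Complex.exp (Complex.I * ((r - s : ℝ) : ℂ) * (l : ℂ)) * F l‖ with hNdef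
  have hNnonneg : 0 ≤ N := norm_nonneg _
  set P := Real.sqrt r with hPdef
  set Q := Real.sqrt s with hQdef
  have hP0 : 0 < P := Real.sqrt_pos.mpr hr0
  have hQ0 : 0 < Q := Real.sqrt_pos.mpr hs0
  have hP2 : P^2 = r := Real.sq_sqrt hr0.le
  have hQ2 : Q^2 = s := Real.sq_sqrt hs0.le
  have hu : r ^ (-(1:ℝ)/2) = P⁻¹ := by
    rw [hPdef, Real.sqrt_eq_rpow, show -(1:ℝ)/2 = -(1/2:ℝ) by norm_num, Real.rpow_neg hr0.le]
  have hv : s ^ (-(1:ℝ)/2) = Q⁻¹ := by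
    rw [hQdef, Real.sqrt_eq_rpow, show -(1:ℝ)/2 = -(1/2:ℝ) by norm_num, Real.rpow_neg hs0.le]
  have hL1 : (1:ℝ) ≤ 1 + Real.log r := by
    have := Real.log_nonneg hr; linarith
  set L := 1 + Real.log r with hLdef
  have hJnonneg : ∀ n : ℕ, 0 ≤ ∫ l in lam0..1, l ^ (-(n:ℝ)) := by
    intro n
    apply intervalIntegral.integral_nonneg hlam01
    intro x hx
    exact Real.rpow_nonneg (le_trans hlam00.le hx.1) _
  set Rp := Real.sqrt (1 + (r+s)^2) with hRpdef
  set Rm := Real.sqrt (1 + (r-s)^2) with hRmdef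
  have hRp0 : 0 < Rp := Real.sqrt_pos.mpr (by positivity)
  have hRm0 : 0 < Rm := Real.sqrt_pos.mpr (by positivity)
  have hRple : Rp ≤ 1 + (r+s) := by
    rw [hRpdef, show (1:ℝ) + (r+s) = Real.sqrt ((1+(r+s))^2) from (Real.sqrt_sq (by positivity)).symm]
    exact Real.sqrt_le_sqrt (arith_sq (by positivity))
  have hRmle : Rm ≤ 1 + |r-s| := by
    rw [hRmdef, show (1:ℝ) + |r-s| = Real.sqrt ((1+|r-s|)^2) from (Real.sqrt_sq (by positivity)).symm]
    apply Real.sqrt_le_sqrt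
    rw [← sq_abs (r-s)]
    exact arith_sq (abs_nonneg _)
  rw [le_div_iff₀ (by positivity)]
  -- goal : N * (r * Rp * Rm) ≤ 12288 * B * s * L
  by_cases hcaseA : |r - s| ≤ 1
  · -- CASE A
    have hr2s : r ≤ 2*s := by
      rcases abs_le.mp hcaseA with ⟨h1, h2⟩; linarith
    have hPQhalf : r/2 ≤ P*Q := by
      have h1 : Real.sqrt ((r/2)^2) = r/2 := Real.sqrt_sq (by positivity)
      have h2 : P*Q = Real.sqrt (r*s) := by rw [hPdef, hQdef, ← Real.sqrt_mul hr0.le]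
      rw [h2, ← h1]
      exact Real.sqrt_le_sqrt (arith_half hr0 hr2s)
    have huv : r ^ (-(1:ℝ)/2) * s ^ (-(1:ℝ)/2) ≤ 2/r := by
      rw [hu, hv, ← mul_inv]
      calc (P*Q)⁻¹ ≤ (r/2)⁻¹ := by
            apply inv_anti₀ (by positivity) hPQhalf
        _ = 2/r := by rw [inv_div]
    have hkey0 := hkey 0 (by norm_num) (Or.inl rfl)
    rw [pow_zero, one_mul] at hkey0
    have hN : N ≤ 512*B/r := by
      refine le_trans hkey0 ?_
      calc 256*B*(r ^ (-(1:ℝ)/2) * s ^ (-(1:ℝ)/2)) * ∫ l in lam0..1, l ^ (-((0:ℕ):ℝ))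
          ≤ 256*B*(2/r) * 1 := by
            apply mul_le_mul (mul_le_mul_of_nonneg_left huv (by positivity))
              (J0_le hlam00 hlam01) (hJnonneg 0) (by positivity)
        _ = 512*B/r := by ring
    have hW : r * Rp * Rm ≤ r * (1+(r+s)) * (1+|r-s|) := by
      apply mul_le_mul (mul_le_mul_of_nonneg_left hRple hr0.le) hRmle hRm0.le (by positivity)
    calc N * (r * Rp * Rm) ≤ (512*B/r) * (r * (1+(r+s)) * (1+|r-s|)) := by
          apply mul_le_mul hN hW (by positivity) (by positivity)
      _ = 512*B*((1+(r+s)) * (1+|r-s|)) := by field_simp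
      _ ≤ 512*B*((4*s) * 2) := by
          apply mul_le_mul_of_nonneg_left _ (by positivity)
          apply mul_le_mul (by linarith) (by linarith) (by positivity) (by positivity)
      _ = 4096*B*s := by ring
      _ ≤ 12288*B*s*L := arith1 hB0pos hs0 hL1
  · push_neg at hcaseA
    have hane : r - s ≠ 0 := by
      intro h; rw [h] at hcaseA; simp at hcaseA; linarith
    by_cases hcaseB : r ≤ 2*s
    · -- CASE B
      have hPQhalf : r/2 ≤ P*Q := by
        have h1 : Real.sqrt ((r/2)^2) = r/2 := Real.sqrt_sq (by positivity)
        have h2 : P*Q = Real.sqrt (r*s) := by rw [hPdef, hQdef, ← Real.sqrt_mul hr0.le]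
        rw [h2, ← h1]
        exact Real.sqrt_le_sqrt (arith_half hr0 hcaseB)
      have huv : r ^ (-(1:ℝ)/2) * s ^ (-(1:ℝ)/2) ≤ 2/r := by
        rw [hu, hv, ← mul_inv]
        calc (P*Q)⁻¹ ≤ (r/2)⁻¹ := by
              apply inv_anti₀ (by positivity) hPQhalf
          _ = 2/r := by rw [inv_div]
      have hJ1L : (∫ l in lam0..1, l ^ (-((1:ℕ):ℝ))) ≤ L := by
        refine le_trans (J1_le hlam00 hlam01) ?_
        have h1 : (1:ℝ)/lam0 = 2*m := by
          rw [hlam0def]; field_simp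
        rw [h1, Real.log_mul (by norm_num) (ne_of_gt hm0)]
        have hlog2 : Real.log 2 ≤ 1 := by
          have := Real.log_two_lt_d9; linarith
        have hlogm : Real.log m ≤ Real.log r := Real.log_le_log hm0 (min_le_left r s)
        rw [hLdef]; linarith
      have hkey1 := hkey 1 (by norm_num) (Or.inr hane)
      rw [pow_one] at hkey1
      have hN : N ≤ |r-s|⁻¹ * (512*B*L/r) := by
        refine le_trans hkey1 ?_
        apply mul_le_mul_of_nonneg_left _ (by positivity)
        calc 256*B*(r ^ (-(1:ℝ)/2) * s ^ (-(1:ℝ)/2)) * ∫ l in lam0..1, l ^ (-((1:ℕ):ℝ))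
            ≤ 256*B*(2/r) * L := by
              apply mul_le_mul (mul_le_mul_of_nonneg_left huv (by positivity))
                hJ1L (hJnonneg 1) (by positivity)
          _ = 512*B*L/r := by ring
      have hW : r * Rp * Rm ≤ r * (1+(r+s)) * (2*|r-s|) := by
        apply mul_le_mul (mul_le_mul_of_nonneg_left hRple hr0.le)
          (le_trans hRmle (by linarith)) hRm0.le (by positivity)
      have habs0 : (0:ℝ) < |r-s| := abs_pos.mpr hane
      calc N * (r * Rp * Rm) ≤ (|r-s|⁻¹ * (512*B*L/r)) * (r * (1+(r+s)) * (2*|r-s|)) := by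
            apply mul_le_mul hN hW (by positivity) (by positivity)
        _ = 1024*B*L*(1+(r+s)) := by
            field_simp [ne_of_gt habs0, ne_of_gt hr0]
            ring
        _ ≤ 1024*B*L*(4*s) := by
            apply mul_le_mul_of_nonneg_left (by linarith) (by positivity)
        _ = 4096*B*s*L := by ring
        _ ≤ 12288*B*s*L := arith2 hB0pos hs0 hL1
    · -- CASE C
      push_neg at hcaseB
      have hsr : s < r := by linarith
      have hD1 : 1 ≤ r - s := by linarith
      have hD0 : (0:ℝ) < r - s := by linarith
      have habs' : |r-s| = r - s := abs_of_pos hD0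
      have hms : m = s := min_eq_right hsr.le
      have hQP : Q ≤ P := Real.sqrt_le_sqrt hsr.le
      have hkey3 := hkey 3 (le_refl 3) (Or.inr hane)
      have hJ3' : (∫ l in lam0..1, l ^ (-((3:ℕ):ℝ))) ≤ 2*s^2 := by
        refine le_trans (J3_le hlam00 hlam01) ?_
        have h1 : lam0 ^ (-(2:ℝ)) = 4*m^2 := by
          rw [hlam0def, show (-(2:ℝ)) = -((2:ℕ):ℝ) by norm_num, Real.rpow_neg (by positivity),
            Real.rpow_natCast]
          field_simp
          ring
        rw [h1, hms]
        linarith [sq_nonneg s]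
      have hN : N ≤ 512*B*Q^3/(P*(r-s)^3) := by
        refine le_trans hkey3 ?_
        have hQ3 : Q⁻¹ * s^2 = Q^3 := by
          rw [← hQ2]; field_simp
        calc (|r-s|⁻¹)^3 * (256*B*(r ^ (-(1:ℝ)/2) * s ^ (-(1:ℝ)/2)) *
              ∫ l in lam0..1, l ^ (-((3:ℕ):ℝ)))
            ≤ (|r-s|⁻¹)^3 * (256*B*(P⁻¹ * Q⁻¹) * (2*s^2)) := by
              apply mul_le_mul_of_nonneg_left _ (by positivity)
              rw [hu, hv]
              apply mul_le_mul_of_nonneg_left hJ3' (by positivity)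
          _ = 512*B*Q^3/(P*(r-s)^3) := by
              rw [habs', ← hQ3]
              field_simp
              ring
      have hW : r * Rp * Rm ≤ r * (3*r) * (2*(r-s)) := by
        apply mul_le_mul (mul_le_mul_of_nonneg_left
          (le_trans hRple (by linarith)) hr0.le)
          (le_trans hRmle (by rw [habs']; linarith)) hRm0.le (by positivity)
      calc N * (r * Rp * Rm) ≤ (512*B*Q^3/(P*(r-s)^3)) * (r * (3*r) * (2*(r-s))) := by
            apply mul_le_mul hN hW (by positivity) (by positivity)
        _ = 3072*B*Q^3*r^2/(P*(r-s)^2) := by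
            field_simp
            ring
        _ ≤ 12288*B*s*L := by
            rw [div_le_iff₀ (by positivity)]
            have hQ3 : Q^3 = Q*s := by rw [← hQ2]; ring
            have hr2 : r^2 ≤ 4*(r-s)^2 := arith_caseC hcaseB hs0
            calc 3072*B*Q^3*r^2 = 3072*B*s*(Q*r^2) := by rw [hQ3]; ring
              _ ≤ 3072*B*s*(P*(4*(r-s)^2)) := by
                  apply mul_le_mul_of_nonneg_left _ (by positivity)
                  apply mul_le_mul hQP hr2 (by positivity) (by positivity)
              _ = 12288*B*s*(P*(r-s)^2) := by ring
              _ ≤ 12288*B*s*L*(P*(r-s)^2) :=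
                  arith3 hB0pos hs0 hL1 (by positivity)
end
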